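/- arXiv:2105.05423 — 9 statements merged into one kernel-verified Lean document; each statement's English description precedes it below -/
import Mathlib

section
/- Let [a,b] ⊂ ℝ be a closed interval, C a symmetric 3×3 complex matrix, and D : ℝ → (3×3 complex matrices) continuous with D(τ) symmetric for every τ. Suppose H : ℝ → (3×3 complex matrices) is differentiable on [a,b] and satisfies the Riccati equation H'(τ) = −H(τ)·C·H(τ) − D(τ) for all τ ∈ [a,b], and that H(a) is symmetric. Then H(τ) is symmetric for every τ ∈ [a,b]. -/
open Set Matrix
open scoped NNReal

attribute [local instance] Matrix.normedAddCommGroup Matrix.normedSpace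

private lemma mul_norm_bound3 (A B : Matrix (Fin 3) (Fin 3) ℂ) :
    ‖A * B‖ ≤ 3 * ‖A‖ * ‖B‖ := by
  have h : (0:ℝ) ≤ 3 * ‖A‖ * ‖B‖ := by positivity
  rw [Matrix.norm_le_iff h]
  intro i j
  have : (A * B) i j = ∑ k, A i k * B k j := rfl
  rw [this]
  calc ‖∑ k, A i k * B k j‖ ≤ ∑ k, ‖A i k * B k j‖ := norm_sum_le _ _
    _ ≤ ∑ _k : Fin 3, ‖A‖ * ‖B‖ := by
        apply Finset.sum_le_sum
        intro k _
        rw [norm_mul]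
        exact mul_le_mul (Matrix.norm_entry_le_entrywise_sup_norm A)
          (Matrix.norm_entry_le_entrywise_sup_norm B) (norm_nonneg _) (norm_nonneg _)
    _ = 3 * ‖A‖ * ‖B‖ := by simp [Finset.sum_const]; ring

/-- If H solves the Riccati equation H' = −H·C·H − D on [a,b], with C and
every D(τ) symmetric (and D continuous), and H(a) is symmetric, then H(τ) is symmetric
for every τ ∈ [a,b].  Derivatives are entrywise. -/
theorem stmt_1 (a b : ℝ) (hab : a ≤ b)
    (C : Matrix (Fin 3) (Fin 3) ℂ) (hC : Cᵀ = C)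
    (D : ℝ → Matrix (Fin 3) (Fin 3) ℂ) (hD : Continuous D)
    (hDsymm : ∀ τ, (D τ)ᵀ = D τ)
    (H : ℝ → Matrix (Fin 3) (Fin 3) ℂ)
    (hH : ∀ τ ∈ Icc a b, ∀ i j, HasDerivAt (fun t => H t i j)
        ((-(H τ * C * H τ) - D τ) i j) τ)
    (hHa : (H a)ᵀ = H a) :
    ∀ τ ∈ Icc a b, (H τ)ᵀ = H τ := by
  -- matrix-valued derivative of H
  have hHd : ∀ τ ∈ Icc a b, HasDerivAt H (-(H τ * C * H τ) - D τ) τ := by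
    intro τ hτ
    exact hasDerivAt_pi.2 fun i => hasDerivAt_pi.2 fun j => hH τ hτ i j
  -- continuity of H on the interval
  have hHcont : ContinuousOn H (Icc a b) := fun t ht =>
    (hHd t ht).continuousAt.continuousWithinAt
  -- bound on ‖H‖ over the compact interval
  obtain ⟨R₀, hR₀⟩ := isCompact_Icc.exists_bound_of_continuousOn hHcont
  set R : ℝ := max R₀ 0 with hRdef
  have hR : ∀ t ∈ Icc a b, ‖H t‖ ≤ R := fun t ht => (hR₀ t ht).trans (le_max_left _ _)
  have hRnn : (0:ℝ) ≤ R := le_max_right _ _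
  -- the vector field
  set v : ℝ → Matrix (Fin 3) (Fin 3) ℂ → Matrix (Fin 3) (Fin 3) ℂ :=
    fun t M => -(M * C * M) - D t with hvdef
  set K : ℝ≥0 := ⟨18 * ‖C‖ * R, by positivity⟩ with hKdef
  -- Lipschitz property on the closed ball of radius R
  have hv : ∀ t, LipschitzOnWith K (v t) (Metric.closedBall 0 R) := by
    intro t
    apply LipschitzOnWith.of_dist_le_mul
    intro M hM N hN
    rw [Metric.mem_closedBall, dist_zero_right] at hM hN
    rw [dist_eq_norm, dist_eq_norm]
    have key : v t M - v t N = -(M * C * (M - N)) - ((M - N) * C * N) := by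
      simp only [hvdef]
      noncomm_ring
    rw [key]
    have h1 : ‖M * C * (M - N)‖ ≤ 9 * ‖C‖ * R * ‖M - N‖ := by
      calc ‖M * C * (M - N)‖ ≤ 3 * ‖M * C‖ * ‖M - N‖ := mul_norm_bound3 _ _
        _ ≤ 3 * (3 * ‖M‖ * ‖C‖) * ‖M - N‖ := by
            have h := mul_norm_bound3 M C
            have hn : (0:ℝ) ≤ ‖M - N‖ := norm_nonneg _
            nlinarith
        _ ≤ 9 * ‖C‖ * R * ‖M - N‖ := by
            have hn : (0:ℝ) ≤ ‖M - N‖ := norm_nonneg _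
            have hc : (0:ℝ) ≤ ‖C‖ := norm_nonneg _
            nlinarith [mul_nonneg (mul_nonneg hc hn) (sub_nonneg.2 hM)]
    have h2 : ‖(M - N) * C * N‖ ≤ 9 * ‖C‖ * R * ‖M - N‖ := by
      calc ‖(M - N) * C * N‖ ≤ 3 * ‖(M - N) * C‖ * ‖N‖ := mul_norm_bound3 _ _
        _ ≤ 3 * (3 * ‖M - N‖ * ‖C‖) * ‖N‖ := by
            have h := mul_norm_bound3 (M - N) C
            have hn : (0:ℝ) ≤ ‖N‖ := norm_nonneg _
            nlinarith
        _ ≤ 9 * ‖C‖ * R * ‖M - N‖ := by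
            have hn : (0:ℝ) ≤ ‖M - N‖ := norm_nonneg _
            have hc : (0:ℝ) ≤ ‖C‖ := norm_nonneg _
            nlinarith [mul_nonneg (mul_nonneg hc hn) (sub_nonneg.2 hN)]
    calc ‖-(M * C * (M - N)) - ((M - N) * C * N)‖
        ≤ ‖-(M * C * (M - N))‖ + ‖(M - N) * C * N‖ := norm_sub_le _ _
      _ = ‖M * C * (M - N)‖ + ‖(M - N) * C * N‖ := by rw [norm_neg]
      _ ≤ 18 * ‖C‖ * R * ‖M - N‖ := by linarith
      _ = (K : ℝ) * ‖M - N‖ := rfl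
  -- the transposed solution
  set G : ℝ → Matrix (Fin 3) (Fin 3) ℂ := fun t => (H t)ᵀ with hGdef
  have hGd : ∀ τ ∈ Icc a b, HasDerivAt G (-(G τ * C * G τ) - D τ) τ := by
    intro τ hτ
    have h1 : HasDerivAt G ((-(H τ * C * H τ) - D τ)ᵀ) τ := by
      apply hasDerivAt_pi.2
      intro i
      apply hasDerivAt_pi.2
      intro j
      exact hH τ hτ j i
    have h2 : (-(H τ * C * H τ) - D τ)ᵀ = -(G τ * C * G τ) - D τ := by
      rw [Matrix.transpose_sub, Matrix.transpose_neg, hDsymm, hGdef]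
      congr 1
      rw [Matrix.transpose_mul, Matrix.transpose_mul, hC, mul_assoc]
    rwa [h2] at h1
  have hGcont : ContinuousOn G (Icc a b) := fun t ht =>
    (hGd t ht).continuousAt.continuousWithinAt
  -- apply uniqueness
  have huniq : EqOn H G (Icc a b) := by
    apply ODE_solution_unique_of_mem_Icc_right (fun t _ => hv t) hHcont
    · intro t ht
      exact (hHd t ⟨ht.1, ht.2.le⟩).hasDerivWithinAt
    · intro t ht
      rw [Metric.mem_closedBall, dist_zero_right]
      exact hR t ⟨ht.1, ht.2.le⟩
    · exact hGcont
    · intro t ht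
      exact (hGd t ⟨ht.1, ht.2.le⟩).hasDerivWithinAt
    · intro t ht
      rw [Metric.mem_closedBall, dist_zero_right, hGdef]
      simp only [Matrix.norm_transpose]
      exact hR t ⟨ht.1, ht.2.le⟩
    · exact hHa.symm
  intro τ hτ
  exact (huniq hτ).symm
end

section
/- Let C = diag(0,2,2) regarded as a 3×3 complex matrix, and let D : ℝ → (3×3 complex matrices) be continuous with each D(τ) symmetric and having all entries real. Suppose Y, Z : ℝ → (3×3 complex matrices) are differentiable on a closed interval [a,b] and satisfy Y'(τ) = C·Z(τ) and Z'(τ) = −D(τ)·Y(τ) there, that Y(a) is invertible, and that H₀ := Z(a)·Y(a)⁻¹ is symmetric with Im H₀ positive definite. Then Y(τ) is invertible for every τ ∈ [a,b]. -/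
open Set Matrix

/-- The real matrix of imaginary parts of the entries of a complex matrix. -/
def imPart (M : Matrix (Fin 3) (Fin 3) ℂ) : Matrix (Fin 3) (Fin 3) ℝ :=
  Matrix.of fun i j => (M i j).im

set_option maxHeartbeats 2000000

/-- With C = diag(0,2,2), D continuous, symmetric and real-valued,
if Y' = C·Z, Z' = −D·Y on [a,b], Y(a) is invertible and H₀ = Z(a)·Y(a)⁻¹ is symmetric
with Im H₀ positive definite, then Y(τ) is invertible for every τ ∈ [a,b]. -/
theorem stmt_2 (a b : ℝ) (hab : a ≤ b)
    (D : ℝ → Matrix (Fin 3) (Fin 3) ℂ) (hD : Continuous D)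
    (hDsymm : ∀ τ, (D τ)ᵀ = D τ) (hDreal : ∀ τ i j, (D τ i j).im = 0)
    (Y Z : ℝ → Matrix (Fin 3) (Fin 3) ℂ)
    (hY : ∀ τ ∈ Icc a b, ∀ i j, HasDerivAt (fun t => Y t i j)
        (((Matrix.diagonal ![0, 2, 2] : Matrix (Fin 3) (Fin 3) ℂ) * Z τ) i j) τ)
    (hZ : ∀ τ ∈ Icc a b, ∀ i j, HasDerivAt (fun t => Z t i j) ((-(D τ * Y τ)) i j) τ)
    (hYa : IsUnit (Y a))
    (hH0symm : (Z a * (Y a)⁻¹)ᵀ = Z a * (Y a)⁻¹)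
    (hH0pos : (imPart (Z a * (Y a)⁻¹)).PosDef) :
    ∀ τ ∈ Icc a b, IsUnit (Y τ) := by
  have hYadet : IsUnit (Y a).det := (Matrix.isUnit_iff_isUnit_det _).mp hYa
  obtain ⟨H, hH⟩ : ∃ H, Z a * (Y a)⁻¹ = H := ⟨_, rfl⟩
  rw [hH] at hH0symm hH0pos
  have hZa : Z a = H * (Y a) := by
    rw [← hH, Matrix.nonsing_inv_mul_cancel_right _ _ hYadet]
  -- conjugation facts
  have hDconj : ∀ τ k l, star (D τ k l) = D τ k l := by
    intro τ k l
    apply Complex.ext <;> simp [Complex.star_def, hDreal τ k l]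
  have hDs : ∀ τ k l, D τ l k = D τ k l := by
    intro τ k l
    have h := congrFun (congrFun (hDsymm τ) k) l
    rwa [Matrix.transpose_apply] at h
  have hHs : ∀ k l, H l k = H k l := by
    intro k l
    have h := congrFun (congrFun hH0symm k) l
    rwa [Matrix.transpose_apply] at h
  -- the constant matrix (entrywise)
  set f : Fin 3 → Fin 3 → ℝ → ℂ := fun i j t =>
    ∑ k, (star (Y t k i) * Z t k j - star (Z t k i) * Y t k j) with hfdef
  have key : ∀ i j, ∀ τ ∈ Icc a b, HasDerivAt (f i j) 0 τ := by
    intro i j τ hτ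
    have hd : HasDerivAt (f i j)
        (∑ k, ((star (((Matrix.diagonal ![0, 2, 2] : Matrix (Fin 3) (Fin 3) ℂ) * Z τ) k i)
            * Z τ k j + star (Y τ k i) * ((-(D τ * Y τ)) k j))
          - (star ((-(D τ * Y τ)) k i) * Y τ k j
            + star (Z τ k i)
              * (((Matrix.diagonal ![0, 2, 2] : Matrix (Fin 3) (Fin 3) ℂ) * Z τ) k j)))) τ := by
      apply HasDerivAt.fun_sum
      intro k _
      exact (((hY τ hτ k i).star.mul (hZ τ hτ k j)).sub
        (((hZ τ hτ k i).star.mul (hY τ hτ k j))))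
    convert hd using 1
    have e1 : ∀ k l, star (D τ k l) = D τ k l := hDconj τ
    simp only [Matrix.diagonal_mul, Matrix.neg_apply, Matrix.mul_apply, Fin.sum_univ_three,
      star_add, star_mul', star_neg, e1, hDs τ 0 1, hDs τ 0 2, hDs τ 1 2]
    simp [Complex.star_def, map_ofNat]
    ring
  -- constancy of f on [a,b]
  have const : ∀ τ ∈ Icc a b, ∀ i j, f i j τ = f i j a := by
    intro τ hτ i j
    refine constant_of_has_deriv_right_zero (f := f i j) ?_ ?_ τ hτ
    · intro x hx
      exact (key i j x hx).continuousAt.continuousWithinAt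
    · intro x hx
      exact (key i j x (Ico_subset_Icc_self hx)).hasDerivWithinAt
  -- main argument
  intro τ hτ
  rw [Matrix.isUnit_iff_isUnit_det, isUnit_iff_ne_zero]
  intro hdet
  obtain ⟨v, hv, hmv⟩ := (Matrix.exists_mulVec_eq_zero_iff).mpr hdet
  set w : Fin 3 → ℂ := (Y a) *ᵥ v with hwdef
  have hw : w ≠ 0 := by
    intro h0
    apply hv
    have : (Y a)⁻¹ *ᵥ ((Y a) *ᵥ v) = (Y a)⁻¹ *ᵥ 0 := by rw [← hwdef, h0]
    rwa [Matrix.mulVec_mulVec, Matrix.nonsing_inv_mul _ hYadet, Matrix.one_mulVec,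
      Matrix.mulVec_zero] at this
  set Q : ℂ := ∑ i, ∑ j, star (v i) * f i j τ * v j with hQdef
  -- Q = 0 since Y τ *ᵥ v = 0
  have hQ0 : Q = 0 := by
    have : Q = ∑ k, (star ((Y τ *ᵥ v) k) * ((Z τ *ᵥ v) k)
        - star ((Z τ *ᵥ v) k) * ((Y τ *ᵥ v) k)) := by
      simp only [hQdef, hfdef, Matrix.mulVec, dotProduct, Fin.sum_univ_three,
        star_add, star_mul', star_sub]
      ring
    rw [this, hmv]
    simp
  -- Q in terms of H and w
  have hQa : Q = ∑ k, ∑ l, star (w k) * w l * (H k l - star (H k l)) := by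
    have hfc : ∀ i j, f i j τ = f i j a := const τ hτ
    rw [hQdef]
    simp only [hfc]
    simp only [hfdef, hZa]
    simp only [hwdef, Matrix.mulVec, dotProduct, Matrix.mul_apply, Fin.sum_univ_three,
      star_add, star_mul', star_sub, hHs 0 1, hHs 0 2, hHs 1 2]
    ring
  -- hence the real quadratic form vanishes
  set A : Matrix (Fin 3) (Fin 3) ℝ := imPart H with hAdef
  have hzz : ∀ k l, H k l - star (H k l) = 2 * Complex.I * ((A k l : ℝ) : ℂ) := by
    intro k l
    have : A k l = (H k l).im := rfl
    rw [this]
    apply Complex.ext <;> simp [Complex.star_def] <;> ring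
  have hQS : Q = 2 * Complex.I * ∑ k, ∑ l, ((A k l : ℝ) : ℂ) * star (w k) * w l := by
    rw [hQa]
    simp only [hzz]
    simp only [Fin.sum_univ_three]
    ring
  have hS : (∑ k, ∑ l, ((A k l : ℝ) : ℂ) * star (w k) * w l) = 0 := by
    have h2I : (2 * Complex.I : ℂ) ≠ 0 := by simp [Complex.I_ne_zero]
    have := hQ0
    rw [hQS] at this
    exact (mul_eq_zero.mp this).resolve_left h2I
  -- real and imaginary vectors of w
  set u : Fin 3 → ℝ := fun k => (w k).re with hu
  set x : Fin 3 → ℝ := fun k => (w k).im with hx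
  have hre : (∑ k, ∑ l, ((A k l : ℝ) : ℂ) * star (w k) * w l).re
      = u ⬝ᵥ (A *ᵥ u) + x ⬝ᵥ (A *ᵥ x) := by
    simp only [Fin.sum_univ_three, Matrix.mulVec, dotProduct, Complex.add_re,
      Complex.mul_re, Complex.mul_im, Complex.ofReal_re, Complex.ofReal_im, Complex.star_def,
      Complex.conj_re, Complex.conj_im, hu, hx]
    ring
  have hpos : 0 < u ⬝ᵥ (A *ᵥ u) + x ⬝ᵥ (A *ᵥ x) := by
    have huv : u ≠ 0 ∨ x ≠ 0 := by
      by_contra h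
      push_neg at h
      apply hw
      funext k
      apply Complex.ext
      · have := congrFun h.1 k; simpa [hu] using this
      · have := congrFun h.2 k; simpa [hx] using this
    have h1 : 0 ≤ u ⬝ᵥ (A *ᵥ u) := by
      simpa using hH0pos.posSemidef.dotProduct_mulVec_nonneg u
    have h2 : 0 ≤ x ⬝ᵥ (A *ᵥ x) := by
      simpa using hH0pos.posSemidef.dotProduct_mulVec_nonneg x
    rcases huv with h | h
    · have := hH0pos.dotProduct_mulVec_pos h
      simp only [star_trivial] at this
      linarith
    · have := hH0pos.dotProduct_mulVec_pos h
      simp only [star_trivial] at this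
      linarith
  rw [hS] at hre
  simp only [Complex.zero_re] at hre
  linarith [hre ▸ hpos]
end

section
/- Let C = diag(0,2,2) regarded as a 3×3 complex matrix, and let D : ℝ → (3×3 complex matrices) be continuous with each D(τ) symmetric and having all entries real. Suppose Y, Z : ℝ → (3×3 complex matrices) are differentiable on a closed interval [a,b], satisfy Y'(τ) = C·Z(τ) and Z'(τ) = −D(τ)·Y(τ) on [a,b], Y(τ) is invertible for every τ ∈ [a,b], and H(a) := Z(a)·Y(a)⁻¹ is symmetric with Im H(a) positive definite, where H(τ) := Z(τ)·Y(τ)⁻¹. Then Im H(τ) is positive definite for every τ ∈ [a,b]. -/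
open Set Matrix

lemma aux_key1 (C D Y Z : Matrix (Fin 3) (Fin 3) ℂ) (hC : Cᵀ = C) (hD : Dᵀ = D) :
    (-(D * Y))ᵀ * Y + Zᵀ * (C * Z) - ((C * Z)ᵀ * Z + Yᵀ * (-(D * Y))) = 0 := by
  rw [Matrix.transpose_neg, Matrix.transpose_mul, Matrix.transpose_mul, hC, hD]
  noncomm_ring

lemma aux_map_neg (A : Matrix (Fin 3) (Fin 3) ℂ) :
    (-A).map (starRingEnd ℂ) = -(A.map (starRingEnd ℂ)) := by
  ext i j; simp [Matrix.map_apply]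

lemma aux_key2 (C D Y Z : Matrix (Fin 3) (Fin 3) ℂ) (hC : Cᵀ = C) (hD : Dᵀ = D)
    (hCs : C.map (starRingEnd ℂ) = C) (hDs : D.map (starRingEnd ℂ) = D) :
    ((-(D * Y)).map (starRingEnd ℂ))ᵀ * Y + (Z.map (starRingEnd ℂ))ᵀ * (C * Z) -
      (((C * Z).map (starRingEnd ℂ))ᵀ * Z + (Y.map (starRingEnd ℂ))ᵀ * (-(D * Y))) = 0 := by
  rw [aux_map_neg, Matrix.map_mul, Matrix.map_mul, hCs, hDs,
    Matrix.transpose_neg, Matrix.transpose_mul, Matrix.transpose_mul, hC, hD]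
  noncomm_ring

lemma aux_qf (M A : Matrix (Fin 3) (Fin 3) ℂ) (v : Fin 3 → ℂ) :
    star (A *ᵥ v) ⬝ᵥ M *ᵥ (A *ᵥ v) = star v ⬝ᵥ (Aᴴ * M * A) *ᵥ v := by
  rw [Matrix.star_mulVec, Matrix.mulVec_mulVec, ← Matrix.dotProduct_mulVec,
    Matrix.mulVec_mulVec, ← Matrix.mul_assoc]

lemma aux_imPart_decomp (M : Matrix (Fin 3) (Fin 3) ℂ) (h : Mᵀ = M) :
    Mᴴ - M = (-(2 * Complex.I)) • ((imPart M).map Complex.ofReal) := by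
  ext i j
  have hs : M j i = M i j := by conv_lhs => rw [← h, Matrix.transpose_apply]
  simp only [Matrix.sub_apply, Matrix.conjTranspose_apply, Matrix.smul_apply,
    Matrix.map_apply, imPart, Matrix.of_apply, hs, Complex.star_def, smul_eq_mul]
  have := Complex.sub_conj (M i j)
  push_cast at this ⊢
  linear_combination -this

lemma aux_quad_real (M : Matrix (Fin 3) (Fin 3) ℝ) (x : Fin 3 → ℝ) :
    star (fun i => (x i : ℂ)) ⬝ᵥ (M.map Complex.ofReal) *ᵥ (fun i => (x i : ℂ))
      = ((x ⬝ᵥ M *ᵥ x : ℝ) : ℂ) := by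
  simp [dotProduct, Matrix.mulVec, Matrix.map_apply, Finset.mul_sum, Complex.conj_ofReal]

lemma aux_quad_decomp (M : Matrix (Fin 3) (Fin 3) ℝ) (hM : Mᵀ = M) (w : Fin 3 → ℂ) :
    star w ⬝ᵥ (M.map Complex.ofReal) *ᵥ w =
      (((fun i => (w i).re) ⬝ᵥ M *ᵥ (fun i => (w i).re)
        + (fun i => (w i).im) ⬝ᵥ M *ᵥ (fun i => (w i).im) : ℝ) : ℂ) := by
  have h01 : M 0 1 = M 1 0 := by conv_lhs => rw [← hM, Matrix.transpose_apply]
  have h02 : M 0 2 = M 2 0 := by conv_lhs => rw [← hM, Matrix.transpose_apply]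
  have h12 : M 1 2 = M 2 1 := by conv_lhs => rw [← hM, Matrix.transpose_apply]
  apply Complex.ext <;>
    simp [dotProduct, Matrix.mulVec, Matrix.map_apply, Fin.sum_univ_three, Complex.star_def,
      Complex.add_re, Complex.mul_re, Complex.mul_im] <;>
    simp only [h01, h02, h12] <;> ring

/-- With C = diag(0,2,2), D continuous, symmetric and real-valued,
if Y' = C·Z, Z' = −D·Y on [a,b], Y(τ) is invertible on [a,b], and
H(a) = Z(a)·Y(a)⁻¹ is symmetric with Im H(a) positive definite, then
Im H(τ) = Im (Z(τ)·Y(τ)⁻¹) is positive definite for every τ ∈ [a,b]. -/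
theorem stmt_3 (a b : ℝ) (hab : a ≤ b)
    (D : ℝ → Matrix (Fin 3) (Fin 3) ℂ) (hD : Continuous D)
    (hDsymm : ∀ τ, (D τ)ᵀ = D τ) (hDreal : ∀ τ i j, (D τ i j).im = 0)
    (Y Z : ℝ → Matrix (Fin 3) (Fin 3) ℂ)
    (hY : ∀ τ ∈ Icc a b, ∀ i j, HasDerivAt (fun t => Y t i j)
        (((Matrix.diagonal ![0, 2, 2] : Matrix (Fin 3) (Fin 3) ℂ) * Z τ) i j) τ)
    (hZ : ∀ τ ∈ Icc a b, ∀ i j, HasDerivAt (fun t => Z t i j) ((-(D τ * Y τ)) i j) τ)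
    (hYinv : ∀ τ ∈ Icc a b, IsUnit (Y τ))
    (hHasymm : (Z a * (Y a)⁻¹)ᵀ = Z a * (Y a)⁻¹)
    (hHapos : (imPart (Z a * (Y a)⁻¹)).PosDef) :
    ∀ τ ∈ Icc a b, (imPart (Z τ * (Y τ)⁻¹)).PosDef := by
  set Cm : Matrix (Fin 3) (Fin 3) ℂ := Matrix.diagonal ![0, 2, 2] with hCmdef
  have hCt : Cmᵀ = Cm := Matrix.diagonal_transpose _
  have hCst : Cm.map (starRingEnd ℂ) = Cm := by
    ext i j; fin_cases i <;> fin_cases j <;> simp [hCmdef, Matrix.diagonal_apply, Complex.conj_ofNat]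
  have hDst : ∀ τ, (D τ).map (starRingEnd ℂ) = D τ := by
    intro τ; ext i j
    exact Complex.conj_eq_iff_im.mpr (hDreal τ i j)
  have hdetY : ∀ τ ∈ Icc a b, IsUnit (Y τ).det := fun τ h =>
    (Matrix.isUnit_iff_isUnit_det _).mp (hYinv τ h)
  have haI : a ∈ Icc a b := ⟨le_refl a, hab⟩
  -- W = Zᵀ Y - Yᵀ Z is constant
  have hWd : ∀ τ ∈ Icc a b, ∀ i j,
      HasDerivAt (fun t => ((Z t)ᵀ * Y t - (Y t)ᵀ * Z t) i j) 0 τ := by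
    intro τ hτ i j
    simp only [Matrix.sub_apply, Matrix.mul_apply, Matrix.transpose_apply]
    have h1 : HasDerivAt
        (fun t => (∑ k, Z t k i * Y t k j) - ∑ k, Y t k i * Z t k j)
        ((∑ k, ((-(D τ * Y τ)) k i * Y τ k j + Z τ k i * (Cm * Z τ) k j)) -
          ∑ k, ((Cm * Z τ) k i * Z τ k j + Y τ k i * (-(D τ * Y τ)) k j)) τ :=
      (HasDerivAt.fun_sum fun k _ => (hZ τ hτ k i).mul (hY τ hτ k j)).sub
        (HasDerivAt.fun_sum fun k _ => (hY τ hτ k i).mul (hZ τ hτ k j))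
    have h2 : ((∑ k, ((-(D τ * Y τ)) k i * Y τ k j + Z τ k i * (Cm * Z τ) k j)) -
          ∑ k, ((Cm * Z τ) k i * Z τ k j + Y τ k i * (-(D τ * Y τ)) k j)) = 0 := by
      have h3 := congrFun (congrFun (aux_key1 Cm (D τ) (Y τ) (Z τ) hCt (hDsymm τ)) i) j
      simpa [Matrix.add_apply, Matrix.sub_apply, Matrix.mul_apply, Matrix.transpose_apply,
        Finset.sum_add_distrib, mul_comm] using h3
    exact h2 ▸ h1
  have hWconst : ∀ τ ∈ Icc a b,
      (Z τ)ᵀ * Y τ - (Y τ)ᵀ * Z τ = (Z a)ᵀ * Y a - (Y a)ᵀ * Z a := by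
    intro τ hτ; ext i j
    exact constant_of_has_deriv_right_zero
      (fun t ht => (hWd t ht i j).continuousAt.continuousWithinAt)
      (fun t ht => (hWd t (Ico_subset_Icc_self ht) i j).hasDerivWithinAt) τ hτ
  -- V = Zᴴ Y - Yᴴ Z is constant
  have hVd : ∀ τ ∈ Icc a b, ∀ i j,
      HasDerivAt (fun t => ((Z t)ᴴ * Y t - (Y t)ᴴ * Z t) i j) 0 τ := by
    intro τ hτ i j
    simp only [Matrix.sub_apply, Matrix.mul_apply, Matrix.conjTranspose_apply]
    have h1 : HasDerivAt
        (fun t => (∑ k, star (Z t k i) * Y t k j) - ∑ k, star (Y t k i) * Z t k j)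
        ((∑ k, (star ((-(D τ * Y τ)) k i) * Y τ k j + star (Z τ k i) * (Cm * Z τ) k j)) -
          ∑ k, (star ((Cm * Z τ) k i) * Z τ k j + star (Y τ k i) * (-(D τ * Y τ)) k j)) τ :=
      (HasDerivAt.fun_sum fun k _ => ((hZ τ hτ k i).star.mul (hY τ hτ k j))).sub
        (HasDerivAt.fun_sum fun k _ => ((hY τ hτ k i).star.mul (hZ τ hτ k j)))
    have h2 : ((∑ k, (star ((-(D τ * Y τ)) k i) * Y τ k j + star (Z τ k i) * (Cm * Z τ) k j)) -
          ∑ k, (star ((Cm * Z τ) k i) * Z τ k j + star (Y τ k i) * (-(D τ * Y τ)) k j)) = 0 := by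
      have h3 := congrFun (congrFun
        (aux_key2 Cm (D τ) (Y τ) (Z τ) hCt (hDsymm τ) hCst (hDst τ)) i) j
      simpa [Matrix.add_apply, Matrix.sub_apply, Matrix.mul_apply, Matrix.transpose_apply,
        Matrix.map_apply, Complex.star_def, Finset.sum_add_distrib, mul_comm] using h3
    exact h2 ▸ h1
  have hVconst : ∀ τ ∈ Icc a b,
      (Z τ)ᴴ * Y τ - (Y τ)ᴴ * Z τ = (Z a)ᴴ * Y a - (Y a)ᴴ * Z a := by
    intro τ hτ; ext i j
    exact constant_of_has_deriv_right_zero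
      (fun t ht => (hVd t ht i j).continuousAt.continuousWithinAt)
      (fun t ht => (hVd t (Ico_subset_Icc_self ht) i j).hasDerivWithinAt) τ hτ
  -- W a = 0
  have hZfac : ∀ τ ∈ Icc a b, Z τ = (Z τ * (Y τ)⁻¹) * Y τ := by
    intro τ hτ
    rw [Matrix.mul_assoc, Matrix.nonsing_inv_mul _ (hdetY τ hτ), Matrix.mul_one]
  have hWa : (Z a)ᵀ * Y a - (Y a)ᵀ * Z a = 0 := by
    conv_lhs => rw [hZfac a haI]
    rw [Matrix.transpose_mul, hHasymm, Matrix.mul_assoc]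
    exact sub_self _
  -- symmetry of H τ
  have hHsymm : ∀ τ ∈ Icc a b, (Z τ * (Y τ)⁻¹)ᵀ = Z τ * (Y τ)⁻¹ := by
    intro τ hτ
    have e : (Z τ)ᵀ * Y τ = (Y τ)ᵀ * Z τ := by
      have := (hWconst τ hτ).trans hWa
      exact sub_eq_zero.mp this
    have hdt : IsUnit (Y τ)ᵀ.det := by rw [Matrix.det_transpose]; exact hdetY τ hτ
    rw [Matrix.transpose_mul, Matrix.transpose_nonsing_inv]
    have e2 : (Z τ)ᵀ = (Y τ)ᵀ * Z τ * (Y τ)⁻¹ := by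
      rw [← e, Matrix.mul_assoc, Matrix.mul_nonsing_inv _ (hdetY τ hτ), Matrix.mul_one]
    rw [e2, ← Matrix.mul_assoc, ← Matrix.mul_assoc, Matrix.nonsing_inv_mul _ hdt,
      Matrix.one_mul]
  -- V quotient identity
  have hVquot : ∀ τ ∈ Icc a b, (Z τ)ᴴ * Y τ - (Y τ)ᴴ * Z τ =
      (Y τ)ᴴ * ((Z τ * (Y τ)⁻¹)ᴴ - Z τ * (Y τ)⁻¹) * Y τ := by
    intro τ hτ
    conv_lhs => rw [hZfac τ hτ]
    simp only [Matrix.conjTranspose_mul, Matrix.mul_sub, Matrix.sub_mul, Matrix.mul_assoc]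
  -- main positivity
  intro τ hτ
  have hSsymm : (imPart (Z τ * (Y τ)⁻¹))ᵀ = imPart (Z τ * (Y τ)⁻¹) := by
    ext i j
    simp only [Matrix.transpose_apply, imPart, Matrix.of_apply]
    exact congrArg Complex.im (congrFun (congrFun (hHsymm τ hτ) j) i).symm ▸ rfl
  have hSasymm : (imPart (Z a * (Y a)⁻¹))ᵀ = imPart (Z a * (Y a)⁻¹) := hHapos.1.symm ▸ (by
    ext i j
    simp only [Matrix.transpose_apply, imPart, Matrix.of_apply]
    exact congrArg Complex.im (congrFun (congrFun hHasymm j) i) )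
  refine Matrix.posDef_iff_dotProduct_mulVec.mpr ⟨?_, ?_⟩
  · -- IsHermitian
    show (imPart (Z τ * (Y τ)⁻¹))ᴴ = imPart (Z τ * (Y τ)⁻¹)
    simpa using hSsymm
  · intro x hx
    have hne : (-(2 * Complex.I)) ≠ 0 := by simp [Complex.I_ne_zero]
    have hYv : Y τ *ᵥ ((Y τ)⁻¹ *ᵥ fun i => (x i : ℂ)) = (fun i => (x i : ℂ)) := by
      rw [Matrix.mulVec_mulVec, Matrix.mul_nonsing_inv _ (hdetY τ hτ), Matrix.one_mulVec]
    have chain : star (fun i => (x i : ℂ)) ⬝ᵥ ((Z τ * (Y τ)⁻¹)ᴴ - Z τ * (Y τ)⁻¹) *ᵥ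
          (fun i => (x i : ℂ))
        = star (Y a *ᵥ ((Y τ)⁻¹ *ᵥ fun i => (x i : ℂ))) ⬝ᵥ
            ((Z a * (Y a)⁻¹)ᴴ - Z a * (Y a)⁻¹) *ᵥ
            (Y a *ᵥ ((Y τ)⁻¹ *ᵥ fun i => (x i : ℂ))) := by
      have e1 := aux_qf ((Z τ * (Y τ)⁻¹)ᴴ - Z τ * (Y τ)⁻¹) (Y τ)
        ((Y τ)⁻¹ *ᵥ fun i => (x i : ℂ))
      rw [hYv] at e1
      have e2 := aux_qf ((Z a * (Y a)⁻¹)ᴴ - Z a * (Y a)⁻¹) (Y a)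
        ((Y τ)⁻¹ *ᵥ fun i => (x i : ℂ))
      calc _ = (star ((Y τ)⁻¹ *ᵥ fun i => (x i : ℂ))) ⬝ᵥ
            ((Y τ)ᴴ * ((Z τ * (Y τ)⁻¹)ᴴ - Z τ * (Y τ)⁻¹) * Y τ) *ᵥ
            ((Y τ)⁻¹ *ᵥ fun i => (x i : ℂ)) := e1
        _ = (star ((Y τ)⁻¹ *ᵥ fun i => (x i : ℂ))) ⬝ᵥ
            ((Z τ)ᴴ * Y τ - (Y τ)ᴴ * Z τ) *ᵥ ((Y τ)⁻¹ *ᵥ fun i => (x i : ℂ)) := by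
            rw [← hVquot τ hτ]
        _ = (star ((Y τ)⁻¹ *ᵥ fun i => (x i : ℂ))) ⬝ᵥ
            ((Z a)ᴴ * Y a - (Y a)ᴴ * Z a) *ᵥ ((Y τ)⁻¹ *ᵥ fun i => (x i : ℂ)) := by
            rw [hVconst τ hτ]
        _ = (star ((Y τ)⁻¹ *ᵥ fun i => (x i : ℂ))) ⬝ᵥ
            ((Y a)ᴴ * ((Z a * (Y a)⁻¹)ᴴ - Z a * (Y a)⁻¹) * Y a) *ᵥ
            ((Y τ)⁻¹ *ᵥ fun i => (x i : ℂ)) := by rw [← hVquot a haI]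
        _ = _ := e2.symm
    rw [aux_imPart_decomp _ (hHsymm τ hτ), aux_imPart_decomp _ hHasymm,
      Matrix.smul_mulVec, Matrix.smul_mulVec, dotProduct_smul,
      dotProduct_smul, smul_eq_mul, smul_eq_mul, aux_quad_real,
      aux_quad_decomp _ hSasymm] at chain
    have hreal := Complex.ofReal_inj.mp (mul_left_cancel₀ hne chain)
    have hgoal : 0 < x ⬝ᵥ (imPart (Z τ * (Y τ)⁻¹)) *ᵥ x := by
      rw [hreal]
      set w : Fin 3 → ℂ := Y a *ᵥ ((Y τ)⁻¹ *ᵥ fun i => (x i : ℂ)) with hwdef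
      have hw0 : w ≠ 0 := by
        intro h0
        have hv0 : ((Y τ)⁻¹ *ᵥ fun i => (x i : ℂ)) = 0 := by
          have : (Y a)⁻¹ *ᵥ w = ((Y τ)⁻¹ *ᵥ fun i => (x i : ℂ)) := by
            rw [hwdef, Matrix.mulVec_mulVec, Matrix.nonsing_inv_mul _ (hdetY a haI),
              Matrix.one_mulVec]
          rw [← this, h0, Matrix.mulVec_zero]
        have hu0 : (fun i => (x i : ℂ)) = 0 := by
          rw [← hYv, hv0, Matrix.mulVec_zero]
        exact hx (funext fun i => by
          have := congrFun hu0 i; simpa using this)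
      have hpq : (fun i => (w i).re) ≠ 0 ∨ (fun i => (w i).im) ≠ 0 := by
        by_contra hcon
        push_neg at hcon
        apply hw0
        funext i
        exact Complex.ext (by rw [congrFun hcon.1 i]; rfl) (by rw [congrFun hcon.2 i]; rfl)
      have hsp : ∀ y : Fin 3 → ℝ, y ≠ 0 → 0 < y ⬝ᵥ (imPart (Z a * (Y a)⁻¹)) *ᵥ y := by
        intro y hy
        have := hHapos.dotProduct_mulVec_pos hy
        simpa using this
      have hss : ∀ y : Fin 3 → ℝ, 0 ≤ y ⬝ᵥ (imPart (Z a * (Y a)⁻¹)) *ᵥ y := by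
        intro y
        have := hHapos.posSemidef.dotProduct_mulVec_nonneg y
        simpa using this
      rcases hpq with hp | hq
      · have h1 := hsp _ hp
        have h2 := hss (fun i => (w i).im)
        linarith
      · have h1 := hsp _ hq
        have h2 := hss (fun i => (w i).re)
        linarith
    simpa using hgoal
end

section
/- Let C = diag(0,2,2) regarded as a 3×3 complex matrix, and let D : ℝ → (3×3 complex matrices) be continuous with each D(τ) symmetric and having all entries real. Suppose Y, Z : ℝ → (3×3 complex matrices) are differentiable on a closed interval [a,b], satisfy Y'(τ) = C·Z(τ) and Z'(τ) = −D(τ)·Y(τ) on [a,b], Y(τ) is invertible for every τ ∈ [a,b], and H(a) := Z(a)·Y(a)⁻¹ is symmetric. Setting H(τ) := Z(τ)·Y(τ)⁻¹, the function τ ↦ det(Im H(τ)) · |det Y(τ)|² is constant on [a,b]. -/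
open Set Matrix

namespace Stmt4Aux

abbrev Mat := Matrix (Fin 3) (Fin 3) ℂ

/-- derivative of an entry of Yᴴ * Z - Zᴴ * Y -/
lemma hasDerivAt_W_entry {Y Z : ℝ → Mat} {Y' Z' : Mat} {τ : ℝ}
    (hY : ∀ i j, HasDerivAt (fun t => Y t i j) (Y' i j) τ)
    (hZ : ∀ i j, HasDerivAt (fun t => Z t i j) (Z' i j) τ) (i j : Fin 3) :
    HasDerivAt (fun t => ((Y t)ᴴ * Z t - (Z t)ᴴ * Y t) i j)
      ((Y'ᴴ * Z τ + (Y τ)ᴴ * Z' - (Z'ᴴ * Y τ + (Z τ)ᴴ * Y')) i j) τ := by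
  have h1 : HasDerivAt (fun t => ∑ k, star (Y t k i) * Z t k j)
      (∑ k, (star (Y' k i) * Z τ k j + star (Y τ k i) * Z' k j)) τ :=
    HasDerivAt.fun_sum fun k _ => ((hY k i).star.mul (hZ k j))
  have h2 : HasDerivAt (fun t => ∑ k, star (Z t k i) * Y t k j)
      (∑ k, (star (Z' k i) * Y τ k j + star (Z τ k i) * Y' k j)) τ :=
    HasDerivAt.fun_sum fun k _ => ((hZ k i).star.mul (hY k j))
  have := h1.fun_sub h2
  convert this using 2 with t
  · rfl
  all_goals
    simp [Matrix.sub_apply, Matrix.add_apply, Matrix.mul_apply, Matrix.conjTranspose_apply,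
      Finset.sum_add_distrib]

/-- derivative of an entry of Yᵀ * Z - Zᵀ * Y -/
lemma hasDerivAt_S_entry {Y Z : ℝ → Mat} {Y' Z' : Mat} {τ : ℝ}
    (hY : ∀ i j, HasDerivAt (fun t => Y t i j) (Y' i j) τ)
    (hZ : ∀ i j, HasDerivAt (fun t => Z t i j) (Z' i j) τ) (i j : Fin 3) :
    HasDerivAt (fun t => ((Y t)ᵀ * Z t - (Z t)ᵀ * Y t) i j)
      ((Y'ᵀ * Z τ + (Y τ)ᵀ * Z' - (Z'ᵀ * Y τ + (Z τ)ᵀ * Y')) i j) τ := by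
  have h1 : HasDerivAt (fun t => ∑ k, Y t k i * Z t k j)
      (∑ k, (Y' k i * Z τ k j + Y τ k i * Z' k j)) τ :=
    HasDerivAt.fun_sum fun k _ => ((hY k i).mul (hZ k j))
  have h2 : HasDerivAt (fun t => ∑ k, Z t k i * Y t k j)
      (∑ k, (Z' k i * Y τ k j + Z τ k i * Y' k j)) τ :=
    HasDerivAt.fun_sum fun k _ => ((hZ k i).mul (hY k j))
  have := h1.fun_sub h2
  convert this using 2 with t
  · rfl
  all_goals
    simp [Matrix.sub_apply, Matrix.add_apply, Matrix.mul_apply, Matrix.transpose_apply,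
      Finset.sum_add_distrib]

lemma W_comb_zero (C D Y Z : Mat) (hC : Cᴴ = C) (hD : Dᴴ = D) :
    (C * Z)ᴴ * Z + Yᴴ * (-(D * Y)) - (((-(D * Y))ᴴ) * Y + Zᴴ * (C * Z)) = 0 := by
  rw [Matrix.conjTranspose_neg, Matrix.conjTranspose_mul, Matrix.conjTranspose_mul, hC, hD]
  noncomm_ring

lemma S_comb_zero (C D Y Z : Mat) (hC : Cᵀ = C) (hD : Dᵀ = D) :
    (C * Z)ᵀ * Z + Yᵀ * (-(D * Y)) - (((-(D * Y))ᵀ) * Y + Zᵀ * (C * Z)) = 0 := by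
  rw [Matrix.transpose_neg, Matrix.transpose_mul, Matrix.transpose_mul, hC, hD]
  noncomm_ring

/-- the key determinant identity -/
lemma key (M N : Mat) (hM : IsUnit M.det) (hsym : Mᵀ * N = Nᵀ * M) :
    (Mᴴ * N - Nᴴ * M).det
      = (2 * Complex.I) ^ 3 * (((imPart (N * M⁻¹)).det : ℂ) * (star M.det * M.det)) := by
  set H := N * M⁻¹ with hH
  have hMM : M⁻¹ * M = 1 := Matrix.nonsing_inv_mul M hM
  have hN : N = H * M := by rw [hH, mul_assoc, hMM, mul_one]
  have hMT : IsUnit Mᵀ.det := by rwa [Matrix.det_transpose]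
  have hHsymm : Hᵀ = H := by
    have h1 : Mᵀ * N * M⁻¹ = Nᵀ := by
      rw [hsym, mul_assoc, Matrix.mul_nonsing_inv M hM, mul_one]
    calc Hᵀ = (M⁻¹)ᵀ * Nᵀ := by rw [hH, Matrix.transpose_mul]
    _ = (Mᵀ)⁻¹ * (Mᵀ * N * M⁻¹) := by rw [Matrix.transpose_nonsing_inv, h1]
    _ = (Mᵀ)⁻¹ * Mᵀ * (N * M⁻¹) := by noncomm_ring
    _ = H := by rw [Matrix.nonsing_inv_mul Mᵀ hMT, one_mul, hH]
  have hdiff : Mᴴ * N - Nᴴ * M = Mᴴ * ((H - Hᴴ) * M) := by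
    rw [hN, Matrix.conjTranspose_mul]
    noncomm_ring
  have himg : H - Hᴴ = (2 * Complex.I) • ((imPart H).map (Complex.ofRealHom : ℝ →+* ℂ)) := by
    ext i j
    have hji : H j i = H i j := by
      have h := congrFun (congrFun hHsymm i) j
      simpa [Matrix.transpose_apply] using h
    simp only [Matrix.sub_apply, Matrix.conjTranspose_apply, Matrix.smul_apply,
      Matrix.map_apply, imPart, Matrix.of_apply, hji, smul_eq_mul]
    rw [show star (H i j) = (starRingEnd ℂ) (H i j) from rfl]
    rw [Complex.sub_conj]
    simp [Complex.ofRealHom_eq_coe]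
    push_cast
    ring
  rw [hdiff, himg, Matrix.det_mul, Matrix.det_mul, Matrix.det_smul, Matrix.det_conjTranspose]
  rw [← RingHom.mapMatrix_apply, ← RingHom.map_det (Complex.ofRealHom : ℝ →+* ℂ)]
  simp only [Fintype.card_fin, Complex.ofRealHom_eq_coe]
  ring

end Stmt4Aux

open Stmt4Aux

/-- With C = diag(0,2,2), D continuous, symmetric and real-valued,
if Y' = C·Z, Z' = −D·Y on [a,b], Y(τ) is invertible on [a,b], and
H(a) = Z(a)·Y(a)⁻¹ is symmetric, then τ ↦ det(Im H(τ))·|det Y(τ)|² is constant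
on [a,b], where H(τ) = Z(τ)·Y(τ)⁻¹. -/
theorem stmt_4 (a b : ℝ) (hab : a ≤ b)
    (D : ℝ → Matrix (Fin 3) (Fin 3) ℂ) (hD : Continuous D)
    (hDsymm : ∀ τ, (D τ)ᵀ = D τ) (hDreal : ∀ τ i j, (D τ i j).im = 0)
    (Y Z : ℝ → Matrix (Fin 3) (Fin 3) ℂ)
    (hY : ∀ τ ∈ Icc a b, ∀ i j, HasDerivAt (fun t => Y t i j)
        (((Matrix.diagonal ![0, 2, 2] : Matrix (Fin 3) (Fin 3) ℂ) * Z τ) i j) τ)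
    (hZ : ∀ τ ∈ Icc a b, ∀ i j, HasDerivAt (fun t => Z t i j) ((-(D τ * Y τ)) i j) τ)
    (hYinv : ∀ τ ∈ Icc a b, IsUnit (Y τ))
    (hHasymm : (Z a * (Y a)⁻¹)ᵀ = Z a * (Y a)⁻¹) :
    ∀ τ ∈ Icc a b,
      (imPart (Z τ * (Y τ)⁻¹)).det * ‖(Y τ).det‖ ^ 2
        = (imPart (Z a * (Y a)⁻¹)).det * ‖(Y a).det‖ ^ 2 := by
  set C : Mat := Matrix.diagonal ![0, 2, 2] with hCdef
  -- C is real symmetric diagonal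
  have hCH : Cᴴ = C := by
    have hs : star (![0, 2, 2] : Fin 3 → ℂ) = ![0, 2, 2] := by
      funext i
      fin_cases i <;> simp
    rw [hCdef, Matrix.diagonal_conjTranspose, hs]
  have hCT : Cᵀ = C := by rw [hCdef, Matrix.diagonal_transpose]
  -- D is conj-symmetric
  have hDH : ∀ τ, (D τ)ᴴ = D τ := by
    intro τ
    ext i j
    rw [Matrix.conjTranspose_apply]
    have h1 : (starRingEnd ℂ) (D τ j i) = D τ j i := Complex.conj_eq_iff_im.2 (hDreal τ j i)
    have h2 : D τ j i = (D τ)ᵀ i j := rfl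
    rw [show (star (D τ j i) : ℂ) = (starRingEnd ℂ) (D τ j i) from rfl, h1, h2, hDsymm]
  -- W is constant on [a,b]
  have hWderiv : ∀ τ ∈ Icc a b, ∀ i j,
      HasDerivAt (fun t => ((Y t)ᴴ * Z t - (Z t)ᴴ * Y t) i j) 0 τ := by
    intro τ hτ i j
    have := hasDerivAt_W_entry (Y' := C * Z τ) (Z' := -(D τ * Y τ))
      (hY τ hτ) (hZ τ hτ) i j
    rwa [W_comb_zero C (D τ) (Y τ) (Z τ) hCH (hDH τ), Matrix.zero_apply] at this
  have hSderiv : ∀ τ ∈ Icc a b, ∀ i j,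
      HasDerivAt (fun t => ((Y t)ᵀ * Z t - (Z t)ᵀ * Y t) i j) 0 τ := by
    intro τ hτ i j
    have := hasDerivAt_S_entry (Y' := C * Z τ) (Z' := -(D τ * Y τ))
      (hY τ hτ) (hZ τ hτ) i j
    rwa [S_comb_zero C (D τ) (Y τ) (Z τ) hCT (hDsymm τ), Matrix.zero_apply] at this
  have hconst : ∀ (F : ℝ → Mat), (∀ τ ∈ Icc a b, ∀ i j, HasDerivAt (fun t => F t i j) 0 τ) →
      ∀ τ ∈ Icc a b, F τ = F a := by
    intro F hF τ hτ
    ext i j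
    refine constant_of_has_deriv_right_zero (f := fun t => F t i j) ?_ ?_ τ hτ
    · intro t ht
      exact (hF t ht i j).continuousAt.continuousWithinAt
    · intro t ht
      exact (hF t (Ico_subset_Icc_self ht) i j).hasDerivWithinAt
  have hW : ∀ τ ∈ Icc a b, (Y τ)ᴴ * Z τ - (Z τ)ᴴ * Y τ = (Y a)ᴴ * Z a - (Z a)ᴴ * Y a :=
    hconst _ hWderiv
  have hS : ∀ τ ∈ Icc a b, (Y τ)ᵀ * Z τ - (Z τ)ᵀ * Y τ = (Y a)ᵀ * Z a - (Z a)ᵀ * Y a :=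
    hconst _ hSderiv
  have ha : a ∈ Icc a b := ⟨le_refl a, hab⟩
  have hYda : IsUnit (Y a).det := (Matrix.isUnit_iff_isUnit_det (Y a)).1 (hYinv a ha)
  -- S(a) = 0
  have hSa : (Y a)ᵀ * Z a - (Z a)ᵀ * Y a = 0 := by
    have h1 : ((Y a)⁻¹)ᵀ * (Z a)ᵀ = Z a * (Y a)⁻¹ := by
      rw [← Matrix.transpose_mul, hHasymm]
    have h2 : (Y a)ᵀ * (((Y a)⁻¹)ᵀ * (Z a)ᵀ) * Y a = (Y a)ᵀ * (Z a * (Y a)⁻¹) * Y a := by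
      rw [h1]
    have hMTa : IsUnit ((Y a)ᵀ).det := by rwa [Matrix.det_transpose]
    have h3 : (Y a)ᵀ * ((Y a)⁻¹)ᵀ = 1 := by
      rw [Matrix.transpose_nonsing_inv, Matrix.mul_nonsing_inv _ hMTa]
    have h4 : (Z a)ᵀ * Y a = (Y a)ᵀ * Z a := by
      calc (Z a)ᵀ * Y a = (Y a)ᵀ * ((Y a)⁻¹)ᵀ * (Z a)ᵀ * Y a := by rw [h3, one_mul]
      _ = (Y a)ᵀ * (((Y a)⁻¹)ᵀ * (Z a)ᵀ) * Y a := by noncomm_ring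
      _ = (Y a)ᵀ * (Z a * (Y a)⁻¹) * Y a := h2
      _ = (Y a)ᵀ * Z a * ((Y a)⁻¹ * Y a) := by noncomm_ring
      _ = (Y a)ᵀ * Z a := by rw [Matrix.nonsing_inv_mul (Y a) hYda, mul_one]
    rw [h4, sub_self]
  intro τ hτ
  have hYdτ : IsUnit (Y τ).det := (Matrix.isUnit_iff_isUnit_det (Y τ)).1 (hYinv τ hτ)
  have hsymτ : (Y τ)ᵀ * Z τ = (Z τ)ᵀ * Y τ := by
    have := hS τ hτ
    rw [hSa] at this
    linear_combination (norm := noncomm_ring) this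
  have hsyma : (Y a)ᵀ * Z a = (Z a)ᵀ * Y a := by
    linear_combination (norm := noncomm_ring) hSa
  have hkeyτ := key (Y τ) (Z τ) hYdτ hsymτ
  have hkeya := key (Y a) (Z a) hYda hsyma
  have hdetW : ((Y τ)ᴴ * Z τ - (Z τ)ᴴ * Y τ).det = ((Y a)ᴴ * Z a - (Z a)ᴴ * Y a).det := by
    rw [hW τ hτ]
  rw [hkeyτ, hkeya] at hdetW
  have h8 : (2 * Complex.I) ^ 3 ≠ 0 := by
    simp [Complex.I_ne_zero, pow_ne_zero]
  have hC : (((imPart (Z τ * (Y τ)⁻¹)).det : ℂ) * (star (Y τ).det * (Y τ).det))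
      = (((imPart (Z a * (Y a)⁻¹)).det : ℂ) * (star (Y a).det * (Y a).det)) :=
    mul_left_cancel₀ h8 hdetW
  -- convert to real statement
  have habs : ∀ (M : Matrix (Fin 3) (Fin 3) ℂ),
      ((‖M.det‖ ^ 2 : ℝ) : ℂ) = star M.det * M.det := by
    intro M
    rw [Complex.sq_norm]
    rw [show (star M.det : ℂ) = (starRingEnd ℂ) M.det from rfl]
    rw [mul_comm, Complex.mul_conj]
  apply Complex.ofReal_injective
  rw [Complex.ofReal_mul, Complex.ofReal_mul, habs (Y τ), habs (Y a)]
  exact hC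
end

section
/- Let A be a 3×3 real symmetric positive definite matrix and let f : ℝ³ → ℂ be a bounded continuous function. Then lim_{ρ→∞} ρ^{3/2} ∫_{ℝ³} f(z) · exp(−ρ ⟨z, A z⟩) dz = f(0) · π^{3/2} · (det A)^{−1/2}. -/
open MeasureTheory Matrix Filter Real


lemma gauss_std_eq :
    (fun w : Fin 3 → ℝ => Real.exp (-(w ⬝ᵥ w)))
      = fun w => ∏ i : Fin 3, Real.exp (-1 * (w i) ^ 2) := by
  funext w
  rw [← Real.exp_sum]
  congr 1
  simp only [dotProduct]
  rw [← Finset.sum_neg_distrib]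
  congr 1; funext i; ring

lemma gauss_std_integrable :
    Integrable (fun w : Fin 3 → ℝ => Real.exp (-(w ⬝ᵥ w))) := by
  rw [gauss_std_eq]
  exact Integrable.fintype_prod (f := fun _ (v : ℝ) => Real.exp (-1 * v ^ 2))
    (fun _ => integrable_exp_neg_mul_sq one_pos)

lemma gauss_std_value :
    ∫ w : Fin 3 → ℝ, Real.exp (-(w ⬝ᵥ w)) = π ^ ((3 : ℝ) / 2) := by
  rw [gauss_std_eq,
    integral_fintype_prod_volume_eq_prod (f := fun _ (v : ℝ) => Real.exp (-1 * v ^ 2))]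
  simp only [integral_gaussian, Finset.prod_const, Finset.card_univ, Fintype.card_fin]
  rw [div_one, Real.sqrt_eq_rpow, ← Real.rpow_natCast (π ^ ((1:ℝ)/2)) 3,
    ← Real.rpow_mul pi_pos.le]
  norm_num

section quad
variable (A : Matrix (Fin 3) (Fin 3) ℝ)

lemma quad_eq (B : Matrix (Fin 3) (Fin 3) ℝ) (hBB : B * B = A) (hBsymm : Bᵀ = B)
    (z : Fin 3 → ℝ) : z ⬝ᵥ A.mulVec z = (B.mulVec z) ⬝ᵥ (B.mulVec z) := by
  rw [← hBB, ← Matrix.mulVec_mulVec, Matrix.dotProduct_mulVec, ← Matrix.mulVec_transpose,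
    hBsymm]

open scoped MatrixOrder in
lemma gauss_quad_main (hA : A.PosDef) :
    Integrable (fun z : Fin 3 → ℝ => Real.exp (-(z ⬝ᵥ A.mulVec z))) ∧
    ∫ z : Fin 3 → ℝ, Real.exp (-(z ⬝ᵥ A.mulVec z))
      = π ^ ((3 : ℝ) / 2) * A.det ^ (-(1 : ℝ) / 2) := by
  classical
  set B := CFC.sqrt A with hBdef
  have hBpsd : B.PosSemidef := Matrix.nonneg_iff_posSemidef.1 (CFC.sqrt_nonneg A)
  have hBB : B * B = A := by
    have := CFC.sq_sqrt A (Matrix.nonneg_iff_posSemidef.2 hA.posSemidef)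
    rwa [pow_two] at this
  have hBsymm : Bᵀ = B := by
    have h := hBpsd.1
    simpa [Matrix.IsHermitian, Matrix.conjTranspose_eq_transpose_of_trivial] using h
  have hBpd : B.PosDef := by
    refine Matrix.PosDef.of_dotProduct_mulVec_pos hBpsd.1 (fun x hx => ?_)
    rcases (hBpsd.dotProduct_mulVec_nonneg x).lt_or_eq with h | h
    · exact h
    · exfalso
      have h0 : B *ᵥ x = 0 := (hBpsd.dotProduct_mulVec_zero_iff x).1 h.symm
      have hA0 : A *ᵥ x = 0 := by
        rw [← hBB, ← Matrix.mulVec_mulVec, h0, Matrix.mulVec_zero]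
      have hpos := hA.dotProduct_mulVec_pos hx
      rw [hA0, dotProduct_zero] at hpos
      exact lt_irrefl 0 hpos
  have hdet_sq : B.det ^ 2 = A.det := by
    rw [← hBB, Matrix.det_mul]; ring
  have hdetB_pos : 0 < B.det := hBpd.det_pos
  have hdetinv : A.det ^ (-(1 : ℝ) / 2) = (B.det)⁻¹ := by
    rw [← hdet_sq, ← Real.rpow_natCast B.det 2, ← Real.rpow_mul hdetB_pos.le]
    norm_num
    exact (Real.rpow_neg_one B.det)
  -- invertibility and measurable equiv
  have hinv : Invertible B := B.invertibleOfIsUnitDet (isUnit_iff_ne_zero.2 hdetB_pos.ne')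
  let T : (Fin 3 → ℝ) ≃ₗ[ℝ] (Fin 3 → ℝ) := B.toLinearEquiv' hinv
  let Tc : (Fin 3 → ℝ) ≃L[ℝ] (Fin 3 → ℝ) := T.toContinuousLinearEquiv
  let Me : (Fin 3 → ℝ) ≃ᵐ (Fin 3 → ℝ) := Tc.toHomeomorph.toMeasurableEquiv
  have hMe : ∀ x, Me x = B.mulVec x := fun x => rfl
  have hdetT : LinearMap.det (T : (Fin 3 → ℝ) →ₗ[ℝ] (Fin 3 → ℝ)) = B.det := by
    have : (T : (Fin 3 → ℝ) →ₗ[ℝ] (Fin 3 → ℝ)) = Matrix.toLin' B := rfl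
    rw [this, LinearMap.det_toLin']
  have hmap : Measure.map (⇑Me) (volume : Measure (Fin 3 → ℝ))
      = ENNReal.ofReal ((B.det)⁻¹) • volume := by
    have := Measure.map_linearMap_addHaar_eq_smul_addHaar
      (volume : Measure (Fin 3 → ℝ)) (f := (T : (Fin 3 → ℝ) →ₗ[ℝ] (Fin 3 → ℝ)))
      (by rw [hdetT]; exact hdetB_pos.ne')
    rw [hdetT, abs_of_nonneg (inv_nonneg.2 hdetB_pos.le)] at this
    exact this
  have hqe : ∀ z, z ⬝ᵥ A.mulVec z = (Me z) ⬝ᵥ (Me z) := fun z => by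
    rw [hMe]; exact quad_eq A B hBB hBsymm z
  have hint_map : Integrable (fun w : Fin 3 → ℝ => Real.exp (-(w ⬝ᵥ w)))
      (Measure.map (⇑Me) volume) := by
    rw [hmap]
    exact gauss_std_integrable.smul_measure ENNReal.ofReal_ne_top
  have hint : Integrable (fun z : Fin 3 → ℝ => Real.exp (-(z ⬝ᵥ A.mulVec z))) := by
    have := (MeasureTheory.integrable_map_equiv Me
      (fun w : Fin 3 → ℝ => Real.exp (-(w ⬝ᵥ w)))).1 hint_map
    refine this.congr (Eventually.of_forall fun z => ?_)
    simp only [Function.comp_apply, hqe z]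
  refine ⟨hint, ?_⟩
  have h1 : ∫ z : Fin 3 → ℝ, Real.exp (-(z ⬝ᵥ A.mulVec z))
      = ∫ w : Fin 3 → ℝ, Real.exp (-(w ⬝ᵥ w)) ∂(Measure.map (⇑Me) volume) := by
    rw [MeasureTheory.integral_map_equiv]
    exact integral_congr_ae (Eventually.of_forall fun z => by simp only [hqe])
  rw [h1, hmap, integral_smul_measure, ENNReal.toReal_ofReal (inv_nonneg.2 hdetB_pos.le),
    gauss_std_value, smul_eq_mul, hdetinv]
  ring

end quad

lemma sqrt_tendsto_atTop' : Tendsto Real.sqrt atTop atTop := by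
  refine (tendsto_rpow_atTop (by norm_num : (0:ℝ) < 1/2)).congr' ?_
  filter_upwards [eventually_ge_atTop (0:ℝ)] with x hx
  exact (Real.sqrt_eq_rpow x).symm

/-- stationary-phase / Laplace asymptotics for a positive definite
quadratic exponent: for A real symmetric positive definite and f bounded continuous,
ρ^{3/2} ∫ f(z) e^{−ρ⟨z,Az⟩} dz → f(0)·π^{3/2}·(det A)^{−1/2} as ρ → ∞. -/
theorem stmt_9 (A : Matrix (Fin 3) (Fin 3) ℝ) (hA : A.PosDef)
    (f : (Fin 3 → ℝ) → ℂ) (hf : Continuous f) (hbd : ∃ M : ℝ, ∀ z, ‖f z‖ ≤ M) :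
    Tendsto
      (fun ρ : ℝ => ((ρ ^ ((3 : ℝ) / 2) : ℝ) : ℂ) *
        ∫ z : Fin 3 → ℝ, f z * ((Real.exp (-(ρ * (z ⬝ᵥ A.mulVec z))) : ℝ) : ℂ))
      atTop
      (nhds (f 0 * ((π ^ ((3 : ℝ) / 2) * A.det ^ (-(1 : ℝ) / 2) : ℝ) : ℂ))) := by
  obtain ⟨hint, hval⟩ := gauss_quad_main A hA
  obtain ⟨M, hM⟩ := hbd
  have hQc : Continuous fun z : Fin 3 → ℝ => z ⬝ᵥ A.mulVec z := by
    simp only [dotProduct, Matrix.mulVec]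
    exact continuous_finset_sum _ fun i _ => (continuous_apply i).mul
      (continuous_finset_sum _ fun j _ => (continuous_const.mul (continuous_apply j)))
  -- the rescaled family
  have hGlim : Tendsto
      (fun ρ : ℝ => ∫ y : Fin 3 → ℝ,
        f ((Real.sqrt ρ)⁻¹ • y) * ((Real.exp (-(y ⬝ᵥ A.mulVec y)) : ℝ) : ℂ))
      atTop (nhds (∫ y : Fin 3 → ℝ, f 0 * ((Real.exp (-(y ⬝ᵥ A.mulVec y)) : ℝ) : ℂ))) := by
    apply tendsto_integral_filter_of_dominated_convergence
      (bound := fun y => M * Real.exp (-(y ⬝ᵥ A.mulVec y)))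
    · filter_upwards with ρ
      exact ((hf.comp (continuous_const_smul _)).mul
        (Complex.continuous_ofReal.comp (Real.continuous_exp.comp hQc.neg))).aestronglyMeasurable
    · filter_upwards with ρ
      filter_upwards with y
      rw [norm_mul, Complex.norm_real, Real.norm_eq_abs, abs_of_nonneg (Real.exp_pos _).le]
      exact mul_le_mul_of_nonneg_right (hM _) (Real.exp_pos _).le
    · exact hint.const_mul M
    · filter_upwards with y
      have h1 : Tendsto (fun ρ : ℝ => (Real.sqrt ρ)⁻¹ • y) atTop (nhds (0 : Fin 3 → ℝ)) := by
        have h2 : Tendsto (fun ρ : ℝ => (Real.sqrt ρ)⁻¹) atTop (nhds 0) :=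
          sqrt_tendsto_atTop'.inv_tendsto_atTop
        simpa using h2.smul_const y
      exact ((hf.tendsto 0).comp h1).mul_const _
  have hlimval : (∫ y : Fin 3 → ℝ, f 0 * ((Real.exp (-(y ⬝ᵥ A.mulVec y)) : ℝ) : ℂ))
      = f 0 * ((π ^ ((3 : ℝ) / 2) * A.det ^ (-(1 : ℝ) / 2) : ℝ) : ℂ) := by
    rw [integral_const_mul]
    congr 1
    have : (∫ y : Fin 3 → ℝ, ((Real.exp (-(y ⬝ᵥ A.mulVec y)) : ℝ) : ℂ))
        = ((∫ y : Fin 3 → ℝ, Real.exp (-(y ⬝ᵥ A.mulVec y)) : ℝ) : ℂ) := integral_ofReal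
    rw [this, hval]
  rw [← hlimval]
  apply hGlim.congr'
  filter_upwards [eventually_gt_atTop (0 : ℝ)] with ρ hρ
  -- change of variables z = (√ρ)⁻¹ • y
  set s : ℝ := (Real.sqrt ρ)⁻¹ with hs
  have hsqrt_pos : 0 < Real.sqrt ρ := Real.sqrt_pos.2 hρ
  have hs_nonneg : (0:ℝ) ≤ s := inv_nonneg.2 hsqrt_pos.le
  have hss : ρ * s ^ 2 = 1 := by
    rw [hs, inv_pow, Real.sq_sqrt hρ.le]
    field_simp
  have key := Measure.integral_comp_smul_of_nonneg (μ := volume)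
    (fun z : Fin 3 → ℝ => f z * ((Real.exp (-(ρ * (z ⬝ᵥ A.mulVec z))) : ℝ) : ℂ)) s
    (hR := hs_nonneg)
  have hQs : ∀ y : Fin 3 → ℝ, (s • y) ⬝ᵥ A.mulVec (s • y) = s ^ 2 * (y ⬝ᵥ A.mulVec y) := by
    intro y
    rw [Matrix.mulVec_smul, smul_dotProduct, dotProduct_smul,
      smul_eq_mul, smul_eq_mul]
    ring
  have hintegrand : ∀ y : Fin 3 → ℝ,
      f (s • y) * ((Real.exp (-(ρ * ((s • y) ⬝ᵥ A.mulVec (s • y)))) : ℝ) : ℂ)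
      = f (s • y) * ((Real.exp (-(y ⬝ᵥ A.mulVec y)) : ℝ) : ℂ) := by
    intro y
    rw [hQs, ← mul_assoc, hss, one_mul]
  have hrank : Module.finrank ℝ (Fin 3 → ℝ) = 3 := Module.finrank_fin_fun ℝ
  rw [hrank] at key
  symm
  have hpow : ((s ^ 3)⁻¹ : ℝ) = ρ ^ ((3:ℝ)/2) := by
    rw [hs, inv_pow, inv_inv, Real.sqrt_eq_rpow, ← Real.rpow_natCast (ρ ^ ((1:ℝ)/2)) 3,
      ← Real.rpow_mul hρ.le]
    norm_num
  calc ((ρ ^ ((3 : ℝ) / 2) : ℝ) : ℂ) *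
        ∫ z : Fin 3 → ℝ, f z * ((Real.exp (-(ρ * (z ⬝ᵥ A.mulVec z))) : ℝ) : ℂ)
      = ((s ^ 3)⁻¹ : ℝ) • ∫ z : Fin 3 → ℝ,
          f z * ((Real.exp (-(ρ * (z ⬝ᵥ A.mulVec z))) : ℝ) : ℂ) := by
        rw [Complex.real_smul, hpow]
    _ = ∫ y : Fin 3 → ℝ,
          f (s • y) * ((Real.exp (-(ρ * ((s • y) ⬝ᵥ A.mulVec (s • y)))) : ℝ) : ℂ) := key.symm
    _ = ∫ y : Fin 3 → ℝ, f (s • y) * ((Real.exp (-(y ⬝ᵥ A.mulVec y)) : ℝ) : ℂ) := by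
        exact integral_congr_ae (Eventually.of_forall fun y => hintegrand y)
end

section
/- Let Ω ⊂ ℝ³ be an open rectangular box, T > 0, and let c : ℝ³ → ℝ be continuous and positive. Let β : ℝ³ → ℝ be continuous, and let w, U, u₀ : ℝ × ℝ³ → ℝ be twice continuously differentiable on a neighborhood of [0,T] × closure(Ω) and satisfy: (i) c(x)⁻²∂t²U − ΔU = 2β·∂t²w on (0,T) × Ω; (ii) U = 0 on (0,T) × ∂Ω; (iii) U = ∂tU = 0 and w = ∂tw = 0 at t = 0 on closure(Ω); (iv) c(x)⁻²∂t²u₀ − Δu₀ = 0 on (0,T) × Ω; (v) u₀ = ∂tu₀ = 0 at t = T on closure(Ω). Then ∫₀ᵀ ∫_{∂Ω} (∂_ν U)·u₀ dS dt = 2 ∫₀ᵀ ∫_Ω β·∂t(w)·∂t(u₀) dx dt. -/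
open Set intervalIntegral

/-- Partial derivative of f(t,x,y,z) in t. -/
noncomputable def dt4 (f : ℝ → ℝ → ℝ → ℝ → ℝ) (t x y z : ℝ) : ℝ :=
  deriv (fun s => f s x y z) t

/-- Second partial derivative in t. -/
noncomputable def dt4sq (f : ℝ → ℝ → ℝ → ℝ → ℝ) (t x y z : ℝ) : ℝ :=
  deriv (fun s => dt4 f s x y z) t

/-- Partial derivative in the first spatial variable. -/
noncomputable def dx4 (f : ℝ → ℝ → ℝ → ℝ → ℝ) (t x y z : ℝ) : ℝ :=
  deriv (fun s => f t s y z) x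

/-- Partial derivative in the second spatial variable. -/
noncomputable def dy4 (f : ℝ → ℝ → ℝ → ℝ → ℝ) (t x y z : ℝ) : ℝ :=
  deriv (fun s => f t x s z) y

/-- Partial derivative in the third spatial variable. -/
noncomputable def dz4 (f : ℝ → ℝ → ℝ → ℝ → ℝ) (t x y z : ℝ) : ℝ :=
  deriv (fun s => f t x y s) z

/-- Spatial Laplacian. -/
noncomputable def lap4 (f : ℝ → ℝ → ℝ → ℝ → ℝ) (t x y z : ℝ) : ℝ :=
  deriv (fun s => dx4 f t s y z) x + deriv (fun s => dy4 f t x s z) y +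
    deriv (fun s => dz4 f t x y s) z

open MeasureTheory Function
namespace S11

abbrev E4 := ℝ × ℝ × ℝ × ℝ

abbrev unc (f : ℝ → ℝ → ℝ → ℝ → ℝ) : E4 → ℝ := fun q => f q.1 q.2.1 q.2.2.1 q.2.2.2

noncomputable def P (f : ℝ → ℝ → ℝ → ℝ → ℝ) (v : E4) (q : E4) : ℝ := fderiv ℝ (unc f) q v
noncomputable def P2 (f : ℝ → ℝ → ℝ → ℝ → ℝ) (v : E4) (q : E4) : ℝ := fderiv ℝ (P f v) q v

def e0 : E4 := (1,0,0,0)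
def e1 : E4 := (0,1,0,0)
def e2 : E4 := (0,0,1,0)
def e3 : E4 := (0,0,0,1)

variable {O : Set E4} {f : ℝ → ℝ → ℝ → ℝ → ℝ}

theorem mk0_hasDerivAt (x y z t : ℝ) : HasDerivAt (fun s : ℝ => ((s, x, y, z) : E4)) e0 t :=
  HasDerivAt.prodMk (hasDerivAt_id t) ((hasDerivAt_const t (⟨x,y,z⟩ : ℝ×ℝ×ℝ)))

theorem mk1_hasDerivAt (t y z x : ℝ) : HasDerivAt (fun s : ℝ => ((t, s, y, z) : E4)) e1 x :=
  HasDerivAt.prodMk (hasDerivAt_const x t) (HasDerivAt.prodMk (hasDerivAt_id x) (hasDerivAt_const x (⟨y,z⟩ : ℝ×ℝ)))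

theorem mk2_hasDerivAt (t x z y : ℝ) : HasDerivAt (fun s : ℝ => ((t, x, s, z) : E4)) e2 y :=
  HasDerivAt.prodMk (hasDerivAt_const y t) (HasDerivAt.prodMk (hasDerivAt_const y x) (HasDerivAt.prodMk (hasDerivAt_id y) (hasDerivAt_const y z)))

theorem mk3_hasDerivAt (t x y z : ℝ) : HasDerivAt (fun s : ℝ => ((t, x, y, s) : E4)) e3 z :=
  HasDerivAt.prodMk (hasDerivAt_const z t) (HasDerivAt.prodMk (hasDerivAt_const z x) (HasDerivAt.prodMk (hasDerivAt_const z y) (hasDerivAt_id z)))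

theorem slice_hasDerivAt {F : E4 → ℝ} {L : ℝ → E4} {v : E4} {r : ℝ}
    (hL : HasDerivAt L v r) (hF : DifferentiableAt ℝ F (L r)) :
    HasDerivAt (fun s => F (L s)) (fderiv ℝ F (L r) v) r :=
  (hF.hasFDerivAt.comp_hasDerivAt r hL)

theorem diffOn (hf : ContDiffOn ℝ 2 (unc f) O) : DifferentiableOn ℝ (unc f) O :=
  hf.differentiableOn two_ne_zero

theorem contDiffOn_P (hO : IsOpen O) (hf : ContDiffOn ℝ 2 (unc f) O) (v : E4) :
    ContDiffOn ℝ 1 (P f v) O :=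
  (hf.fderiv_of_isOpen hO le_rfl).clm_apply contDiffOn_const

theorem diffOn_P (hO : IsOpen O) (hf : ContDiffOn ℝ 2 (unc f) O) (v : E4) :
    DifferentiableOn ℝ (P f v) O :=
  (contDiffOn_P hO hf v).differentiableOn one_ne_zero

theorem contOn_P (hO : IsOpen O) (hf : ContDiffOn ℝ 2 (unc f) O) (v : E4) :
    ContinuousOn (P f v) O :=
  (contDiffOn_P hO hf v).continuousOn

theorem contOn_P2 (hO : IsOpen O) (hf : ContDiffOn ℝ 2 (unc f) O) (v : E4) :
    ContinuousOn (P2 f v) O :=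
  ((contDiffOn_P hO hf v).continuousOn_fderiv_of_isOpen hO le_rfl).clm_apply continuousOn_const

theorem contOn_unc (hf : ContDiffOn ℝ 2 (unc f) O) : ContinuousOn (unc f) O := hf.continuousOn

end S11

namespace S11
variable {O : Set E4} {f : ℝ → ℝ → ℝ → ℝ → ℝ} {t x y z : ℝ}

theorem hasDerivAt_slice0 (hO : IsOpen O) (hf : ContDiffOn ℝ 2 (unc f) O)
    (hq : ((t,x,y,z) : E4) ∈ O) :
    HasDerivAt (fun s => f s x y z) (P f e0 (t,x,y,z)) t :=
  slice_hasDerivAt (mk0_hasDerivAt x y z t) ((diffOn hf).differentiableAt (hO.mem_nhds hq))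

theorem hasDerivAt_slice1 (hO : IsOpen O) (hf : ContDiffOn ℝ 2 (unc f) O)
    (hq : ((t,x,y,z) : E4) ∈ O) :
    HasDerivAt (fun s => f t s y z) (P f e1 (t,x,y,z)) x :=
  slice_hasDerivAt (mk1_hasDerivAt t y z x) ((diffOn hf).differentiableAt (hO.mem_nhds hq))

theorem hasDerivAt_slice2 (hO : IsOpen O) (hf : ContDiffOn ℝ 2 (unc f) O)
    (hq : ((t,x,y,z) : E4) ∈ O) :
    HasDerivAt (fun s => f t x s z) (P f e2 (t,x,y,z)) y :=
  slice_hasDerivAt (mk2_hasDerivAt t x z y) ((diffOn hf).differentiableAt (hO.mem_nhds hq))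

theorem hasDerivAt_slice3 (hO : IsOpen O) (hf : ContDiffOn ℝ 2 (unc f) O)
    (hq : ((t,x,y,z) : E4) ∈ O) :
    HasDerivAt (fun s => f t x y s) (P f e3 (t,x,y,z)) z :=
  slice_hasDerivAt (mk3_hasDerivAt t x y z) ((diffOn hf).differentiableAt (hO.mem_nhds hq))

theorem dt4_eq (hO : IsOpen O) (hf : ContDiffOn ℝ 2 (unc f) O)
    (hq : ((t,x,y,z) : E4) ∈ O) : dt4 f t x y z = P f e0 (t,x,y,z) :=
  (hasDerivAt_slice0 hO hf hq).deriv

theorem dx4_eq (hO : IsOpen O) (hf : ContDiffOn ℝ 2 (unc f) O)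
    (hq : ((t,x,y,z) : E4) ∈ O) : dx4 f t x y z = P f e1 (t,x,y,z) :=
  (hasDerivAt_slice1 hO hf hq).deriv

theorem dy4_eq (hO : IsOpen O) (hf : ContDiffOn ℝ 2 (unc f) O)
    (hq : ((t,x,y,z) : E4) ∈ O) : dy4 f t x y z = P f e2 (t,x,y,z)  :=
  (hasDerivAt_slice2 hO hf hq).deriv

theorem dz4_eq (hO : IsOpen O) (hf : ContDiffOn ℝ 2 (unc f) O)
    (hq : ((t,x,y,z) : E4) ∈ O) : dz4 f t x y z = P f e3 (t,x,y,z) :=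
  (hasDerivAt_slice3 hO hf hq).deriv

theorem hasDerivAt_dt4 (hO : IsOpen O) (hf : ContDiffOn ℝ 2 (unc f) O)
    (hq : ((t,x,y,z) : E4) ∈ O) :
    HasDerivAt (fun s => dt4 f s x y z) (P2 f e0 (t,x,y,z)) t := by
  have h2 : HasDerivAt (fun s => P f e0 (s,x,y,z)) (P2 f e0 (t,x,y,z)) t :=
    slice_hasDerivAt (mk0_hasDerivAt x y z t)
      ((diffOn_P hO hf e0).differentiableAt (hO.mem_nhds hq))
  apply h2.congr_of_eventuallyEq
  have hev : ∀ᶠ s in nhds t, ((s,x,y,z) : E4) ∈ O :=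
    (continuous_id.prodMk continuous_const).continuousAt.preimage_mem_nhds (hO.mem_nhds hq)
  filter_upwards [hev] with s hs
  exact dt4_eq hO hf hs

theorem hasDerivAt_dx4 (hO : IsOpen O) (hf : ContDiffOn ℝ 2 (unc f) O)
    (hq : ((t,x,y,z) : E4) ∈ O) :
    HasDerivAt (fun s => dx4 f t s y z) (P2 f e1 (t,x,y,z)) x := by
  have h2 : HasDerivAt (fun s => P f e1 (t,s,y,z)) (P2 f e1 (t,x,y,z)) x :=
    slice_hasDerivAt (mk1_hasDerivAt t y z x)
      ((diffOn_P hO hf e1).differentiableAt (hO.mem_nhds hq))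
  apply h2.congr_of_eventuallyEq
  have hev : ∀ᶠ s in nhds x, ((t,s,y,z) : E4) ∈ O :=
    (continuous_const.prodMk (continuous_id.prodMk continuous_const)).continuousAt.preimage_mem_nhds (hO.mem_nhds hq)
  filter_upwards [hev] with s hs
  exact dx4_eq hO hf hs

theorem hasDerivAt_dy4 (hO : IsOpen O) (hf : ContDiffOn ℝ 2 (unc f) O)
    (hq : ((t,x,y,z) : E4) ∈ O) :
    HasDerivAt (fun s => dy4 f t x s z) (P2 f e2 (t,x,y,z)) y := by
  have h2 : HasDerivAt (fun s => P f e2 (t,x,s,z)) (P2 f e2 (t,x,y,z)) y :=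
    slice_hasDerivAt (mk2_hasDerivAt t x z y)
      ((diffOn_P hO hf e2).differentiableAt (hO.mem_nhds hq))
  apply h2.congr_of_eventuallyEq
  have hev : ∀ᶠ s in nhds y, ((t,x,s,z) : E4) ∈ O :=
    (continuous_const.prodMk (continuous_const.prodMk (continuous_id.prodMk continuous_const))).continuousAt.preimage_mem_nhds (hO.mem_nhds hq)
  filter_upwards [hev] with s hs
  exact dy4_eq hO hf hs

theorem hasDerivAt_dz4 (hO : IsOpen O) (hf : ContDiffOn ℝ 2 (unc f) O)
    (hq : ((t,x,y,z) : E4) ∈ O) :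
    HasDerivAt (fun s => dz4 f t x y s) (P2 f e3 (t,x,y,z)) z := by
  have h2 : HasDerivAt (fun s => P f e3 (t,x,y,s)) (P2 f e3 (t,x,y,z)) z :=
    slice_hasDerivAt (mk3_hasDerivAt t x y z)
      ((diffOn_P hO hf e3).differentiableAt (hO.mem_nhds hq))
  apply h2.congr_of_eventuallyEq
  have hev : ∀ᶠ s in nhds z, ((t,x,y,s) : E4) ∈ O :=
    (continuous_const.prodMk (continuous_const.prodMk (continuous_const.prodMk continuous_id))).continuousAt.preimage_mem_nhds (hO.mem_nhds hq)
  filter_upwards [hev] with s hs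
  exact dz4_eq hO hf hs

theorem dt4sq_eq (hO : IsOpen O) (hf : ContDiffOn ℝ 2 (unc f) O)
    (hq : ((t,x,y,z) : E4) ∈ O) : dt4sq f t x y z = P2 f e0 (t,x,y,z) :=
  (hasDerivAt_dt4 hO hf hq).deriv

theorem lap4_eq (hO : IsOpen O) (hf : ContDiffOn ℝ 2 (unc f) O)
    (hq : ((t,x,y,z) : E4) ∈ O) :
    lap4 f t x y z = P2 f e1 (t,x,y,z) + P2 f e2 (t,x,y,z) + P2 f e3 (t,x,y,z) := by
  rw [lap4, (hasDerivAt_dx4 hO hf hq).deriv, (hasDerivAt_dy4 hO hf hq).deriv,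
    (hasDerivAt_dz4 hO hf hq).deriv]

end S11

namespace S11

/-- congr of interval integrals from equality on the open interval. -/
theorem intCongrIoo {f g : ℝ → ℝ} {a b : ℝ} (hab : a ≤ b)
    (h : ∀ x ∈ Ioo a b, f x = g x) : ∫ x in a..b, f x = ∫ x in a..b, g x := by
  rw [integral_of_le hab, integral_of_le hab]
  apply setIntegral_congr_ae measurableSet_Ioc
  have hb : ∀ᵐ x : ℝ, x ≠ b := by
    refine ae_iff.2 ?_
    simpa using Real.volume_singleton (x := b) |>.le |>.antisymm (zero_le _)
  filter_upwards [hb] with x hx hmem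
  exact h x ⟨hmem.1, lt_of_le_of_ne hmem.2 hx⟩

theorem intCongrIcc {f g : ℝ → ℝ} {a b : ℝ} (hab : a ≤ b)
    (h : ∀ x ∈ Icc a b, f x = g x) : ∫ x in a..b, f x = ∫ x in a..b, g x := by
  apply integral_congr
  intro x hx
  exact h x (by rwa [uIcc_of_le hab] at hx)

/-- Tietze extension helper. -/
theorem exists_ext {α : Type*} [TopologicalSpace α] [NormalSpace α] {s : Set α}
    (hs : IsClosed s) {f : α → ℝ} (hf : ContinuousOn f s) :
    ∃ g : α → ℝ, Continuous g ∧ ∀ x ∈ s, g x = f x := by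
  obtain ⟨g, hg⟩ := ContinuousMap.exists_restrict_eq hs ⟨s.restrict f, hf.restrict⟩
  refine ⟨g, g.continuous, fun x hx => ?_⟩
  have := congrFun (congrArg ContinuousMap.toFun hg) ⟨x, hx⟩
  exact this

/-- Fubini swap for interval integrals of a (jointly) continuous function. -/
theorem swap2 {f : ℝ → ℝ → ℝ} (hf : Continuous (uncurry f)) {a b c d : ℝ}
    (hab : a ≤ b) (hcd : c ≤ d) :
    ∫ x in a..b, ∫ y in c..d, f x y = ∫ y in c..d, ∫ x in a..b, f x y := by
  simp only [integral_of_le hab, integral_of_le hcd]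
  apply integral_integral_swap
  rw [Measure.prod_restrict]
  exact (hf.continuousOn.integrableOn_compact (isCompact_Icc.prod isCompact_Icc)).mono_set
    (prod_mono Ioc_subset_Icc_self Ioc_subset_Icc_self)

theorem contInt {X : Type*} [TopologicalSpace X] [FirstCountableTopology X]
    [LocallyCompactSpace X] {f : X → ℝ → ℝ} (hf : Continuous (uncurry f)) (a b : ℝ) :
    Continuous fun x => ∫ s in a..b, f x s :=
  continuous_parametric_intervalIntegral_of_continuous' hf a b

end S11

namespace S11
variable {a₁ b₁ a₂ b₂ a₃ b₃ T : ℝ}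

theorem nestY {g : ℝ → ℝ → ℝ → ℝ} (hg : Continuous fun p : ℝ×ℝ×ℝ => g p.1 p.2.1 p.2.2)
    (h2 : a₂ ≤ b₂) (h3 : a₃ ≤ b₃) :
    (∫ x in a₁..b₁, ∫ z in a₃..b₃, ∫ y in a₂..b₂, g x y z)
      = ∫ x in a₁..b₁, ∫ y in a₂..b₂, ∫ z in a₃..b₃, g x y z := by
  have step : ∀ x, (∫ z in a₃..b₃, ∫ y in a₂..b₂, g x y z)
      = ∫ y in a₂..b₂, ∫ z in a₃..b₃, g x y z := fun x =>
    swap2 (f := fun z y => g x y z)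
      (by exact hg.comp (show Continuous fun p : ℝ×ℝ => ((x, p.2, p.1) : ℝ×ℝ×ℝ) by fun_prop))
      h3 h2
  simp only [step]

theorem nestX {g : ℝ → ℝ → ℝ → ℝ} (hg : Continuous fun p : ℝ×ℝ×ℝ => g p.1 p.2.1 p.2.2)
    (h1 : a₁ ≤ b₁) (h2 : a₂ ≤ b₂) (h3 : a₃ ≤ b₃) :
    (∫ y in a₂..b₂, ∫ z in a₃..b₃, ∫ x in a₁..b₁, g x y z)
      = ∫ x in a₁..b₁, ∫ y in a₂..b₂, ∫ z in a₃..b₃, g x y z := by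
  have step1 : ∀ y, (∫ z in a₃..b₃, ∫ x in a₁..b₁, g x y z)
      = ∫ x in a₁..b₁, ∫ z in a₃..b₃, g x y z := fun y =>
    swap2 (f := fun z x => g x y z)
      (by exact hg.comp (show Continuous fun p : ℝ×ℝ => ((p.2, y, p.1) : ℝ×ℝ×ℝ) by fun_prop))
      h3 h1
  simp only [step1]
  have cI : Continuous fun p : ℝ×ℝ => ∫ z in a₃..b₃, g p.2 p.1 z :=
    contInt (f := fun (p : ℝ×ℝ) z => g p.2 p.1 z)
      (by exact hg.comp (show Continuous fun q : (ℝ×ℝ)×ℝ => ((q.1.2, q.1.1, q.2) : ℝ×ℝ×ℝ) by fun_prop))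
      a₃ b₃
  exact swap2 (f := fun y x => ∫ z in a₃..b₃, g x y z) (by exact cI) h2 h1

theorem nestT {g : ℝ → ℝ → ℝ → ℝ → ℝ}
    (hg : Continuous fun p : ℝ×ℝ×ℝ×ℝ => g p.1 p.2.1 p.2.2.1 p.2.2.2)
    (hT : (0:ℝ) ≤ T) (h1 : a₁ ≤ b₁) (h2 : a₂ ≤ b₂) (h3 : a₃ ≤ b₃) :
    (∫ t in (0:ℝ)..T, ∫ x in a₁..b₁, ∫ y in a₂..b₂, ∫ z in a₃..b₃, g t x y z)
      = ∫ x in a₁..b₁, ∫ y in a₂..b₂, ∫ z in a₃..b₃, ∫ t in (0:ℝ)..T, g t x y z := by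
  have c1 : Continuous fun p : ℝ×ℝ×ℝ => ∫ s in a₃..b₃, g p.1 p.2.1 p.2.2 s :=
    contInt (f := fun (p : ℝ×ℝ×ℝ) s => g p.1 p.2.1 p.2.2 s)
      (by exact hg.comp (show Continuous fun q : (ℝ×ℝ×ℝ)×ℝ => ((q.1.1, q.1.2.1, q.1.2.2, q.2) : ℝ×ℝ×ℝ×ℝ) by fun_prop))
      a₃ b₃
  have c2 : Continuous fun p : ℝ×ℝ => ∫ u in a₂..b₂, ∫ s in a₃..b₃, g p.1 p.2 u s :=
    contInt (f := fun (p : ℝ×ℝ) u => ∫ s in a₃..b₃, g p.1 p.2 u s)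
      (by exact c1.comp (show Continuous fun q : (ℝ×ℝ)×ℝ => ((q.1.1, q.1.2, q.2) : ℝ×ℝ×ℝ) by fun_prop)) a₂ b₂
  have step1 : (∫ t in (0:ℝ)..T, ∫ x in a₁..b₁, ∫ y in a₂..b₂, ∫ z in a₃..b₃, g t x y z)
      = ∫ x in a₁..b₁, ∫ t in (0:ℝ)..T, ∫ y in a₂..b₂, ∫ z in a₃..b₃, g t x y z :=
    swap2 (f := fun t x => ∫ y in a₂..b₂, ∫ z in a₃..b₃, g t x y z) (by exact c2) hT h1
  have step2 : ∀ x, (∫ t in (0:ℝ)..T, ∫ y in a₂..b₂, ∫ z in a₃..b₃, g t x y z)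
      = ∫ y in a₂..b₂, ∫ t in (0:ℝ)..T, ∫ z in a₃..b₃, g t x y z := fun x =>
    swap2 (f := fun t y => ∫ z in a₃..b₃, g t x y z)
      (by exact c1.comp (show Continuous fun q : ℝ×ℝ => ((q.1, x, q.2) : ℝ×ℝ×ℝ) by fun_prop)) hT h2
  have step3 : ∀ x y, (∫ t in (0:ℝ)..T, ∫ z in a₃..b₃, g t x y z)
      = ∫ z in a₃..b₃, ∫ t in (0:ℝ)..T, g t x y z := fun x y =>
    swap2 (f := fun t z => g t x y z)
      (by exact hg.comp (show Continuous fun q : ℝ×ℝ => ((q.1, x, y, q.2) : ℝ×ℝ×ℝ×ℝ) by fun_prop)) hT h3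
  rw [step1]
  simp only [step2, step3]

end S11

namespace S11
variable {a₁ b₁ a₂ b₂ a₃ b₃ : ℝ}

theorem nestAdd3 {g h : ℝ → ℝ → ℝ → ℝ}
    (hg : Continuous fun p : ℝ×ℝ×ℝ => g p.1 p.2.1 p.2.2)
    (hh : Continuous fun p : ℝ×ℝ×ℝ => h p.1 p.2.1 p.2.2) :
    (∫ x in a₁..b₁, ∫ y in a₂..b₂, ∫ z in a₃..b₃, (g x y z + h x y z))
      = (∫ x in a₁..b₁, ∫ y in a₂..b₂, ∫ z in a₃..b₃, g x y z)
        + ∫ x in a₁..b₁, ∫ y in a₂..b₂, ∫ z in a₃..b₃, h x y z := by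
  have cg1 : ∀ x y, Continuous fun z => g x y z := fun x y =>
    hg.comp (show Continuous fun z : ℝ => ((x,y,z) : ℝ×ℝ×ℝ) by fun_prop)
  have ch1 : ∀ x y, Continuous fun z => h x y z := fun x y =>
    hh.comp (show Continuous fun z : ℝ => ((x,y,z) : ℝ×ℝ×ℝ) by fun_prop)
  have cg2 : ∀ x, Continuous fun y => ∫ z in a₃..b₃, g x y z := fun x =>
    contInt (f := fun y z => g x y z)
      (by exact hg.comp (show Continuous fun p : ℝ×ℝ => ((x,p.1,p.2) : ℝ×ℝ×ℝ) by fun_prop)) a₃ b₃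
  have ch2 : ∀ x, Continuous fun y => ∫ z in a₃..b₃, h x y z := fun x =>
    contInt (f := fun y z => h x y z)
      (by exact hh.comp (show Continuous fun p : ℝ×ℝ => ((x,p.1,p.2) : ℝ×ℝ×ℝ) by fun_prop)) a₃ b₃
  have cg3 : Continuous fun x => ∫ y in a₂..b₂, ∫ z in a₃..b₃, g x y z := by
    apply contInt (f := fun x y => ∫ z in a₃..b₃, g x y z)
    exact (contInt (f := fun p : ℝ×ℝ => fun z => g p.1 p.2 z)
      (by exact hg.comp (show Continuous fun q : (ℝ×ℝ)×ℝ => ((q.1.1,q.1.2,q.2) : ℝ×ℝ×ℝ) by fun_prop)) a₃ b₃)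
  have ch3 : Continuous fun x => ∫ y in a₂..b₂, ∫ z in a₃..b₃, h x y z := by
    apply contInt (f := fun x y => ∫ z in a₃..b₃, h x y z)
    exact (contInt (f := fun p : ℝ×ℝ => fun z => h p.1 p.2 z)
      (by exact hh.comp (show Continuous fun q : (ℝ×ℝ)×ℝ => ((q.1.1,q.1.2,q.2) : ℝ×ℝ×ℝ) by fun_prop)) a₃ b₃)
  have e1 : ∀ x y, (∫ z in a₃..b₃, (g x y z + h x y z))
      = (∫ z in a₃..b₃, g x y z) + ∫ z in a₃..b₃, h x y z := fun x y =>
    integral_add ((cg1 x y).intervalIntegrable _ _) ((ch1 x y).intervalIntegrable _ _)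
  simp only [e1]
  have e2 : ∀ x, (∫ y in a₂..b₂, ((∫ z in a₃..b₃, g x y z) + ∫ z in a₃..b₃, h x y z))
      = (∫ y in a₂..b₂, ∫ z in a₃..b₃, g x y z) + ∫ y in a₂..b₂, ∫ z in a₃..b₃, h x y z := fun x =>
    integral_add ((cg2 x).intervalIntegrable _ _) ((ch2 x).intervalIntegrable _ _)
  simp only [e2]
  exact integral_add (cg3.intervalIntegrable _ _) (ch3.intervalIntegrable _ _)

end S11

open S11

/-- the integration-by-parts identity
∫₀ᵀ∫_{∂Ω} (∂_ν U)·u₀ dS dt = 2∫₀ᵀ∫_Ω β·∂t w·∂t u₀ dx dt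
for an open rectangular box Ω = (a₁,b₁)×(a₂,b₂)×(a₃,b₃), under hypotheses (i)–(v). -/
theorem stmt_11 (a₁ b₁ a₂ b₂ a₃ b₃ T : ℝ)
    (h₁ : a₁ < b₁) (h₂ : a₂ < b₂) (h₃ : a₃ < b₃) (hT : 0 < T)
    (c : ℝ → ℝ → ℝ → ℝ)
    (hc_cont : Continuous fun q : ℝ × ℝ × ℝ => c q.1 q.2.1 q.2.2)
    (hc_pos : ∀ x y z, 0 < c x y z)
    (β : ℝ → ℝ → ℝ → ℝ)
    (hβ_cont : Continuous fun q : ℝ × ℝ × ℝ => β q.1 q.2.1 q.2.2)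
    (U w u₀ : ℝ → ℝ → ℝ → ℝ → ℝ)
    -- U, w, u₀ are C² on a neighborhood of [0,T] × closure(Ω)
    (hU : ∃ O : Set (ℝ × ℝ × ℝ × ℝ), IsOpen O ∧
      Icc 0 T ×ˢ Icc a₁ b₁ ×ˢ Icc a₂ b₂ ×ˢ Icc a₃ b₃ ⊆ O ∧
      ContDiffOn ℝ 2 (fun q : ℝ × ℝ × ℝ × ℝ => U q.1 q.2.1 q.2.2.1 q.2.2.2) O)
    (hw : ∃ O : Set (ℝ × ℝ × ℝ × ℝ), IsOpen O ∧
      Icc 0 T ×ˢ Icc a₁ b₁ ×ˢ Icc a₂ b₂ ×ˢ Icc a₃ b₃ ⊆ O ∧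
      ContDiffOn ℝ 2 (fun q : ℝ × ℝ × ℝ × ℝ => w q.1 q.2.1 q.2.2.1 q.2.2.2) O)
    (hu₀ : ∃ O : Set (ℝ × ℝ × ℝ × ℝ), IsOpen O ∧
      Icc 0 T ×ˢ Icc a₁ b₁ ×ˢ Icc a₂ b₂ ×ˢ Icc a₃ b₃ ⊆ O ∧
      ContDiffOn ℝ 2 (fun q : ℝ × ℝ × ℝ × ℝ => u₀ q.1 q.2.1 q.2.2.1 q.2.2.2) O)
    -- (i) the wave equation for U with source 2β ∂t²w on (0,T) × Ω
    (hiU : ∀ t ∈ Ioo 0 T, ∀ x ∈ Ioo a₁ b₁, ∀ y ∈ Ioo a₂ b₂, ∀ z ∈ Ioo a₃ b₃,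
      (c x y z ^ 2)⁻¹ * dt4sq U t x y z - lap4 U t x y z
        = 2 * β x y z * dt4sq w t x y z)
    -- (ii) U vanishes on (0,T) × ∂Ω
    (hiiU : ∀ t ∈ Ioo 0 T, ∀ x ∈ Icc a₁ b₁, ∀ y ∈ Icc a₂ b₂, ∀ z ∈ Icc a₃ b₃,
      (x = a₁ ∨ x = b₁ ∨ y = a₂ ∨ y = b₂ ∨ z = a₃ ∨ z = b₃) → U t x y z = 0)
    -- (iii) U, ∂t U, w, ∂t w vanish at t = 0 on closure(Ω)
    (hiii : ∀ x ∈ Icc a₁ b₁, ∀ y ∈ Icc a₂ b₂, ∀ z ∈ Icc a₃ b₃,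
      U 0 x y z = 0 ∧ dt4 U 0 x y z = 0 ∧ w 0 x y z = 0 ∧ dt4 w 0 x y z = 0)
    -- (iv) the homogeneous wave equation for u₀ on (0,T) × Ω
    (hiv : ∀ t ∈ Ioo 0 T, ∀ x ∈ Ioo a₁ b₁, ∀ y ∈ Ioo a₂ b₂, ∀ z ∈ Ioo a₃ b₃,
      (c x y z ^ 2)⁻¹ * dt4sq u₀ t x y z - lap4 u₀ t x y z = 0)
    -- (v) u₀ and ∂t u₀ vanish at t = T on closure(Ω)
    (hv : ∀ x ∈ Icc a₁ b₁, ∀ y ∈ Icc a₂ b₂, ∀ z ∈ Icc a₃ b₃,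
      u₀ T x y z = 0 ∧ dt4 u₀ T x y z = 0) :
    (∫ t in (0 : ℝ)..T,
        ((∫ y in a₂..b₂, ∫ z in a₃..b₃, dx4 U t b₁ y z * u₀ t b₁ y z)
          - (∫ y in a₂..b₂, ∫ z in a₃..b₃, dx4 U t a₁ y z * u₀ t a₁ y z)
          + ((∫ x in a₁..b₁, ∫ z in a₃..b₃, dy4 U t x b₂ z * u₀ t x b₂ z)
            - (∫ x in a₁..b₁, ∫ z in a₃..b₃, dy4 U t x a₂ z * u₀ t x a₂ z))
          + ((∫ x in a₁..b₁, ∫ y in a₂..b₂, dz4 U t x y b₃ * u₀ t x y b₃)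
            - (∫ x in a₁..b₁, ∫ y in a₂..b₂, dz4 U t x y a₃ * u₀ t x y a₃))))
      = 2 * ∫ t in (0 : ℝ)..T, ∫ x in a₁..b₁, ∫ y in a₂..b₂, ∫ z in a₃..b₃,
          β x y z * dt4 w t x y z * dt4 u₀ t x y z := by
  classical
  obtain ⟨O₁, hO₁, hK₁, hUa⟩ := hU
  obtain ⟨O₂, hO₂, hK₂, hwa⟩ := hw
  obtain ⟨O₃, hO₃, hK₃, hua⟩ := hu₀
  set K : Set E4 := Icc 0 T ×ˢ Icc a₁ b₁ ×ˢ Icc a₂ b₂ ×ˢ Icc a₃ b₃ with hKdef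
  set O : Set E4 := O₁ ∩ O₂ ∩ O₃ with hOdef
  have hO : IsOpen O := (hO₁.inter hO₂).inter hO₃
  have hKO : K ⊆ O := subset_inter (subset_inter hK₁ hK₂) hK₃
  have hUc : ContDiffOn ℝ 2 (unc U) O := hUa.mono (fun q hq => hq.1.1)
  have hwc : ContDiffOn ℝ 2 (unc w) O := hwa.mono (fun q hq => hq.1.2)
  have huc : ContDiffOn ℝ 2 (unc u₀) O := hua.mono (fun q hq => hq.2)
  have hmem : ∀ {t x y z : ℝ}, t ∈ Icc 0 T → x ∈ Icc a₁ b₁ → y ∈ Icc a₂ b₂ →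
      z ∈ Icc a₃ b₃ → ((t,x,y,z) : E4) ∈ O :=
    fun ht hx hy hz => hKO ⟨ht, hx, hy, hz⟩
  have hmemK : ∀ {t x y z : ℝ}, t ∈ Icc 0 T → x ∈ Icc a₁ b₁ → y ∈ Icc a₂ b₂ →
      z ∈ Icc a₃ b₃ → ((t,x,y,z) : E4) ∈ K :=
    fun ht hx hy hz => ⟨ht, hx, hy, hz⟩
  have hKc : IsClosed K := isClosed_Icc.prod (isClosed_Icc.prod (isClosed_Icc.prod isClosed_Icc))
  -- integrand functions
  set SX : E4 → ℝ := fun q => P2 U e1 q * unc u₀ q - unc U q * P2 u₀ e1 q with hSXd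
  set SY : E4 → ℝ := fun q => P2 U e2 q * unc u₀ q - unc U q * P2 u₀ e2 q with hSYd
  set SZ : E4 → ℝ := fun q => P2 U e3 q * unc u₀ q - unc U q * P2 u₀ e3 q with hSZd
  set G1 : E4 → ℝ := fun q => P U e1 q * unc u₀ q with hG1d
  set G2 : E4 → ℝ := fun q => P U e2 q * unc u₀ q with hG2d
  set G3 : E4 → ℝ := fun q => P U e3 q * unc u₀ q with hG3d
  set Rf : E4 → ℝ := fun q => β q.2.1 q.2.2.1 q.2.2.2 * P w e0 q * P u₀ e0 q with hRfd
  have cSX : ContinuousOn SX O :=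
    ((contOn_P2 hO hUc e1).mul (contOn_unc huc)).sub ((contOn_unc hUc).mul (contOn_P2 hO huc e1))
  have cSY : ContinuousOn SY O :=
    ((contOn_P2 hO hUc e2).mul (contOn_unc huc)).sub ((contOn_unc hUc).mul (contOn_P2 hO huc e2))
  have cSZ : ContinuousOn SZ O :=
    ((contOn_P2 hO hUc e3).mul (contOn_unc huc)).sub ((contOn_unc hUc).mul (contOn_P2 hO huc e3))
  have cG1 : ContinuousOn G1 O := (contOn_P hO hUc e1).mul (contOn_unc huc)
  have cG2 : ContinuousOn G2 O := (contOn_P hO hUc e2).mul (contOn_unc huc)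
  have cG3 : ContinuousOn G3 O := (contOn_P hO hUc e3).mul (contOn_unc huc)
  have cRf : ContinuousOn Rf O := by
    refine ContinuousOn.mul (ContinuousOn.mul ?_ (contOn_P hO hwc e0)) (contOn_P hO huc e0)
    exact (hβ_cont.comp continuous_snd).continuousOn
  -- extensions
  obtain ⟨g1, cg1, hg1⟩ := exists_ext hKc (cG1.mono hKO)
  obtain ⟨g2, cg2, hg2⟩ := exists_ext hKc (cG2.mono hKO)
  obtain ⟨g3, cg3, hg3⟩ := exists_ext hKc (cG3.mono hKO)
  obtain ⟨sX, csX, hsX⟩ := exists_ext hKc (cSX.mono hKO)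
  obtain ⟨sY, csY, hsY⟩ := exists_ext hKc (cSY.mono hKO)
  obtain ⟨sZ, csZ, hsZ⟩ := exists_ext hKc (cSZ.mono hKO)
  obtain ⟨r, cr, hr⟩ := exists_ext hKc (cRf.mono hKO)
  -- face X
  have faceX : ∀ t ∈ Ioo 0 T,
      ((∫ y in a₂..b₂, ∫ z in a₃..b₃, dx4 U t b₁ y z * u₀ t b₁ y z)
        - (∫ y in a₂..b₂, ∫ z in a₃..b₃, dx4 U t a₁ y z * u₀ t a₁ y z))
      = ∫ x in a₁..b₁, ∫ y in a₂..b₂, ∫ z in a₃..b₃, sX (t,x,y,z) := by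
    intro t ht
    have htI : t ∈ Icc 0 T := Ioo_subset_Icc_self ht
    have hxb : b₁ ∈ Icc a₁ b₁ := ⟨h₁.le, le_rfl⟩
    have hxa : a₁ ∈ Icc a₁ b₁ := ⟨le_rfl, h₁.le⟩
    have hfb : ∀ xx ∈ Icc a₁ b₁,
        (∫ y in a₂..b₂, ∫ z in a₃..b₃, dx4 U t xx y z * u₀ t xx y z)
          = ∫ y in a₂..b₂, ∫ z in a₃..b₃, g1 (t,xx,y,z) := by
      intro xx hxx
      refine intCongrIcc h₂.le (fun y hy => intCongrIcc h₃.le (fun z hz => ?_))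
      have hq : ((t,xx,y,z) : E4) ∈ K := hmemK htI hxx hy hz
      rw [hg1 _ hq, hG1d, dx4_eq hO hUc (hKO hq)]
    rw [hfb b₁ hxb, hfb a₁ hxa]
    have key : ∀ y ∈ Icc a₂ b₂, ∀ z ∈ Icc a₃ b₃,
        g1 (t,b₁,y,z) - g1 (t,a₁,y,z) = ∫ x in a₁..b₁, sX (t,x,y,z) := by
      intro y hy z hz
      have hmemx : ∀ x ∈ uIcc a₁ b₁, ((t,x,y,z) : E4) ∈ O := by
        rw [uIcc_of_le h₁.le]; exact fun x hx => hmem htI hx hy hz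
      have hIBP : (∫ x in a₁..b₁, SX (t,x,y,z))
          = (P U e1 (t,b₁,y,z) * unc u₀ (t,b₁,y,z) - unc U (t,b₁,y,z) * P u₀ e1 (t,b₁,y,z))
            - (P U e1 (t,a₁,y,z) * unc u₀ (t,a₁,y,z) - unc U (t,a₁,y,z) * P u₀ e1 (t,a₁,y,z)) := by
        apply integral_eq_sub_of_hasDerivAt
        · intro x hx
          have hq : ((t,x,y,z) : E4) ∈ O := hmemx x hx
          have hnb := hO.mem_nhds hq
          have hA : HasDerivAt (fun x => P U e1 (t,x,y,z)) (P2 U e1 (t,x,y,z)) x :=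
            slice_hasDerivAt (mk1_hasDerivAt t y z x) ((diffOn_P hO hUc e1).differentiableAt hnb)
          have hB : HasDerivAt (fun x => unc u₀ (t,x,y,z)) (P u₀ e1 (t,x,y,z)) x :=
            slice_hasDerivAt (mk1_hasDerivAt t y z x) ((diffOn huc).differentiableAt hnb)
          have hC : HasDerivAt (fun x => unc U (t,x,y,z)) (P U e1 (t,x,y,z)) x :=
            slice_hasDerivAt (mk1_hasDerivAt t y z x) ((diffOn hUc).differentiableAt hnb)
          have hD : HasDerivAt (fun x => P u₀ e1 (t,x,y,z)) (P2 u₀ e1 (t,x,y,z)) x :=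
            slice_hasDerivAt (mk1_hasDerivAt t y z x) ((diffOn_P hO huc e1).differentiableAt hnb)
          have hprod := (hA.mul hB).sub (hC.mul hD)
          convert hprod using 1
          · ext x'; simp only [Pi.mul_apply, Pi.sub_apply]
          rw [hSXd]; ring
        · apply ContinuousOn.intervalIntegrable
          exact cSX.comp ((continuous_const.prodMk (continuous_id.prodMk
            continuous_const)).continuousOn) hmemx
      have hUb : unc U (t,b₁,y,z) = 0 := hiiU t ht b₁ hxb y hy z hz (Or.inr (Or.inl rfl))
      have hUa : unc U (t,a₁,y,z) = 0 := hiiU t ht a₁ hxa y hy z hz (Or.inl rfl)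
      have hgb : g1 (t,b₁,y,z) = P U e1 (t,b₁,y,z) * unc u₀ (t,b₁,y,z) :=
        hg1 _ (hmemK htI hxb hy hz)
      have hga : g1 (t,a₁,y,z) = P U e1 (t,a₁,y,z) * unc u₀ (t,a₁,y,z) :=
        hg1 _ (hmemK htI hxa hy hz)
      have hcongr : (∫ x in a₁..b₁, sX (t,x,y,z)) = ∫ x in a₁..b₁, SX (t,x,y,z) :=
        intCongrIcc h₁.le (fun x hx => hsX _ (hmemK htI hx hy hz))
      rw [hcongr, hIBP, hgb, hga, hUb, hUa]; ring
    have czc : ∀ (xx : ℝ) (y : ℝ), Continuous fun z => g1 (t,xx,y,z) := fun xx y =>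
      cg1.comp (show Continuous fun z : ℝ => ((t,xx,y,z) : E4) by fun_prop)
    have cyc : ∀ (xx : ℝ), Continuous fun y => ∫ z in a₃..b₃, g1 (t,xx,y,z) := fun xx =>
      contInt (f := fun y z => g1 (t,xx,y,z))
        (by exact cg1.comp (show Continuous fun p : ℝ×ℝ => ((t,xx,p.1,p.2) : E4) by fun_prop)) a₃ b₃
    have hsub : (∫ y in a₂..b₂, ∫ z in a₃..b₃, g1 (t,b₁,y,z))
        - (∫ y in a₂..b₂, ∫ z in a₃..b₃, g1 (t,a₁,y,z))
        = ∫ y in a₂..b₂, ∫ z in a₃..b₃, (g1 (t,b₁,y,z) - g1 (t,a₁,y,z)) := by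
      rw [← integral_sub ((cyc b₁).intervalIntegrable _ _) ((cyc a₁).intervalIntegrable _ _)]
      refine integral_congr fun y _ => ?_
      rw [← integral_sub ((czc b₁ y).intervalIntegrable _ _) ((czc a₁ y).intervalIntegrable _ _)]
    rw [hsub]
    calc (∫ y in a₂..b₂, ∫ z in a₃..b₃, (g1 (t,b₁,y,z) - g1 (t,a₁,y,z)))
        = ∫ y in a₂..b₂, ∫ z in a₃..b₃, ∫ x in a₁..b₁, sX (t,x,y,z) :=
          intCongrIcc h₂.le (fun y hy => intCongrIcc h₃.le (fun z hz => key y hy z hz))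
      _ = ∫ x in a₁..b₁, ∫ y in a₂..b₂, ∫ z in a₃..b₃, sX (t,x,y,z) :=
          nestX (g := fun x y z => sX (t,x,y,z))
            (by exact csX.comp (show Continuous fun p : ℝ×ℝ×ℝ => ((t,p.1,p.2.1,p.2.2) : E4) by fun_prop))
            h₁.le h₂.le h₃.le
  -- face Y
  have faceY : ∀ t ∈ Ioo 0 T,
      ((∫ x in a₁..b₁, ∫ z in a₃..b₃, dy4 U t x b₂ z * u₀ t x b₂ z)
        - (∫ x in a₁..b₁, ∫ z in a₃..b₃, dy4 U t x a₂ z * u₀ t x a₂ z))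
      = ∫ x in a₁..b₁, ∫ y in a₂..b₂, ∫ z in a₃..b₃, sY (t,x,y,z) := by
    intro t ht
    have htI : t ∈ Icc 0 T := Ioo_subset_Icc_self ht
    have hyb : b₂ ∈ Icc a₂ b₂ := ⟨h₂.le, le_rfl⟩
    have hya : a₂ ∈ Icc a₂ b₂ := ⟨le_rfl, h₂.le⟩
    have hfb : ∀ yy ∈ Icc a₂ b₂,
        (∫ x in a₁..b₁, ∫ z in a₃..b₃, dy4 U t x yy z * u₀ t x yy z)
          = ∫ x in a₁..b₁, ∫ z in a₃..b₃, g2 (t,x,yy,z) := by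
      intro yy hyy
      refine intCongrIcc h₁.le (fun x hx => intCongrIcc h₃.le (fun z hz => ?_))
      have hq : ((t,x,yy,z) : E4) ∈ K := hmemK htI hx hyy hz
      rw [hg2 _ hq, hG2d, dy4_eq hO hUc (hKO hq)]
    rw [hfb b₂ hyb, hfb a₂ hya]
    have key : ∀ x ∈ Icc a₁ b₁, ∀ z ∈ Icc a₃ b₃,
        g2 (t,x,b₂,z) - g2 (t,x,a₂,z) = ∫ y in a₂..b₂, sY (t,x,y,z) := by
      intro x hx z hz
      have hmemy : ∀ y ∈ uIcc a₂ b₂, ((t,x,y,z) : E4) ∈ O := by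
        rw [uIcc_of_le h₂.le]; exact fun y hy => hmem htI hx hy hz
      have hIBP : (∫ y in a₂..b₂, SY (t,x,y,z))
          = (P U e2 (t,x,b₂,z) * unc u₀ (t,x,b₂,z) - unc U (t,x,b₂,z) * P u₀ e2 (t,x,b₂,z))
            - (P U e2 (t,x,a₂,z) * unc u₀ (t,x,a₂,z) - unc U (t,x,a₂,z) * P u₀ e2 (t,x,a₂,z)) := by
        apply integral_eq_sub_of_hasDerivAt
        · intro y hy
          have hq : ((t,x,y,z) : E4) ∈ O := hmemy y hy
          have hnb := hO.mem_nhds hq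
          have hA : HasDerivAt (fun y => P U e2 (t,x,y,z)) (P2 U e2 (t,x,y,z)) y :=
            slice_hasDerivAt (mk2_hasDerivAt t x z y) ((diffOn_P hO hUc e2).differentiableAt hnb)
          have hB : HasDerivAt (fun y => unc u₀ (t,x,y,z)) (P u₀ e2 (t,x,y,z)) y :=
            slice_hasDerivAt (mk2_hasDerivAt t x z y) ((diffOn huc).differentiableAt hnb)
          have hC : HasDerivAt (fun y => unc U (t,x,y,z)) (P U e2 (t,x,y,z)) y :=
            slice_hasDerivAt (mk2_hasDerivAt t x z y) ((diffOn hUc).differentiableAt hnb)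
          have hD : HasDerivAt (fun y => P u₀ e2 (t,x,y,z)) (P2 u₀ e2 (t,x,y,z)) y :=
            slice_hasDerivAt (mk2_hasDerivAt t x z y) ((diffOn_P hO huc e2).differentiableAt hnb)
          have hprod := (hA.mul hB).sub (hC.mul hD)
          convert hprod using 1
          · ext x'; simp only [Pi.mul_apply, Pi.sub_apply]
          rw [hSYd]; ring
        · apply ContinuousOn.intervalIntegrable
          exact cSY.comp ((continuous_const.prodMk (continuous_const.prodMk
            (continuous_id.prodMk continuous_const))).continuousOn) hmemy
      have hUb : unc U (t,x,b₂,z) = 0 :=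
        hiiU t ht x hx b₂ hyb z hz (Or.inr (Or.inr (Or.inr (Or.inl rfl))))
      have hUa : unc U (t,x,a₂,z) = 0 :=
        hiiU t ht x hx a₂ hya z hz (Or.inr (Or.inr (Or.inl rfl)))
      have hgb : g2 (t,x,b₂,z) = P U e2 (t,x,b₂,z) * unc u₀ (t,x,b₂,z) :=
        hg2 _ (hmemK htI hx hyb hz)
      have hga : g2 (t,x,a₂,z) = P U e2 (t,x,a₂,z) * unc u₀ (t,x,a₂,z) :=
        hg2 _ (hmemK htI hx hya hz)
      have hcongr : (∫ y in a₂..b₂, sY (t,x,y,z)) = ∫ y in a₂..b₂, SY (t,x,y,z) :=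
        intCongrIcc h₂.le (fun y hy => hsY _ (hmemK htI hx hy hz))
      rw [hcongr, hIBP, hgb, hga, hUb, hUa]; ring
    have czc : ∀ (yy : ℝ) (x : ℝ), Continuous fun z => g2 (t,x,yy,z) := fun yy x =>
      cg2.comp (show Continuous fun z : ℝ => ((t,x,yy,z) : E4) by fun_prop)
    have cyc : ∀ (yy : ℝ), Continuous fun x => ∫ z in a₃..b₃, g2 (t,x,yy,z) := fun yy =>
      contInt (f := fun x z => g2 (t,x,yy,z))
        (by exact cg2.comp (show Continuous fun p : ℝ×ℝ => ((t,p.1,yy,p.2) : E4) by fun_prop)) a₃ b₃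
    have hsub : (∫ x in a₁..b₁, ∫ z in a₃..b₃, g2 (t,x,b₂,z))
        - (∫ x in a₁..b₁, ∫ z in a₃..b₃, g2 (t,x,a₂,z))
        = ∫ x in a₁..b₁, ∫ z in a₃..b₃, (g2 (t,x,b₂,z) - g2 (t,x,a₂,z)) := by
      rw [← integral_sub ((cyc b₂).intervalIntegrable _ _) ((cyc a₂).intervalIntegrable _ _)]
      refine integral_congr fun x _ => ?_
      rw [← integral_sub ((czc b₂ x).intervalIntegrable _ _) ((czc a₂ x).intervalIntegrable _ _)]
    rw [hsub]
    calc (∫ x in a₁..b₁, ∫ z in a₃..b₃, (g2 (t,x,b₂,z) - g2 (t,x,a₂,z)))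
        = ∫ x in a₁..b₁, ∫ z in a₃..b₃, ∫ y in a₂..b₂, sY (t,x,y,z) :=
          intCongrIcc h₁.le (fun x hx => intCongrIcc h₃.le (fun z hz => key x hx z hz))
      _ = ∫ x in a₁..b₁, ∫ y in a₂..b₂, ∫ z in a₃..b₃, sY (t,x,y,z) :=
          nestY (g := fun x y z => sY (t,x,y,z))
            (by exact csY.comp (show Continuous fun p : ℝ×ℝ×ℝ => ((t,p.1,p.2.1,p.2.2) : E4) by fun_prop))
            h₂.le h₃.le
  -- face Z
  have faceZ : ∀ t ∈ Ioo 0 T,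
      ((∫ x in a₁..b₁, ∫ y in a₂..b₂, dz4 U t x y b₃ * u₀ t x y b₃)
        - (∫ x in a₁..b₁, ∫ y in a₂..b₂, dz4 U t x y a₃ * u₀ t x y a₃))
      = ∫ x in a₁..b₁, ∫ y in a₂..b₂, ∫ z in a₃..b₃, sZ (t,x,y,z) := by
    intro t ht
    have htI : t ∈ Icc 0 T := Ioo_subset_Icc_self ht
    have hzb : b₃ ∈ Icc a₃ b₃ := ⟨h₃.le, le_rfl⟩
    have hza : a₃ ∈ Icc a₃ b₃ := ⟨le_rfl, h₃.le⟩
    have hfb : ∀ zz ∈ Icc a₃ b₃,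
        (∫ x in a₁..b₁, ∫ y in a₂..b₂, dz4 U t x y zz * u₀ t x y zz)
          = ∫ x in a₁..b₁, ∫ y in a₂..b₂, g3 (t,x,y,zz) := by
      intro zz hzz
      refine intCongrIcc h₁.le (fun x hx => intCongrIcc h₂.le (fun y hy => ?_))
      have hq : ((t,x,y,zz) : E4) ∈ K := hmemK htI hx hy hzz
      rw [hg3 _ hq, hG3d, dz4_eq hO hUc (hKO hq)]
    rw [hfb b₃ hzb, hfb a₃ hza]
    have key : ∀ x ∈ Icc a₁ b₁, ∀ y ∈ Icc a₂ b₂,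
        g3 (t,x,y,b₃) - g3 (t,x,y,a₃) = ∫ z in a₃..b₃, sZ (t,x,y,z) := by
      intro x hx y hy
      have hmemz : ∀ z ∈ uIcc a₃ b₃, ((t,x,y,z) : E4) ∈ O := by
        rw [uIcc_of_le h₃.le]; exact fun z hz => hmem htI hx hy hz
      have hIBP : (∫ z in a₃..b₃, SZ (t,x,y,z))
          = (P U e3 (t,x,y,b₃) * unc u₀ (t,x,y,b₃) - unc U (t,x,y,b₃) * P u₀ e3 (t,x,y,b₃))
            - (P U e3 (t,x,y,a₃) * unc u₀ (t,x,y,a₃) - unc U (t,x,y,a₃) * P u₀ e3 (t,x,y,a₃)) := by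
        apply integral_eq_sub_of_hasDerivAt
        · intro z hz
          have hq : ((t,x,y,z) : E4) ∈ O := hmemz z hz
          have hnb := hO.mem_nhds hq
          have hA : HasDerivAt (fun z => P U e3 (t,x,y,z)) (P2 U e3 (t,x,y,z)) z :=
            slice_hasDerivAt (mk3_hasDerivAt t x y z) ((diffOn_P hO hUc e3).differentiableAt hnb)
          have hB : HasDerivAt (fun z => unc u₀ (t,x,y,z)) (P u₀ e3 (t,x,y,z)) z :=
            slice_hasDerivAt (mk3_hasDerivAt t x y z) ((diffOn huc).differentiableAt hnb)
          have hC : HasDerivAt (fun z => unc U (t,x,y,z)) (P U e3 (t,x,y,z)) z :=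
            slice_hasDerivAt (mk3_hasDerivAt t x y z) ((diffOn hUc).differentiableAt hnb)
          have hD : HasDerivAt (fun z => P u₀ e3 (t,x,y,z)) (P2 u₀ e3 (t,x,y,z)) z :=
            slice_hasDerivAt (mk3_hasDerivAt t x y z) ((diffOn_P hO huc e3).differentiableAt hnb)
          have hprod := (hA.mul hB).sub (hC.mul hD)
          convert hprod using 1
          · ext x'; simp only [Pi.mul_apply, Pi.sub_apply]
          rw [hSZd]; ring
        · apply ContinuousOn.intervalIntegrable
          exact cSZ.comp ((continuous_const.prodMk (continuous_const.prodMk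
            (continuous_const.prodMk continuous_id))).continuousOn) hmemz
      have hUb : unc U (t,x,y,b₃) = 0 :=
        hiiU t ht x hx y hy b₃ hzb (Or.inr (Or.inr (Or.inr (Or.inr (Or.inr rfl)))))
      have hUa : unc U (t,x,y,a₃) = 0 :=
        hiiU t ht x hx y hy a₃ hza (Or.inr (Or.inr (Or.inr (Or.inr (Or.inl rfl)))))
      have hgb : g3 (t,x,y,b₃) = P U e3 (t,x,y,b₃) * unc u₀ (t,x,y,b₃) :=
        hg3 _ (hmemK htI hx hy hzb)
      have hga : g3 (t,x,y,a₃) = P U e3 (t,x,y,a₃) * unc u₀ (t,x,y,a₃) :=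
        hg3 _ (hmemK htI hx hy hza)
      have hcongr : (∫ z in a₃..b₃, sZ (t,x,y,z)) = ∫ z in a₃..b₃, SZ (t,x,y,z) :=
        intCongrIcc h₃.le (fun z hz => hsZ _ (hmemK htI hx hy hz))
      rw [hcongr, hIBP, hgb, hga, hUb, hUa]; ring
    have czc : ∀ (zz : ℝ) (x : ℝ), Continuous fun y => g3 (t,x,y,zz) := fun zz x =>
      cg3.comp (show Continuous fun y : ℝ => ((t,x,y,zz) : E4) by fun_prop)
    have cyc : ∀ (zz : ℝ), Continuous fun x => ∫ y in a₂..b₂, g3 (t,x,y,zz) := fun zz =>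
      contInt (f := fun x y => g3 (t,x,y,zz))
        (by exact cg3.comp (show Continuous fun p : ℝ×ℝ => ((t,p.1,p.2,zz) : E4) by fun_prop)) a₂ b₂
    have hsub : (∫ x in a₁..b₁, ∫ y in a₂..b₂, g3 (t,x,y,b₃))
        - (∫ x in a₁..b₁, ∫ y in a₂..b₂, g3 (t,x,y,a₃))
        = ∫ x in a₁..b₁, ∫ y in a₂..b₂, (g3 (t,x,y,b₃) - g3 (t,x,y,a₃)) := by
      rw [← integral_sub ((cyc b₃).intervalIntegrable _ _) ((cyc a₃).intervalIntegrable _ _)]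
      refine integral_congr fun x _ => ?_
      rw [← integral_sub ((czc b₃ x).intervalIntegrable _ _) ((czc a₃ x).intervalIntegrable _ _)]
    rw [hsub]
    exact intCongrIcc h₁.le (fun x hx => intCongrIcc h₂.le (fun y hy => key x hx y hy))
  -- step 1: the bracket equals a triple integral for interior times
  have step1 : ∀ t ∈ Ioo 0 T,
      ((∫ y in a₂..b₂, ∫ z in a₃..b₃, dx4 U t b₁ y z * u₀ t b₁ y z)
        - (∫ y in a₂..b₂, ∫ z in a₃..b₃, dx4 U t a₁ y z * u₀ t a₁ y z)
        + ((∫ x in a₁..b₁, ∫ z in a₃..b₃, dy4 U t x b₂ z * u₀ t x b₂ z)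
          - (∫ x in a₁..b₁, ∫ z in a₃..b₃, dy4 U t x a₂ z * u₀ t x a₂ z))
        + ((∫ x in a₁..b₁, ∫ y in a₂..b₂, dz4 U t x y b₃ * u₀ t x y b₃)
          - (∫ x in a₁..b₁, ∫ y in a₂..b₂, dz4 U t x y a₃ * u₀ t x y a₃)))
      = ∫ x in a₁..b₁, ∫ y in a₂..b₂, ∫ z in a₃..b₃,
          (sX (t,x,y,z) + sY (t,x,y,z) + sZ (t,x,y,z)) := by
    intro t ht
    have mI : Continuous fun p : ℝ×ℝ×ℝ => ((t,p.1,p.2.1,p.2.2) : E4) := by fun_prop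
    have cX : Continuous fun p : ℝ×ℝ×ℝ => sX (t,p.1,p.2.1,p.2.2) := csX.comp mI
    have cY : Continuous fun p : ℝ×ℝ×ℝ => sY (t,p.1,p.2.1,p.2.2) := csY.comp mI
    have cZ : Continuous fun p : ℝ×ℝ×ℝ => sZ (t,p.1,p.2.1,p.2.2) := csZ.comp mI
    rw [faceX t ht, faceY t ht, faceZ t ht,
      nestAdd3 (g := fun x y z => sX (t,x,y,z) + sY (t,x,y,z)) (h := fun x y z => sZ (t,x,y,z))
        (cX.add cY) cZ,
      nestAdd3 (g := fun x y z => sX (t,x,y,z)) (h := fun x y z => sY (t,x,y,z)) cX cY]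
  -- step 5: time integration by parts at interior spatial points
  have step5 : ∀ x ∈ Ioo a₁ b₁, ∀ y ∈ Ioo a₂ b₂, ∀ z ∈ Ioo a₃ b₃,
      (∫ t in (0:ℝ)..T, (sX (t,x,y,z) + sY (t,x,y,z) + sZ (t,x,y,z)))
        = ∫ t in (0:ℝ)..T, 2 * r (t,x,y,z) := by
    intro x hx y hy z hz
    have hxI : x ∈ Icc a₁ b₁ := Ioo_subset_Icc_self hx
    have hyI : y ∈ Icc a₂ b₂ := Ioo_subset_Icc_self hy
    have hzI : z ∈ Icc a₃ b₃ := Ioo_subset_Icc_self hz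
    have sl : ∀ {F : E4 → ℝ}, ContinuousOn F O → ContinuousOn (fun t => F (t,x,y,z)) (Icc 0 T) :=
      fun hF => hF.comp ((continuous_id.prodMk continuous_const).continuousOn)
        (fun t ht => hmem ht hxI hyI hzI)
    set G : ℝ → ℝ := fun t => (c x y z ^ 2)⁻¹ *
        (P U e0 (t,x,y,z) * unc u₀ (t,x,y,z) - unc U (t,x,y,z) * P u₀ e0 (t,x,y,z))
      - 2 * β x y z * (P w e0 (t,x,y,z) * unc u₀ (t,x,y,z)) with hGd
    set G' : ℝ → ℝ := fun t => (c x y z ^ 2)⁻¹ *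
        (P2 U e0 (t,x,y,z) * unc u₀ (t,x,y,z) - unc U (t,x,y,z) * P2 u₀ e0 (t,x,y,z))
      - 2 * β x y z * (P2 w e0 (t,x,y,z) * unc u₀ (t,x,y,z)
          + P w e0 (t,x,y,z) * P u₀ e0 (t,x,y,z)) with hG'd
    have hGderiv : ∀ t ∈ uIcc (0:ℝ) T, HasDerivAt G (G' t) t := by
      intro t ht'
      rw [uIcc_of_le hT.le] at ht'
      have hq : ((t,x,y,z) : E4) ∈ O := hmem ht' hxI hyI hzI
      have hnb := hO.mem_nhds hq
      have dU1 : HasDerivAt (fun s => unc U (s,x,y,z)) (P U e0 (t,x,y,z)) t :=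
        slice_hasDerivAt (mk0_hasDerivAt x y z t) ((diffOn hUc).differentiableAt hnb)
      have dU2 : HasDerivAt (fun s => P U e0 (s,x,y,z)) (P2 U e0 (t,x,y,z)) t :=
        slice_hasDerivAt (mk0_hasDerivAt x y z t) ((diffOn_P hO hUc e0).differentiableAt hnb)
      have du1 : HasDerivAt (fun s => unc u₀ (s,x,y,z)) (P u₀ e0 (t,x,y,z)) t :=
        slice_hasDerivAt (mk0_hasDerivAt x y z t) ((diffOn huc).differentiableAt hnb)
      have du2 : HasDerivAt (fun s => P u₀ e0 (s,x,y,z)) (P2 u₀ e0 (t,x,y,z)) t :=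
        slice_hasDerivAt (mk0_hasDerivAt x y z t) ((diffOn_P hO huc e0).differentiableAt hnb)
      have dw2 : HasDerivAt (fun s => P w e0 (s,x,y,z)) (P2 w e0 (t,x,y,z)) t :=
        slice_hasDerivAt (mk0_hasDerivAt x y z t) ((diffOn_P hO hwc e0).differentiableAt hnb)
      have c1 := (dU2.mul du1).sub (dU1.mul du2)
      have c2 := dw2.mul du1
      have htot := (c1.const_mul ((c x y z ^ 2)⁻¹)).sub (c2.const_mul (2 * β x y z))
      refine htot.congr_deriv ?_
      rw [hG'd]; ring
    have hG'cont : ContinuousOn G' (Icc 0 T) := by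
      rw [hG'd]
      refine ContinuousOn.sub (continuousOn_const.mul (ContinuousOn.sub
          ((sl (contOn_P2 hO hUc e0)).mul (sl (contOn_unc huc)))
          ((sl (contOn_unc hUc)).mul (sl (contOn_P2 hO huc e0)))))
        (continuousOn_const.mul (ContinuousOn.add
          ((sl (contOn_P2 hO hwc e0)).mul (sl (contOn_unc huc)))
          ((sl (contOn_P hO hwc e0)).mul (sl (contOn_P hO huc e0)))))
    have hG'int : IntervalIntegrable G' MeasureTheory.volume 0 T := by
      apply ContinuousOn.intervalIntegrable
      rwa [uIcc_of_le hT.le]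
    have hzero : (∫ t in (0:ℝ)..T, G' t) = 0 := by
      rw [integral_eq_sub_of_hasDerivAt hGderiv hG'int]
      have hTm : T ∈ Icc (0:ℝ) T := ⟨hT.le, le_rfl⟩
      have h0m : (0:ℝ) ∈ Icc (0:ℝ) T := ⟨le_rfl, hT.le⟩
      have e1 : unc u₀ (T,x,y,z) = 0 := (hv x hxI y hyI z hzI).1
      have e2 : P u₀ e0 (T,x,y,z) = 0 := by
        rw [← dt4_eq hO huc (hmem hTm hxI hyI hzI)]; exact (hv x hxI y hyI z hzI).2
      have e3 : unc U (0,x,y,z) = 0 := (hiii x hxI y hyI z hzI).1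
      have e4 : P U e0 (0,x,y,z) = 0 := by
        rw [← dt4_eq hO hUc (hmem h0m hxI hyI hzI)]; exact (hiii x hxI y hyI z hzI).2.1
      have e5 : P w e0 (0,x,y,z) = 0 := by
        rw [← dt4_eq hO hwc (hmem h0m hxI hyI hzI)]; exact (hiii x hxI y hyI z hzI).2.2.2
      rw [hGd]
      simp only [e1, e2, e3, e4, e5]
      ring
    have pointwise : ∀ t ∈ Ioo 0 T,
        SX (t,x,y,z) + SY (t,x,y,z) + SZ (t,x,y,z)
          = G' t + 2 * (β x y z * P w e0 (t,x,y,z) * P u₀ e0 (t,x,y,z)) := by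
      intro t ht
      have hq : ((t,x,y,z) : E4) ∈ O := hmem (Ioo_subset_Icc_self ht) hxI hyI hzI
      have h1 := hiU t ht x hx y hy z hz
      rw [dt4sq_eq hO hUc hq, dt4sq_eq hO hwc hq, lap4_eq hO hUc hq] at h1
      have h2 := hiv t ht x hx y hy z hz
      rw [dt4sq_eq hO huc hq, lap4_eq hO huc hq] at h2
      rw [hSXd, hSYd, hSZd, hG'd]
      linear_combination (-(unc u₀ (t,x,y,z))) * h1 + unc U (t,x,y,z) * h2
    have hRint : IntervalIntegrable
        (fun t => 2 * (β x y z * P w e0 (t,x,y,z) * P u₀ e0 (t,x,y,z)))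
        MeasureTheory.volume 0 T := by
      apply ContinuousOn.intervalIntegrable
      rw [uIcc_of_le hT.le]
      exact continuousOn_const.mul ((continuousOn_const.mul
        (sl (contOn_P hO hwc e0))).mul (sl (contOn_P hO huc e0)))
    calc (∫ t in (0:ℝ)..T, (sX (t,x,y,z) + sY (t,x,y,z) + sZ (t,x,y,z)))
        = ∫ t in (0:ℝ)..T, (SX (t,x,y,z) + SY (t,x,y,z) + SZ (t,x,y,z)) :=
          intCongrIcc hT.le (fun t htI => by
            rw [hsX _ (hmemK htI hxI hyI hzI), hsY _ (hmemK htI hxI hyI hzI),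
              hsZ _ (hmemK htI hxI hyI hzI)])
      _ = ∫ t in (0:ℝ)..T,
            (G' t + 2 * (β x y z * P w e0 (t,x,y,z) * P u₀ e0 (t,x,y,z))) :=
          intCongrIoo hT.le pointwise
      _ = (∫ t in (0:ℝ)..T, G' t)
          + ∫ t in (0:ℝ)..T, 2 * (β x y z * P w e0 (t,x,y,z) * P u₀ e0 (t,x,y,z)) :=
          integral_add hG'int hRint
      _ = ∫ t in (0:ℝ)..T, 2 * (β x y z * P w e0 (t,x,y,z) * P u₀ e0 (t,x,y,z)) := by
          rw [hzero, zero_add]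
      _ = ∫ t in (0:ℝ)..T, 2 * r (t,x,y,z) :=
          intCongrIcc hT.le (fun t htI => by
            rw [show r (t,x,y,z) = Rf (t,x,y,z) from hr _ (hmemK htI hxI hyI hzI), hRfd])
  -- final assembly
  have cSum : Continuous fun p : E4 =>
      sX (p.1,p.2.1,p.2.2.1,p.2.2.2) + sY (p.1,p.2.1,p.2.2.1,p.2.2.2)
        + sZ (p.1,p.2.1,p.2.2.1,p.2.2.2) := by
    have m4 : Continuous fun p : E4 => ((p.1,p.2.1,p.2.2.1,p.2.2.2) : E4) := by fun_prop
    exact ((csX.comp m4).add (csY.comp m4)).add (csZ.comp m4)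
  have cr4 : Continuous fun p : E4 => r (p.1,p.2.1,p.2.2.1,p.2.2.2) := by
    have m4 : Continuous fun p : E4 => ((p.1,p.2.1,p.2.2.1,p.2.2.2) : E4) := by fun_prop
    exact cr.comp m4
  rw [intCongrIoo hT.le step1,
    nestT (g := fun t x y z => sX (t,x,y,z) + sY (t,x,y,z) + sZ (t,x,y,z)) cSum
      hT.le h₁.le h₂.le h₃.le,
    intCongrIoo h₁.le (fun x hx => intCongrIoo h₂.le (fun y hy =>
      intCongrIoo h₃.le (fun z hz => step5 x hx y hy z hz)))]
  simp only [intervalIntegral.integral_const_mul]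
  rw [← nestT (g := fun t x y z => r (t,x,y,z)) cr4 hT.le h₁.le h₂.le h₃.le]
  congr 1
  refine intCongrIcc hT.le (fun t htI => intCongrIcc h₁.le (fun x hx =>
    intCongrIcc h₂.le (fun y hy => intCongrIcc h₃.le (fun z hz => ?_))))
  rw [show r (t,x,y,z) = Rf (t,x,y,z) from hr _ (hmemK htI hx hy hz), hRfd]
  show β x y z * P w e0 (t,x,y,z) * P u₀ e0 (t,x,y,z)
    = β x y z * dt4 w t x y z * dt4 u₀ t x y z
  rw [← dt4_eq hO hwc (hmem htI hx hy hz), ← dt4_eq hO huc (hmem htI hx hy hz)]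
end

section
/- Let Ω ⊂ ℝ³ be an open rectangular box, let k, θ ∈ ℝ³ satisfy ‖θ‖ = ‖k‖, let β : ℝ³ → ℂ be continuous, and let V : ℝ³ → ℂ be twice continuously differentiable on a neighborhood of closure(Ω) and satisfy ΔV(x) + 4‖k‖²·V(x) = β(x)·e^{2i⟨k,x⟩} for all x ∈ Ω. Then, with φ(x) := e^{−2i⟨θ,x⟩}, one has ∫_Ω β(x)·e^{2i⟨k−θ,x⟩} dx = ∫_{∂Ω} ( (∂_ν V)(x)·φ(x) − V(x)·(∂_ν φ)(x) ) dS(x). -/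
open Set Complex intervalIntegral
open scoped RealInnerProductSpace

/-- The point of ℝ³ (as Euclidean space) with coordinates (x, y, z). -/
noncomputable def vec3 (x y z : ℝ) : EuclideanSpace ℝ (Fin 3) :=
  (WithLp.equiv 2 (Fin 3 → ℝ)).symm ![x, y, z]

/-- Partial derivative of g(x,y,z) in the first variable. -/
noncomputable def dx3 (g : ℝ → ℝ → ℝ → ℂ) (x y z : ℝ) : ℂ :=
  deriv (fun s => g s y z) x

/-- Partial derivative in the second variable. -/
noncomputable def dy3 (g : ℝ → ℝ → ℝ → ℂ) (x y z : ℝ) : ℂ :=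
  deriv (fun s => g x s z) y

/-- Partial derivative in the third variable. -/
noncomputable def dz3 (g : ℝ → ℝ → ℝ → ℂ) (x y z : ℝ) : ℂ :=
  deriv (fun s => g x y s) z

/-- Laplacian of g : ℝ³ → ℂ in coordinates. -/
noncomputable def lap3 (g : ℝ → ℝ → ℝ → ℂ) (x y z : ℝ) : ℂ :=
  deriv (fun s => dx3 g s y z) x + deriv (fun s => dy3 g x s z) y +
    deriv (fun s => dz3 g x y s) z

section helpers
open MeasureTheory

lemma inner_vec3 (v : EuclideanSpace ℝ (Fin 3)) (x y z : ℝ) :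
    (⟪v, vec3 x y z⟫ : ℝ) = v 0 * x + v 1 * y + v 2 * z := by
  simp [vec3, PiLp.inner_apply, Fin.sum_univ_three, RCLike.inner_apply]
  ring

lemma norm_sq3 (v : EuclideanSpace ℝ (Fin 3)) : ‖v‖^2 = v 0^2 + v 1^2 + v 2^2 := by
  rw [← real_inner_self_eq_norm_sq]
  simp only [PiLp.inner_apply, Fin.sum_univ_three, RCLike.inner_apply, conj_trivial]
  ring


lemma expDeriv3 (c₁ c₂ c₃ : ℂ) (x z : ℝ) (t : ℝ) :
    HasDerivAt (fun s : ℝ => Complex.exp (c₁*x + c₂*s + c₃*z))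
      (c₂ * Complex.exp (c₁*x + c₂*t + c₃*z)) t := by
  have h : HasDerivAt (fun s : ℝ => c₁*(x:ℂ) + c₂*s + c₃*z) c₂ t := by
    simpa [add_assoc] using
      ((((Complex.ofRealCLM.hasDerivAt (x := t)).const_mul c₂).add_const (c₃*(z:ℂ))).const_add
        (c₁*(x:ℂ)))
  simpa [mul_comm] using h.cexp

lemma green1d {a b : ℝ} (hab : a ≤ b) {u u' u'' w : ℝ → ℂ} {c : ℂ}
    (hu : ∀ t ∈ Icc a b, HasDerivAt u (u' t) t)
    (hu' : ∀ t ∈ Icc a b, HasDerivAt u' (u'' t) t)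
    (hw : ∀ t, HasDerivAt w (c * w t) t)
    (hint : IntervalIntegrable (fun t => u'' t * w t - u t * (c^2 * w t)) volume a b) :
    ∫ t in a..b, (u'' t * w t - u t * (c^2 * w t))
      = (u' b * w b - u b * (c * w b)) - (u' a * w a - u a * (c * w a)) := by
  apply intervalIntegral.integral_eq_sub_of_hasDerivAt (f := fun t => u' t * w t - u t * (c * w t))
  · intro t ht
    rw [uIcc_of_le hab] at ht
    have h1 := (hu' t ht).mul (hw t)
    have h2 := (hu t ht).mul ((hw t).const_mul c)
    convert h1.sub h2 using 1
    · funext s; simp only [Pi.mul_apply, Pi.sub_apply]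
    · ring
  · exact hint

lemma iii_congr {a₁ b₁ a₂ b₂ a₃ b₃ : ℝ} (h₁ : a₁ ≤ b₁) (h₂ : a₂ ≤ b₂) (h₃ : a₃ ≤ b₃)
    {f g : ℝ → ℝ → ℝ → ℂ}
    (h : ∀ x ∈ Ioo a₁ b₁, ∀ y ∈ Ioo a₂ b₂, ∀ z ∈ Ioo a₃ b₃, f x y z = g x y z) :
    (∫ x in a₁..b₁, ∫ y in a₂..b₂, ∫ z in a₃..b₃, f x y z)
      = ∫ x in a₁..b₁, ∫ y in a₂..b₂, ∫ z in a₃..b₃, g x y z := by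
  rw [intervalIntegral.integral_of_le h₁, intervalIntegral.integral_of_le h₁,
    integral_Ioc_eq_integral_Ioo, integral_Ioc_eq_integral_Ioo]
  refine setIntegral_congr_fun measurableSet_Ioo (fun x hx => ?_)
  rw [intervalIntegral.integral_of_le h₂, intervalIntegral.integral_of_le h₂,
    integral_Ioc_eq_integral_Ioo, integral_Ioc_eq_integral_Ioo]
  refine setIntegral_congr_fun measurableSet_Ioo (fun y hy => ?_)
  rw [intervalIntegral.integral_of_le h₃, intervalIntegral.integral_of_le h₃,
    integral_Ioc_eq_integral_Ioo, integral_Ioc_eq_integral_Ioo]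
  refine setIntegral_congr_fun measurableSet_Ioo (fun z hz => ?_)
  exact h x hx y hy z hz

lemma cont_slice3 {f : ℝ×ℝ×ℝ → ℂ} (hf : Continuous f) (x y : ℝ) :
    Continuous fun z => f (x, y, z) := hf.comp (by continuity)

lemma cont_inner2 {f : ℝ×ℝ×ℝ → ℂ} (hf : Continuous f) (c d : ℝ) :
    Continuous fun p : ℝ×ℝ => ∫ z in c..d, f (p.1, p.2, z) := by
  apply intervalIntegral.continuous_parametric_intervalIntegral_of_continuous'
    (f := fun (p : ℝ×ℝ) z => f (p.1, p.2, z))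
  exact hf.comp (((continuous_fst.comp continuous_fst).prodMk
    ((continuous_snd.comp continuous_fst).prodMk continuous_snd)))

lemma cont_outer2 {f : ℝ×ℝ×ℝ → ℂ} (hf : Continuous f) (c d e g : ℝ) :
    Continuous fun x : ℝ => ∫ y in c..d, ∫ z in e..g, f (x, y, z) := by
  apply intervalIntegral.continuous_parametric_intervalIntegral_of_continuous'
    (f := fun (x : ℝ) y => ∫ z in e..g, f (x, y, z))
  exact cont_inner2 hf e g

lemma swap2 {f : ℝ → ℝ → ℂ} (hf : Continuous (Function.uncurry f)) {a b c d : ℝ}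
    (hab : a ≤ b) (hcd : c ≤ d) :
    (∫ x in a..b, ∫ y in c..d, f x y) = ∫ y in c..d, ∫ x in a..b, f x y := by
  rw [intervalIntegral.integral_of_le hab, intervalIntegral.integral_of_le hcd]
  simp_rw [intervalIntegral.integral_of_le hab, intervalIntegral.integral_of_le hcd]
  apply MeasureTheory.integral_integral_swap
  rw [Measure.prod_restrict]
  exact ((hf.continuousOn.integrableOn_compact (isCompact_Icc.prod isCompact_Icc)).mono_set
    (prod_mono Ioc_subset_Icc_self Ioc_subset_Icc_self))

lemma iii_add {a₁ b₁ a₂ b₂ a₃ b₃ : ℝ} {f g : ℝ×ℝ×ℝ → ℂ}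
    (hf : Continuous f) (hg : Continuous g) :
    (∫ x in a₁..b₁, ∫ y in a₂..b₂, ∫ z in a₃..b₃, (f (x,y,z) + g (x,y,z)))
      = (∫ x in a₁..b₁, ∫ y in a₂..b₂, ∫ z in a₃..b₃, f (x,y,z))
        + ∫ x in a₁..b₁, ∫ y in a₂..b₂, ∫ z in a₃..b₃, g (x,y,z) := by
  have h1 : ∀ x y, (∫ z in a₃..b₃, (f (x,y,z) + g (x,y,z)))
      = (∫ z in a₃..b₃, f (x,y,z)) + ∫ z in a₃..b₃, g (x,y,z) := fun x y =>
    intervalIntegral.integral_add ((cont_slice3 hf x y).intervalIntegrable _ _)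
      ((cont_slice3 hg x y).intervalIntegrable _ _)
  have h2 : ∀ x, (∫ y in a₂..b₂, ∫ z in a₃..b₃, (f (x,y,z) + g (x,y,z)))
      = (∫ y in a₂..b₂, ∫ z in a₃..b₃, f (x,y,z))
        + ∫ y in a₂..b₂, ∫ z in a₃..b₃, g (x,y,z) := by
    intro x
    simp_rw [h1]
    exact intervalIntegral.integral_add
      (((cont_inner2 hf a₃ b₃).comp (by continuity : Continuous fun y : ℝ => ((x,y) : ℝ×ℝ))).intervalIntegrable _ _)
      (((cont_inner2 hg a₃ b₃).comp (by continuity : Continuous fun y : ℝ => ((x,y) : ℝ×ℝ))).intervalIntegrable _ _)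
  simp_rw [h2]
  exact intervalIntegral.integral_add
    ((cont_outer2 hf _ _ _ _).intervalIntegrable _ _)
    ((cont_outer2 hg _ _ _ _).intervalIntegrable _ _)

section slices
variable {O : Set (ℝ×ℝ×ℝ)} {f : ℝ×ℝ×ℝ → ℂ} {n : ℕ∞}

lemma sliceX (hO : IsOpen O) (hf : ContDiffOn ℝ n f O) (hn : 1 ≤ n)
    {x y z : ℝ} (hq : (x,y,z) ∈ O) :
    HasDerivAt (fun s => f (s,y,z)) (fderiv ℝ f (x,y,z) (1,0,0)) x := by
  have hd : DifferentiableAt ℝ f (x,y,z) :=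
    (hf.contDiffAt (hO.mem_nhds hq)).differentiableAt (by exact_mod_cast (ENat.one_le_iff_ne_zero.mp hn))
  have h1 : HasDerivAt (fun s : ℝ => ((s,y,z) : ℝ×ℝ×ℝ)) (1,0,0) x := by
    exact (hasDerivAt_id x).prodMk (hasDerivAt_const x ((y,z) : ℝ×ℝ))
  exact hd.hasFDerivAt.comp_hasDerivAt x h1

lemma sliceY (hO : IsOpen O) (hf : ContDiffOn ℝ n f O) (hn : 1 ≤ n)
    {x y z : ℝ} (hq : (x,y,z) ∈ O) :
    HasDerivAt (fun s => f (x,s,z)) (fderiv ℝ f (x,y,z) (0,1,0)) y := by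
  have hd : DifferentiableAt ℝ f (x,y,z) :=
    (hf.contDiffAt (hO.mem_nhds hq)).differentiableAt (by exact_mod_cast (ENat.one_le_iff_ne_zero.mp hn))
  have h1 : HasDerivAt (fun s : ℝ => ((x,s,z) : ℝ×ℝ×ℝ)) (0,1,0) y := by
    simpa using ((hasDerivAt_const y x).prodMk ((hasDerivAt_id y).prodMk (hasDerivAt_const y z)))
  exact hd.hasFDerivAt.comp_hasDerivAt y h1

lemma sliceZ (hO : IsOpen O) (hf : ContDiffOn ℝ n f O) (hn : 1 ≤ n)
    {x y z : ℝ} (hq : (x,y,z) ∈ O) :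
    HasDerivAt (fun s => f (x,y,s)) (fderiv ℝ f (x,y,z) (0,0,1)) z := by
  have hd : DifferentiableAt ℝ f (x,y,z) :=
    (hf.contDiffAt (hO.mem_nhds hq)).differentiableAt (by exact_mod_cast (ENat.one_le_iff_ne_zero.mp hn))
  have h1 : HasDerivAt (fun s : ℝ => ((x,y,s) : ℝ×ℝ×ℝ)) (0,0,1) z := by
    simpa using ((hasDerivAt_const z x).prodMk ((hasDerivAt_const z y).prodMk (hasDerivAt_id z)))
  exact hd.hasFDerivAt.comp_hasDerivAt z h1

lemma fderivC1 (hO : IsOpen O) (hf : ContDiffOn ℝ 2 f O) (v : ℝ×ℝ×ℝ) :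
    ContDiffOn ℝ 1 (fun q => fderiv ℝ f q v) O := by
  have h : ContDiffOn ℝ 1 (fun q => fderiv ℝ f q) O := hf.fderiv_of_isOpen hO (by norm_num)
  exact (ContinuousLinearMap.apply ℝ ℂ v).contDiff.comp_contDiffOn h

lemma fderivCont (hO : IsOpen O) (hf : ContDiffOn ℝ 1 f O) (v : ℝ×ℝ×ℝ) :
    ContinuousOn (fun q => fderiv ℝ f q v) O := by
  have h := hf.continuousOn_fderiv_of_isOpen hO (le_refl 1)
  exact (ContinuousLinearMap.apply ℝ ℂ v).continuous.comp_continuousOn h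

end slices

lemma expDA (c₁ c₂ c₃ : ℂ) (y z : ℝ) (t : ℝ) :
    HasDerivAt (fun s : ℝ => Complex.exp (c₁*s + c₂*y + c₃*z))
      (c₁ * Complex.exp (c₁*t + c₂*y + c₃*z)) t := by
  have h : HasDerivAt (fun s : ℝ => c₁*(s:ℂ) + c₂*y + c₃*z) c₁ t := by
    simpa [add_assoc] using
      (((Complex.ofRealCLM.hasDerivAt (x := t)).const_mul c₁).add_const (c₂*(y:ℂ) + c₃*(z:ℂ)))
  simpa [mul_comm] using h.cexp

lemma expDB (c₁ c₂ c₃ : ℂ) (x z : ℝ) (t : ℝ) :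
    HasDerivAt (fun s : ℝ => Complex.exp (c₁*x + c₂*s + c₃*z))
      (c₂ * Complex.exp (c₁*x + c₂*t + c₃*z)) t := by
  have h : HasDerivAt (fun s : ℝ => c₁*(x:ℂ) + c₂*s + c₃*z) c₂ t := by
    simpa [add_assoc] using
      ((((Complex.ofRealCLM.hasDerivAt (x := t)).const_mul c₂).add_const (c₃*(z:ℂ))).const_add
        (c₁*(x:ℂ)))
  simpa [mul_comm] using h.cexp

lemma expDC (c₁ c₂ c₃ : ℂ) (x y : ℝ) (t : ℝ) :
    HasDerivAt (fun s : ℝ => Complex.exp (c₁*x + c₂*y + c₃*s))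
      (c₃ * Complex.exp (c₁*x + c₂*y + c₃*t)) t := by
  have h : HasDerivAt (fun s : ℝ => c₁*(x:ℂ) + c₂*(y:ℂ) + c₃*s) c₃ t := by
    simpa [add_assoc] using
      (((Complex.ofRealCLM.hasDerivAt (x := t)).const_mul c₃).const_add (c₁*(x:ℂ) + c₂*(y:ℂ)))
  simpa [mul_comm] using h.cexp

lemma iii_add3 {a₁ b₁ a₂ b₂ a₃ b₃ : ℝ} {f g h : ℝ×ℝ×ℝ → ℂ}
    (hf : Continuous f) (hg : Continuous g) (hh : Continuous h) :
    (∫ x in a₁..b₁, ∫ y in a₂..b₂, ∫ z in a₃..b₃, (f (x,y,z) + g (x,y,z) + h (x,y,z)))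
      = (∫ x in a₁..b₁, ∫ y in a₂..b₂, ∫ z in a₃..b₃, f (x,y,z))
        + (∫ x in a₁..b₁, ∫ y in a₂..b₂, ∫ z in a₃..b₃, g (x,y,z))
        + ∫ x in a₁..b₁, ∫ y in a₂..b₂, ∫ z in a₃..b₃, h (x,y,z) := by
  have h1 : ∀ x y, (∫ z in a₃..b₃, (f (x,y,z) + g (x,y,z) + h (x,y,z)))
      = (∫ z in a₃..b₃, f (x,y,z)) + (∫ z in a₃..b₃, g (x,y,z))
        + ∫ z in a₃..b₃, h (x,y,z) := by
    intro x y
    rw [intervalIntegral.integral_add (((cont_slice3 hf x y).intervalIntegrable _ _).add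
        ((cont_slice3 hg x y).intervalIntegrable _ _)) ((cont_slice3 hh x y).intervalIntegrable _ _),
      intervalIntegral.integral_add ((cont_slice3 hf x y).intervalIntegrable _ _)
        ((cont_slice3 hg x y).intervalIntegrable _ _)]
  have hcy : ∀ (x : ℝ) {u : ℝ×ℝ×ℝ → ℂ}, Continuous u →
      IntervalIntegrable (fun y => ∫ z in a₃..b₃, u (x,y,z)) MeasureTheory.volume a₂ b₂ :=
    fun x {u} hu => (((cont_inner2 hu a₃ b₃).comp
      ((continuous_const.prodMk continuous_id : Continuous fun y : ℝ => ((x,y) : ℝ×ℝ)))).intervalIntegrable _ _)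
  have h2 : ∀ x, (∫ y in a₂..b₂, ∫ z in a₃..b₃, (f (x,y,z) + g (x,y,z) + h (x,y,z)))
      = (∫ y in a₂..b₂, ∫ z in a₃..b₃, f (x,y,z))
        + (∫ y in a₂..b₂, ∫ z in a₃..b₃, g (x,y,z))
        + ∫ y in a₂..b₂, ∫ z in a₃..b₃, h (x,y,z) := by
    intro x
    simp_rw [h1]
    rw [intervalIntegral.integral_add ((hcy x hf).add (hcy x hg)) (hcy x hh),
      intervalIntegral.integral_add (hcy x hf) (hcy x hg)]
  simp_rw [h2]
  rw [intervalIntegral.integral_add (((cont_outer2 hf _ _ _ _).intervalIntegrable _ _).add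
      ((cont_outer2 hg _ _ _ _).intervalIntegrable _ _)) ((cont_outer2 hh _ _ _ _).intervalIntegrable _ _),
    intervalIntegral.integral_add ((cont_outer2 hf _ _ _ _).intervalIntegrable _ _)
      ((cont_outer2 hg _ _ _ _).intervalIntegrable _ _)]

end helpers

set_option maxHeartbeats 1000000 in
/-- Green's identity for the Helmholtz equation
ΔV + 4‖k‖²V = β e^{2i⟨k,x⟩} on an open rectangular box Ω, with φ(x) = e^{−2i⟨θ,x⟩},
‖θ‖ = ‖k‖:  ∫_Ω β e^{2i⟨k−θ,x⟩} dx = ∫_{∂Ω} (∂_ν V·φ − V·∂_ν φ) dS. -/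
theorem stmt_12 (a₁ b₁ a₂ b₂ a₃ b₃ : ℝ)
    (h₁ : a₁ < b₁) (h₂ : a₂ < b₂) (h₃ : a₃ < b₃)
    (k θ : EuclideanSpace ℝ (Fin 3)) (hkθ : ‖θ‖ = ‖k‖)
    (β : ℝ → ℝ → ℝ → ℂ)
    (hβ_cont : Continuous fun q : ℝ × ℝ × ℝ => β q.1 q.2.1 q.2.2)
    (V : ℝ → ℝ → ℝ → ℂ)
    -- V is C² on a neighborhood of closure(Ω)
    (hV : ∃ O : Set (ℝ × ℝ × ℝ), IsOpen O ∧
      Icc a₁ b₁ ×ˢ Icc a₂ b₂ ×ˢ Icc a₃ b₃ ⊆ O ∧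
      ContDiffOn ℝ 2 (fun q : ℝ × ℝ × ℝ => V q.1 q.2.1 q.2.2) O)
    -- the Helmholtz equation on Ω
    (hHelm : ∀ x ∈ Ioo a₁ b₁, ∀ y ∈ Ioo a₂ b₂, ∀ z ∈ Ioo a₃ b₃,
      lap3 V x y z + 4 * (‖k‖ : ℂ) ^ 2 * V x y z
        = β x y z * Complex.exp (2 * I * (⟪k, vec3 x y z⟫ : ℝ))) :
    -- with φ(x) := e^{−2i⟨θ,x⟩},
    ∀ φ : ℝ → ℝ → ℝ → ℂ,
      (φ = fun x y z => Complex.exp (-2 * I * (⟪θ, vec3 x y z⟫ : ℝ))) →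
      (∫ x in a₁..b₁, ∫ y in a₂..b₂, ∫ z in a₃..b₃,
          β x y z * Complex.exp (2 * I * (⟪k - θ, vec3 x y z⟫ : ℝ)))
        = ((∫ y in a₂..b₂, ∫ z in a₃..b₃,
              dx3 V b₁ y z * φ b₁ y z - V b₁ y z * dx3 φ b₁ y z)
          - (∫ y in a₂..b₂, ∫ z in a₃..b₃,
              dx3 V a₁ y z * φ a₁ y z - V a₁ y z * dx3 φ a₁ y z)
          + ((∫ x in a₁..b₁, ∫ z in a₃..b₃,
              dy3 V x b₂ z * φ x b₂ z - V x b₂ z * dy3 φ x b₂ z)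
            - (∫ x in a₁..b₁, ∫ z in a₃..b₃,
              dy3 V x a₂ z * φ x a₂ z - V x a₂ z * dy3 φ x a₂ z))
          + ((∫ x in a₁..b₁, ∫ y in a₂..b₂,
              dz3 V x y b₃ * φ x y b₃ - V x y b₃ * dz3 φ x y b₃)
            - (∫ x in a₁..b₁, ∫ y in a₂..b₂,
              dz3 V x y a₃ * φ x y a₃ - V x y a₃ * dz3 φ x y a₃))) := by
  intro φ hφ
  subst hφ
  obtain ⟨O, hO, hKO, hC2⟩ := hV
  have h₁' := h₁.le
  have h₂' := h₂.le
  have h₃' := h₃.le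
  have hK : ∀ {x y z : ℝ}, x ∈ Icc a₁ b₁ → y ∈ Icc a₂ b₂ → z ∈ Icc a₃ b₃ →
      ((x,y,z) : ℝ×ℝ×ℝ) ∈ O := fun hx hy hz => hKO ⟨hx, hy, hz⟩
  set Vf : ℝ×ℝ×ℝ → ℂ := fun q => V q.1 q.2.1 q.2.2 with hVfd
  set Vx : ℝ×ℝ×ℝ → ℂ := fun q => fderiv ℝ Vf q (1,0,0) with hVxd
  set Vy : ℝ×ℝ×ℝ → ℂ := fun q => fderiv ℝ Vf q (0,1,0) with hVyd
  set Vz : ℝ×ℝ×ℝ → ℂ := fun q => fderiv ℝ Vf q (0,0,1) with hVzd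
  set Vxx : ℝ×ℝ×ℝ → ℂ := fun q => fderiv ℝ Vx q (1,0,0) with hVxxd
  set Vyy : ℝ×ℝ×ℝ → ℂ := fun q => fderiv ℝ Vy q (0,1,0) with hVyyd
  set Vzz : ℝ×ℝ×ℝ → ℂ := fun q => fderiv ℝ Vz q (0,0,1) with hVzzd
  -- C¹ / continuity facts
  have hVx1 : ContDiffOn ℝ 1 Vx O := fderivC1 hO hC2 _
  have hVy1 : ContDiffOn ℝ 1 Vy O := fderivC1 hO hC2 _
  have hVz1 : ContDiffOn ℝ 1 Vz O := fderivC1 hO hC2 _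
  have hVc : ContinuousOn Vf O := hC2.continuousOn
  have hVxc : ContinuousOn Vx O := hVx1.continuousOn
  have hVyc : ContinuousOn Vy O := hVy1.continuousOn
  have hVzc : ContinuousOn Vz O := hVz1.continuousOn
  have hVxxc : ContinuousOn Vxx O := fderivCont hO hVx1 _
  have hVyyc : ContinuousOn Vyy O := fderivCont hO hVy1 _
  have hVzzc : ContinuousOn Vzz O := fderivCont hO hVz1 _
  -- slice derivatives
  have hdVx : ∀ {x y z : ℝ}, (x,y,z) ∈ O →
      HasDerivAt (fun s => V s y z) (Vx (x,y,z)) x :=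
    fun hq => sliceX hO hC2 one_le_two hq
  have hdVy : ∀ {x y z : ℝ}, (x,y,z) ∈ O →
      HasDerivAt (fun s => V x s z) (Vy (x,y,z)) y :=
    fun hq => sliceY hO hC2 one_le_two hq
  have hdVz : ∀ {x y z : ℝ}, (x,y,z) ∈ O →
      HasDerivAt (fun s => V x y s) (Vz (x,y,z)) z :=
    fun hq => sliceZ hO hC2 one_le_two hq
  have hdx3 : ∀ {x y z : ℝ}, (x,y,z) ∈ O → dx3 V x y z = Vx (x,y,z) :=
    fun hq => (hdVx hq).deriv
  have hdy3 : ∀ {x y z : ℝ}, (x,y,z) ∈ O → dy3 V x y z = Vy (x,y,z) :=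
    fun hq => (hdVy hq).deriv
  have hdz3 : ∀ {x y z : ℝ}, (x,y,z) ∈ O → dz3 V x y z = Vz (x,y,z) :=
    fun hq => (hdVz hq).deriv
  have hdVxx : ∀ {x y z : ℝ}, (x,y,z) ∈ O →
      HasDerivAt (fun s => dx3 V s y z) (Vxx (x,y,z)) x := by
    intro x y z hq
    have h := sliceX hO hVx1 le_rfl hq
    apply h.congr_of_eventuallyEq
    have hopen : IsOpen {s : ℝ | ((s,y,z) : ℝ×ℝ×ℝ) ∈ O} :=
      hO.preimage (continuous_id.prodMk continuous_const)
    filter_upwards [hopen.mem_nhds hq] with s hs using hdx3 hs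
  have hdVyy : ∀ {x y z : ℝ}, (x,y,z) ∈ O →
      HasDerivAt (fun s => dy3 V x s z) (Vyy (x,y,z)) y := by
    intro x y z hq
    have h := sliceY hO hVy1 le_rfl hq
    apply h.congr_of_eventuallyEq
    have hopen : IsOpen {s : ℝ | ((x,s,z) : ℝ×ℝ×ℝ) ∈ O} :=
      hO.preimage (continuous_const.prodMk (continuous_id.prodMk continuous_const))
    filter_upwards [hopen.mem_nhds hq] with s hs using hdy3 hs
  have hdVzz : ∀ {x y z : ℝ}, (x,y,z) ∈ O →
      HasDerivAt (fun s => dz3 V x y s) (Vzz (x,y,z)) z := by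
    intro x y z hq
    have h := sliceZ hO hVz1 le_rfl hq
    apply h.congr_of_eventuallyEq
    have hopen : IsOpen {s : ℝ | ((x,y,s) : ℝ×ℝ×ℝ) ∈ O} :=
      hO.preimage (continuous_const.prodMk (continuous_const.prodMk continuous_id))
    filter_upwards [hopen.mem_nhds hq] with s hs using hdz3 hs
  have hlap : ∀ {x y z : ℝ}, (x,y,z) ∈ O →
      lap3 V x y z = Vxx (x,y,z) + Vyy (x,y,z) + Vzz (x,y,z) := by
    intro x y z hq
    simp only [lap3]
    rw [(hdVxx hq).deriv, (hdVyy hq).deriv, (hdVzz hq).deriv]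
  -- clamp map onto the box
  set Q : ℝ×ℝ×ℝ → ℝ×ℝ×ℝ :=
    fun q => (max a₁ (min q.1 b₁), max a₂ (min q.2.1 b₂), max a₃ (min q.2.2 b₃)) with hQd
  have hQc : Continuous Q := by
    refine Continuous.prodMk ?_ (Continuous.prodMk ?_ ?_) <;> fun_prop
  have hQK : ∀ q, Q q ∈ Icc a₁ b₁ ×ˢ Icc a₂ b₂ ×ˢ Icc a₃ b₃ := fun q =>
    ⟨⟨le_max_left _ _, max_le h₁' (min_le_right _ _)⟩,
     ⟨le_max_left _ _, max_le h₂' (min_le_right _ _)⟩,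
     ⟨le_max_left _ _, max_le h₃' (min_le_right _ _)⟩⟩
  have hQid : ∀ {x y z : ℝ}, x ∈ Icc a₁ b₁ → y ∈ Icc a₂ b₂ → z ∈ Icc a₃ b₃ →
      Q (x,y,z) = (x,y,z) := by
    intro x y z hx hy hz
    simp only [hQd]
    rw [min_eq_left hx.2, max_eq_right hx.1, min_eq_left hy.2, max_eq_right hy.1,
      min_eq_left hz.2, max_eq_right hz.1]
  have hcomp : ∀ {g : ℝ×ℝ×ℝ → ℂ}, ContinuousOn g O → Continuous (g ∘ Q) :=
    fun hg => hg.comp_continuous hQc (fun q => hKO (hQK q))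
  -- the explicit exponential
  set cx : ℂ := -2 * I * ((θ 0 : ℝ) : ℂ) with hcxd
  set cy : ℂ := -2 * I * ((θ 1 : ℝ) : ℂ) with hcyd
  set cz : ℂ := -2 * I * ((θ 2 : ℝ) : ℂ) with hczd
  set eφ : ℝ×ℝ×ℝ → ℂ := fun q => Complex.exp (cx*q.1 + cy*q.2.1 + cz*q.2.2) with heφd
  have heφc : Continuous eφ := by fun_prop
  -- rewrite φ in the goal
  have hφeq : (fun x y z => Complex.exp (-2 * I * ((⟪θ, vec3 x y z⟫ : ℝ) : ℂ)))
      = fun x y z => eφ (x,y,z) := by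
    funext x y z
    simp only [heφd]
    rw [inner_vec3]
    push_cast
    ring_nf
    simp only [hcxd, hcyd, hczd]
    ring_nf
  -- derivatives of the exponential
  have hder_x : ∀ (x y z : ℝ), HasDerivAt (fun s => eφ (s,y,z)) (cx * eφ (x,y,z)) x := by
    intro x y z; simpa only [heφd] using expDA cx cy cz y z x
  have hder_y : ∀ (x y z : ℝ), HasDerivAt (fun s => eφ (x,s,z)) (cy * eφ (x,y,z)) y := by
    intro x y z; simpa only [heφd] using expDB cx cy cz x z y
  have hder_z : ∀ (x y z : ℝ), HasDerivAt (fun s => eφ (x,y,s)) (cz * eφ (x,y,z)) z := by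
    intro x y z; simpa only [heφd] using expDC cx cy cz x y z
  have hdx3φ : ∀ (x y z : ℝ), dx3 (fun x y z => eφ (x,y,z)) x y z = cx * eφ (x,y,z) :=
    fun x y z => (hder_x x y z).deriv
  have hdy3φ : ∀ (x y z : ℝ), dy3 (fun x y z => eφ (x,y,z)) x y z = cy * eφ (x,y,z) :=
    fun x y z => (hder_y x y z).deriv
  have hdz3φ : ∀ (x y z : ℝ), dz3 (fun x y z => eφ (x,y,z)) x y z = cz * eφ (x,y,z) :=
    fun x y z => (hder_z x y z).deriv
  rw [hφeq]
  simp only [hdx3φ, hdy3φ, hdz3φ]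
  -- integrands
  set P1 : ℝ×ℝ×ℝ → ℂ := fun q => (Vxx ∘ Q) q * eφ q - (Vf ∘ Q) q * (cx^2 * eφ q) with hP1d
  set P2 : ℝ×ℝ×ℝ → ℂ := fun q => (Vyy ∘ Q) q * eφ q - (Vf ∘ Q) q * (cy^2 * eφ q) with hP2d
  set P3 : ℝ×ℝ×ℝ → ℂ := fun q => (Vzz ∘ Q) q * eφ q - (Vf ∘ Q) q * (cz^2 * eφ q) with hP3d
  set G1 : ℝ×ℝ×ℝ → ℂ := fun q => (Vx ∘ Q) q * eφ q - (Vf ∘ Q) q * (cx * eφ q) with hG1d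
  set G2 : ℝ×ℝ×ℝ → ℂ := fun q => (Vy ∘ Q) q * eφ q - (Vf ∘ Q) q * (cy * eφ q) with hG2d
  set G3 : ℝ×ℝ×ℝ → ℂ := fun q => (Vz ∘ Q) q * eφ q - (Vf ∘ Q) q * (cz * eφ q) with hG3d
  have hP1c : Continuous P1 :=
    ((hcomp hVxxc).mul heφc).sub ((hcomp hVc).mul (continuous_const.mul heφc))
  have hP2c : Continuous P2 :=
    ((hcomp hVyyc).mul heφc).sub ((hcomp hVc).mul (continuous_const.mul heφc))
  have hP3c : Continuous P3 :=
    ((hcomp hVzzc).mul heφc).sub ((hcomp hVc).mul (continuous_const.mul heφc))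
  have hG1c : Continuous G1 :=
    ((hcomp hVxc).mul heφc).sub ((hcomp hVc).mul (continuous_const.mul heφc))
  have hG2c : Continuous G2 :=
    ((hcomp hVyc).mul heφc).sub ((hcomp hVc).mul (continuous_const.mul heφc))
  have hG3c : Continuous G3 :=
    ((hcomp hVzc).mul heφc).sub ((hcomp hVc).mul (continuous_const.mul heφc))
  -- boundary integrands in clamped form
  have hbx : ∀ t ∈ Icc a₁ b₁, (∫ y in a₂..b₂, ∫ z in a₃..b₃,
      dx3 V t y z * eφ (t,y,z) - V t y z * (cx * eφ (t,y,z)))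
      = ∫ y in a₂..b₂, ∫ z in a₃..b₃, G1 (t,y,z) := by
    intro t ht
    refine intervalIntegral.integral_congr fun y hy => ?_
    rw [uIcc_of_le h₂'] at hy
    refine intervalIntegral.integral_congr fun z hz => ?_
    rw [uIcc_of_le h₃'] at hz
    simp only [hG1d, Function.comp_apply, hQid ht hy hz, hdx3 (hK ht hy hz)]
    rfl
  have hby : ∀ t ∈ Icc a₂ b₂, (∫ x in a₁..b₁, ∫ z in a₃..b₃,
      dy3 V x t z * eφ (x,t,z) - V x t z * (cy * eφ (x,t,z)))
      = ∫ x in a₁..b₁, ∫ z in a₃..b₃, G2 (x,t,z) := by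
    intro t ht
    refine intervalIntegral.integral_congr fun x hx => ?_
    rw [uIcc_of_le h₁'] at hx
    refine intervalIntegral.integral_congr fun z hz => ?_
    rw [uIcc_of_le h₃'] at hz
    simp only [hG2d, Function.comp_apply, hQid hx ht hz, hdy3 (hK hx ht hz)]
    rfl
  have hbz : ∀ t ∈ Icc a₃ b₃, (∫ x in a₁..b₁, ∫ y in a₂..b₂,
      dz3 V x y t * eφ (x,y,t) - V x y t * (cz * eφ (x,y,t)))
      = ∫ x in a₁..b₁, ∫ y in a₂..b₂, G3 (x,y,t) := by
    intro t ht
    refine intervalIntegral.integral_congr fun x hx => ?_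
    rw [uIcc_of_le h₁'] at hx
    refine intervalIntegral.integral_congr fun y hy => ?_
    rw [uIcc_of_le h₂'] at hy
    simp only [hG3d, Function.comp_apply, hQid hx hy ht, hdz3 (hK hx hy ht)]
    rfl
  rw [hbx b₁ (right_mem_Icc.mpr h₁'), hbx a₁ (left_mem_Icc.mpr h₁'),
    hby b₂ (right_mem_Icc.mpr h₂'), hby a₂ (left_mem_Icc.mpr h₂'),
    hbz b₃ (right_mem_Icc.mpr h₃'), hbz a₃ (left_mem_Icc.mpr h₃')]
  -- the volume integrand identity
  have hsum : (∫ x in a₁..b₁, ∫ y in a₂..b₂, ∫ z in a₃..b₃,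
      β x y z * Complex.exp (2 * I * ((⟪k - θ, vec3 x y z⟫ : ℝ) : ℂ)))
      = ∫ x in a₁..b₁, ∫ y in a₂..b₂, ∫ z in a₃..b₃,
          (P1 (x,y,z) + P2 (x,y,z) + P3 (x,y,z)) := by
    refine iii_congr h₁' h₂' h₃' ?_
    intro x hx y hy z hz
    have hx' : x ∈ Icc a₁ b₁ := Ioo_subset_Icc_self hx
    have hy' : y ∈ Icc a₂ b₂ := Ioo_subset_Icc_self hy
    have hz' : z ∈ Icc a₃ b₃ := Ioo_subset_Icc_self hz
    have hq : ((x,y,z) : ℝ×ℝ×ℝ) ∈ O := hK hx' hy' hz'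
    have hn : ((θ 0 : ℝ) : ℂ)^2 + ((θ 1 : ℝ) : ℂ)^2 + ((θ 2 : ℝ) : ℂ)^2 = ((‖k‖ : ℝ) : ℂ)^2 := by
      have h := norm_sq3 θ
      rw [hkθ] at h
      exact_mod_cast congrArg (fun r : ℝ => (r : ℂ)) h.symm
    have hcsum : cx^2 + cy^2 + cz^2 = -(4 * ((‖k‖ : ℝ) : ℂ)^2) := by
      simp only [hcxd, hcyd, hczd]
      calc (-2*I*((θ 0:ℝ):ℂ))^2 + (-2*I*((θ 1:ℝ):ℂ))^2 + (-2*I*((θ 2:ℝ):ℂ))^2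
          = (4*I^2) * (((θ 0:ℝ):ℂ)^2 + ((θ 1:ℝ):ℂ)^2 + ((θ 2:ℝ):ℂ)^2) := by ring
        _ = -(4 * ((‖k‖:ℝ):ℂ)^2) := by rw [Complex.I_sq, hn]; ring
    have hb := hHelm x hx y hy z hz
    have hexp : Complex.exp (2 * I * ((⟪k, vec3 x y z⟫ : ℝ) : ℂ)) * eφ (x,y,z)
        = Complex.exp (2 * I * ((⟪k - θ, vec3 x y z⟫ : ℝ) : ℂ)) := by
      simp only [heφd]
      rw [← Complex.exp_add]
      congr 1
      rw [inner_sub_left, inner_vec3 θ]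
      push_cast
      simp only [hcxd, hcyd, hczd]
      ring
    calc β x y z * Complex.exp (2*I*((⟪k - θ, vec3 x y z⟫:ℝ):ℂ))
        = β x y z * Complex.exp (2*I*((⟪k, vec3 x y z⟫:ℝ):ℂ)) * eφ (x,y,z) := by
          rw [mul_assoc (β x y z), hexp]
      _ = (lap3 V x y z + 4 * (‖k‖:ℂ)^2 * V x y z) * eφ (x,y,z) := by rw [hb]
      _ = (Vxx (x,y,z) + Vyy (x,y,z) + Vzz (x,y,z)) * eφ (x,y,z)
            - V x y z * ((cx^2 + cy^2 + cz^2) * eφ (x,y,z)) := by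
          rw [hlap hq, hcsum]; ring
      _ = P1 (x,y,z) + P2 (x,y,z) + P3 (x,y,z) := by
          simp only [hP1d, hP2d, hP3d, Function.comp_apply, hQid hx' hy' hz']
          simp only [hVfd]
          ring
  rw [hsum, iii_add3 hP1c hP2c hP3c]
  -- T3 : z-faces
  have hT3 : (∫ x in a₁..b₁, ∫ y in a₂..b₂, ∫ z in a₃..b₃, P3 (x,y,z))
      = (∫ x in a₁..b₁, ∫ y in a₂..b₂, G3 (x,y,b₃))
        - ∫ x in a₁..b₁, ∫ y in a₂..b₂, G3 (x,y,a₃) := by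
    have step : ∀ x ∈ Icc a₁ b₁, ∀ y ∈ Icc a₂ b₂,
        (∫ z in a₃..b₃, P3 (x,y,z)) = G3 (x,y,b₃) - G3 (x,y,a₃) := by
      intro x hx y hy
      have e1 : (∫ z in a₃..b₃, P3 (x,y,z))
          = ∫ t in a₃..b₃, ((Vzz ∘ Q) (x,y,t) * eφ (x,y,t) - V x y t * (cz^2 * eφ (x,y,t))) := by
        refine intervalIntegral.integral_congr fun t ht => ?_
        rw [uIcc_of_le h₃'] at ht
        simp only [hP3d, Function.comp_apply, hQid hx hy ht]
        rfl
      have hgr := green1d (a := a₃) (b := b₃) h₃'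
        (u := fun t => V x y t) (u' := fun t => dz3 V x y t)
        (u'' := fun t => (Vzz ∘ Q) (x,y,t)) (w := fun t => eφ (x,y,t)) (c := cz)
        (fun t ht => by have h := hdVz (hK hx hy ht); rwa [← hdz3 (hK hx hy ht)] at h)
        (fun t ht => by
          simpa only [Function.comp_apply, hQid hx hy ht] using hdVzz (hK hx hy ht))
        (fun t => hder_z x y t)
        (by
          apply ContinuousOn.intervalIntegrable
          rw [uIcc_of_le h₃']
          have hsl : Continuous fun t : ℝ => ((x,y,t) : ℝ×ℝ×ℝ) := by fun_prop
          have c1 : ContinuousOn (fun t : ℝ => V x y t) (Icc a₃ b₃) :=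
            hVc.comp hsl.continuousOn (fun t ht => hK hx hy ht)
          exact ((((hcomp hVzzc).comp hsl).continuousOn).mul
              ((heφc.comp hsl).continuousOn)).sub
            (c1.mul ((continuous_const.mul (heφc.comp hsl)).continuousOn)))
      rw [e1, hgr]
      have hbm : b₃ ∈ Icc a₃ b₃ := right_mem_Icc.mpr h₃'
      have ham : a₃ ∈ Icc a₃ b₃ := left_mem_Icc.mpr h₃'
      simp only [hG3d, Function.comp_apply, hQid hx hy hbm, hQid hx hy ham,
        hdz3 (hK hx hy hbm), hdz3 (hK hx hy ham)]
      rfl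
    calc (∫ x in a₁..b₁, ∫ y in a₂..b₂, ∫ z in a₃..b₃, P3 (x,y,z))
        = ∫ x in a₁..b₁, ∫ y in a₂..b₂, (G3 (x,y,b₃) - G3 (x,y,a₃)) := by
          refine intervalIntegral.integral_congr fun x hx => ?_
          rw [uIcc_of_le h₁'] at hx
          refine intervalIntegral.integral_congr fun y hy => ?_
          rw [uIcc_of_le h₂'] at hy
          exact step x hx y hy
      _ = _ := by
          have i1 : ∀ x : ℝ, (∫ y in a₂..b₂, (G3 (x,y,b₃) - G3 (x,y,a₃)))
              = (∫ y in a₂..b₂, G3 (x,y,b₃)) - ∫ y in a₂..b₂, G3 (x,y,a₃) := fun x =>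
            intervalIntegral.integral_sub
              ((hG3c.comp (show Continuous fun y : ℝ => ((x,y,b₃) : ℝ×ℝ×ℝ) by fun_prop)).intervalIntegrable _ _)
              ((hG3c.comp (show Continuous fun y : ℝ => ((x,y,a₃) : ℝ×ℝ×ℝ) by fun_prop)).intervalIntegrable _ _)
          simp_rw [i1]
          refine intervalIntegral.integral_sub ?_ ?_
          · exact (intervalIntegral.continuous_parametric_intervalIntegral_of_continuous'
              (f := fun (x : ℝ) y => G3 (x,y,b₃))
              (hG3c.comp (show Continuous fun p : ℝ×ℝ => ((p.1,p.2,b₃) : ℝ×ℝ×ℝ) by fun_prop)) _ _).intervalIntegrable _ _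
          · exact (intervalIntegral.continuous_parametric_intervalIntegral_of_continuous'
              (f := fun (x : ℝ) y => G3 (x,y,a₃))
              (hG3c.comp (show Continuous fun p : ℝ×ℝ => ((p.1,p.2,a₃) : ℝ×ℝ×ℝ) by fun_prop)) _ _).intervalIntegrable _ _
  -- T2 : y-faces
  have hT2 : (∫ x in a₁..b₁, ∫ y in a₂..b₂, ∫ z in a₃..b₃, P2 (x,y,z))
      = (∫ x in a₁..b₁, ∫ z in a₃..b₃, G2 (x,b₂,z))
        - ∫ x in a₁..b₁, ∫ z in a₃..b₃, G2 (x,a₂,z) := by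
    have step : ∀ x ∈ Icc a₁ b₁, ∀ z ∈ Icc a₃ b₃,
        (∫ y in a₂..b₂, P2 (x,y,z)) = G2 (x,b₂,z) - G2 (x,a₂,z) := by
      intro x hx z hz
      have e1 : (∫ y in a₂..b₂, P2 (x,y,z))
          = ∫ t in a₂..b₂, ((Vyy ∘ Q) (x,t,z) * eφ (x,t,z) - V x t z * (cy^2 * eφ (x,t,z))) := by
        refine intervalIntegral.integral_congr fun t ht => ?_
        rw [uIcc_of_le h₂'] at ht
        simp only [hP2d, Function.comp_apply, hQid hx ht hz]
        rfl
      have hgr := green1d (a := a₂) (b := b₂) h₂'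
        (u := fun t => V x t z) (u' := fun t => dy3 V x t z)
        (u'' := fun t => (Vyy ∘ Q) (x,t,z)) (w := fun t => eφ (x,t,z)) (c := cy)
        (fun t ht => by have h := hdVy (hK hx ht hz); rwa [← hdy3 (hK hx ht hz)] at h)
        (fun t ht => by
          simpa only [Function.comp_apply, hQid hx ht hz] using hdVyy (hK hx ht hz))
        (fun t => hder_y x t z)
        (by
          apply ContinuousOn.intervalIntegrable
          rw [uIcc_of_le h₂']
          have hsl : Continuous fun t : ℝ => ((x,t,z) : ℝ×ℝ×ℝ) := by fun_prop
          have c1 : ContinuousOn (fun t : ℝ => V x t z) (Icc a₂ b₂) :=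
            hVc.comp hsl.continuousOn (fun t ht => hK hx ht hz)
          exact ((((hcomp hVyyc).comp hsl).continuousOn).mul
              ((heφc.comp hsl).continuousOn)).sub
            (c1.mul ((continuous_const.mul (heφc.comp hsl)).continuousOn)))
      rw [e1, hgr]
      have hbm : b₂ ∈ Icc a₂ b₂ := right_mem_Icc.mpr h₂'
      have ham : a₂ ∈ Icc a₂ b₂ := left_mem_Icc.mpr h₂'
      simp only [hG2d, Function.comp_apply, hQid hx hbm hz, hQid hx ham hz,
        hdy3 (hK hx hbm hz), hdy3 (hK hx ham hz)]
      rfl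
    have main : ∀ x ∈ Icc a₁ b₁,
        (∫ y in a₂..b₂, ∫ z in a₃..b₃, P2 (x,y,z))
          = (∫ z in a₃..b₃, G2 (x,b₂,z)) - ∫ z in a₃..b₃, G2 (x,a₂,z) := by
      intro x hx
      rw [swap2 (f := fun y z => P2 (x,y,z))
        (hP2c.comp (show Continuous fun p : ℝ×ℝ => ((x,p.1,p.2) : ℝ×ℝ×ℝ) by fun_prop)) h₂' h₃']
      rw [show (∫ z in a₃..b₃, ∫ y in a₂..b₂, P2 (x,y,z))
          = ∫ z in a₃..b₃, (G2 (x,b₂,z) - G2 (x,a₂,z)) from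
        intervalIntegral.integral_congr fun z hz => by
          rw [uIcc_of_le h₃'] at hz; exact step x hx z hz]
      exact intervalIntegral.integral_sub
        ((hG2c.comp (show Continuous fun z : ℝ => ((x,b₂,z) : ℝ×ℝ×ℝ) by fun_prop)).intervalIntegrable _ _)
        ((hG2c.comp (show Continuous fun z : ℝ => ((x,a₂,z) : ℝ×ℝ×ℝ) by fun_prop)).intervalIntegrable _ _)
    calc (∫ x in a₁..b₁, ∫ y in a₂..b₂, ∫ z in a₃..b₃, P2 (x,y,z))
        = ∫ x in a₁..b₁, ((∫ z in a₃..b₃, G2 (x,b₂,z)) - ∫ z in a₃..b₃, G2 (x,a₂,z)) := by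
          refine intervalIntegral.integral_congr fun x hx => ?_
          rw [uIcc_of_le h₁'] at hx
          exact main x hx
      _ = _ := by
          refine intervalIntegral.integral_sub ?_ ?_
          · exact (intervalIntegral.continuous_parametric_intervalIntegral_of_continuous'
              (f := fun (x : ℝ) z => G2 (x,b₂,z))
              (hG2c.comp (show Continuous fun p : ℝ×ℝ => ((p.1,b₂,p.2) : ℝ×ℝ×ℝ) by fun_prop)) _ _).intervalIntegrable _ _
          · exact (intervalIntegral.continuous_parametric_intervalIntegral_of_continuous'
              (f := fun (x : ℝ) z => G2 (x,a₂,z))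
              (hG2c.comp (show Continuous fun p : ℝ×ℝ => ((p.1,a₂,p.2) : ℝ×ℝ×ℝ) by fun_prop)) _ _).intervalIntegrable _ _
  -- T1 : x-faces
  have hT1 : (∫ x in a₁..b₁, ∫ y in a₂..b₂, ∫ z in a₃..b₃, P1 (x,y,z))
      = (∫ y in a₂..b₂, ∫ z in a₃..b₃, G1 (b₁,y,z))
        - ∫ y in a₂..b₂, ∫ z in a₃..b₃, G1 (a₁,y,z) := by
    have step : ∀ y ∈ Icc a₂ b₂, ∀ z ∈ Icc a₃ b₃,
        (∫ x in a₁..b₁, P1 (x,y,z)) = G1 (b₁,y,z) - G1 (a₁,y,z) := by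
      intro y hy z hz
      have e1 : (∫ x in a₁..b₁, P1 (x,y,z))
          = ∫ t in a₁..b₁, ((Vxx ∘ Q) (t,y,z) * eφ (t,y,z) - V t y z * (cx^2 * eφ (t,y,z))) := by
        refine intervalIntegral.integral_congr fun t ht => ?_
        rw [uIcc_of_le h₁'] at ht
        simp only [hP1d, Function.comp_apply, hQid ht hy hz]
        rfl
      have hgr := green1d (a := a₁) (b := b₁) h₁'
        (u := fun t => V t y z) (u' := fun t => dx3 V t y z)
        (u'' := fun t => (Vxx ∘ Q) (t,y,z)) (w := fun t => eφ (t,y,z)) (c := cx)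
        (fun t ht => by have h := hdVx (hK ht hy hz); rwa [← hdx3 (hK ht hy hz)] at h)
        (fun t ht => by
          simpa only [Function.comp_apply, hQid ht hy hz] using hdVxx (hK ht hy hz))
        (fun t => hder_x t y z)
        (by
          apply ContinuousOn.intervalIntegrable
          rw [uIcc_of_le h₁']
          have hsl : Continuous fun t : ℝ => ((t,y,z) : ℝ×ℝ×ℝ) := by fun_prop
          have c1 : ContinuousOn (fun t : ℝ => V t y z) (Icc a₁ b₁) :=
            hVc.comp hsl.continuousOn (fun t ht => hK ht hy hz)
          exact ((((hcomp hVxxc).comp hsl).continuousOn).mul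
              ((heφc.comp hsl).continuousOn)).sub
            (c1.mul ((continuous_const.mul (heφc.comp hsl)).continuousOn)))
      rw [e1, hgr]
      have hbm : b₁ ∈ Icc a₁ b₁ := right_mem_Icc.mpr h₁'
      have ham : a₁ ∈ Icc a₁ b₁ := left_mem_Icc.mpr h₁'
      simp only [hG1d, Function.comp_apply, hQid hbm hy hz, hQid ham hy hz,
        hdx3 (hK hbm hy hz), hdx3 (hK ham hy hz)]
      rfl
    have main : ∀ y ∈ Icc a₂ b₂,
        (∫ x in a₁..b₁, ∫ z in a₃..b₃, P1 (x,y,z))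
          = (∫ z in a₃..b₃, G1 (b₁,y,z)) - ∫ z in a₃..b₃, G1 (a₁,y,z) := by
      intro y hy
      rw [swap2 (f := fun x z => P1 (x,y,z))
        (hP1c.comp (show Continuous fun p : ℝ×ℝ => ((p.1,y,p.2) : ℝ×ℝ×ℝ) by fun_prop)) h₁' h₃']
      rw [show (∫ z in a₃..b₃, ∫ x in a₁..b₁, P1 (x,y,z))
          = ∫ z in a₃..b₃, (G1 (b₁,y,z) - G1 (a₁,y,z)) from
        intervalIntegral.integral_congr fun z hz => by
          rw [uIcc_of_le h₃'] at hz; exact step y hy z hz]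
      exact intervalIntegral.integral_sub
        ((hG1c.comp (show Continuous fun z : ℝ => ((b₁,y,z) : ℝ×ℝ×ℝ) by fun_prop)).intervalIntegrable _ _)
        ((hG1c.comp (show Continuous fun z : ℝ => ((a₁,y,z) : ℝ×ℝ×ℝ) by fun_prop)).intervalIntegrable _ _)
    calc (∫ x in a₁..b₁, ∫ y in a₂..b₂, ∫ z in a₃..b₃, P1 (x,y,z))
        = ∫ y in a₂..b₂, ((∫ z in a₃..b₃, G1 (b₁,y,z)) - ∫ z in a₃..b₃, G1 (a₁,y,z)) := by
          rw [swap2 (f := fun x y => ∫ z in a₃..b₃, P1 (x,y,z)) (cont_inner2 hP1c a₃ b₃) h₁' h₂']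
          refine intervalIntegral.integral_congr fun y hy => ?_
          rw [uIcc_of_le h₂'] at hy
          exact main y hy
      _ = _ := by
          refine intervalIntegral.integral_sub ?_ ?_
          · exact (intervalIntegral.continuous_parametric_intervalIntegral_of_continuous'
              (f := fun (y : ℝ) z => G1 (b₁,y,z))
              (hG1c.comp (show Continuous fun p : ℝ×ℝ => ((b₁,p.1,p.2) : ℝ×ℝ×ℝ) by fun_prop)) _ _).intervalIntegrable _ _
          · exact (intervalIntegral.continuous_parametric_intervalIntegral_of_continuous'
              (f := fun (y : ℝ) z => G1 (a₁,y,z))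
              (hG1c.comp (show Continuous fun p : ℝ×ℝ => ((a₁,p.1,p.2) : ℝ×ℝ×ℝ) by fun_prop)) _ _).intervalIntegrable _ _
  rw [hT1, hT2, hT3]
end

section
/- Let k be a nonzero real number, L > 0, and set R := [−L/2, L/2] × [−L/2, L/2] ⊂ ℝ². Let β : ℝ² → ℂ be continuous, and let v, φ : ℝ² → ℂ be twice continuously differentiable on a neighborhood of R and satisfy: (i) ∂ₓv + (1/(4ik))·∂²_y v = β on R; (ii) ∂ₓφ + (1/(4ik))·∂²_y φ = 0 on R; (iii) v(−L/2, y) = 0 for all y ∈ [−L/2, L/2]; (iv) v(x, ±L/2) = 0 and φ(x, ±L/2) = 0 for all x ∈ [−L/2, L/2]. Then ∫_{−L/2}^{L/2} v(L/2, y) · conj(φ(L/2, y)) dy = ∫_{−L/2}^{L/2} ∫_{−L/2}^{L/2} β(x,y) · conj(φ(x,y)) dy dx. -/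
open Set Complex intervalIntegral

/-- Partial derivative in the first variable of g : ℝ² → ℂ. -/
noncomputable def dX (g : ℝ → ℝ → ℂ) (x y : ℝ) : ℂ :=
  deriv (fun s => g s y) x

/-- Second partial derivative in the second variable of g : ℝ² → ℂ. -/
noncomputable def dYY (g : ℝ → ℝ → ℂ) (x y : ℝ) : ℂ :=
  deriv (fun s => deriv (fun s' => g x s') s) y

section helpers

variable {E : Type*} [NormedAddCommGroup E] [NormedSpace ℝ E]

lemma hasDerivAt_fst' {V : ℝ × ℝ → E} {O : Set (ℝ × ℝ)} (hO : IsOpen O)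
    (hV : ContDiffOn ℝ 2 V O) {x y : ℝ} (hq : (x, y) ∈ O) :
    HasDerivAt (fun s => V (s, y)) (fderiv ℝ V (x, y) (1, 0)) x := by
  have hd : DifferentiableAt ℝ V (x, y) :=
    (hV.differentiableOn (by norm_num)).differentiableAt (hO.mem_nhds hq)
  have hl : HasDerivAt (fun s : ℝ => (s, y)) ((1 : ℝ), (0 : ℝ)) x :=
    (hasDerivAt_id x).prodMk (hasDerivAt_const x y)
  exact hd.hasFDerivAt.comp_hasDerivAt x hl

lemma hasDerivAt_snd' {V : ℝ × ℝ → E} {O : Set (ℝ × ℝ)} (hO : IsOpen O)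
    (hV : ContDiffOn ℝ 2 V O) {x y : ℝ} (hq : (x, y) ∈ O) :
    HasDerivAt (fun t => V (x, t)) (fderiv ℝ V (x, y) (0, 1)) y := by
  have hd : DifferentiableAt ℝ V (x, y) :=
    (hV.differentiableOn (by norm_num)).differentiableAt (hO.mem_nhds hq)
  have hl : HasDerivAt (fun t : ℝ => (x, t)) ((0 : ℝ), (1 : ℝ)) y :=
    (hasDerivAt_const y x).prodMk (hasDerivAt_id y)
  exact hd.hasFDerivAt.comp_hasDerivAt y hl

lemma hasDerivAt_snd_snd' {V : ℝ × ℝ → E} {O : Set (ℝ × ℝ)} (hO : IsOpen O)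
    (hV : ContDiffOn ℝ 2 V O) {x y : ℝ} (hq : (x, y) ∈ O) :
    HasDerivAt (fun t => fderiv ℝ V (x, t) (0, 1))
      ((fderiv ℝ (fderiv ℝ V) (x, y) (0, 1)) (0, 1)) y := by
  have hW : ContDiffOn ℝ 1 (fderiv ℝ V) O := hV.fderiv_of_isOpen hO (by norm_num)
  have hd : DifferentiableAt ℝ (fderiv ℝ V) (x, y) :=
    (hW.differentiableOn one_ne_zero).differentiableAt (hO.mem_nhds hq)
  have hl : HasDerivAt (fun t : ℝ => (x, t)) ((0 : ℝ), (1 : ℝ)) y :=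
    (hasDerivAt_const y x).prodMk (hasDerivAt_id y)
  have h1 : HasDerivAt (fun t => fderiv ℝ V (x, t))
      ((fderiv ℝ (fderiv ℝ V) (x, y)) (0, 1)) y :=
    hd.hasFDerivAt.comp_hasDerivAt y hl
  exact (ContinuousLinearMap.apply ℝ E ((0:ℝ), (1:ℝ))).hasFDerivAt.comp_hasDerivAt y h1

lemma HasDerivAt.conj' {f : ℝ → ℂ} {f' : ℂ} {x : ℝ} (hf : HasDerivAt f f' x) :
    HasDerivAt (fun t => (starRingEnd ℂ) (f t)) ((starRingEnd ℂ) f') x := by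
  have := (Complex.conjCLE.toContinuousLinearMap.hasFDerivAt (x := f x)).comp_hasDerivAt x hf
  exact this

lemma dX_eq' {v : ℝ → ℝ → ℂ} {O : Set (ℝ × ℝ)} (hO : IsOpen O)
    (hV : ContDiffOn ℝ 2 (fun q : ℝ × ℝ => v q.1 q.2) O) {x y : ℝ} (hq : (x, y) ∈ O) :
    dX v x y = fderiv ℝ (fun q : ℝ × ℝ => v q.1 q.2) (x, y) (1, 0) :=
  (hasDerivAt_fst' hO hV hq).deriv

lemma dYY_eq' {v : ℝ → ℝ → ℂ} {O : Set (ℝ × ℝ)} (hO : IsOpen O)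
    (hV : ContDiffOn ℝ 2 (fun q : ℝ × ℝ => v q.1 q.2) O) {x y : ℝ} (hq : (x, y) ∈ O) :
    dYY v x y = (fderiv ℝ (fderiv ℝ (fun q : ℝ × ℝ => v q.1 q.2)) (x, y) (0, 1)) (0, 1) := by
  have hopen : IsOpen {t : ℝ | (x, t) ∈ O} := hO.preimage (by fun_prop)
  have hev : (fun t => deriv (fun t' => v x t') t) =ᶠ[nhds y]
      (fun t => fderiv ℝ (fun q : ℝ × ℝ => v q.1 q.2) (x, t) (0, 1)) := by
    filter_upwards [hopen.mem_nhds hq] with t ht using (hasDerivAt_snd' hO hV ht).deriv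
  rw [dYY, hev.deriv_eq]
  exact (hasDerivAt_snd_snd' hO hV hq).deriv

end helpers

/-- adjoint identity for the one-way (paraxial) wave equation on the
square R = [−L/2, L/2]²:  if ∂ₓv + (1/(4ik))∂²_y v = β and ∂ₓφ + (1/(4ik))∂²_y φ = 0
on R, with v vanishing on the inflow side and v, φ vanishing on the lateral sides, then
∫ v(L/2,y) conj(φ(L/2,y)) dy = ∫∫ β conj(φ) dy dx. -/
theorem stmt_13 (k : ℝ) (hk : k ≠ 0) (L : ℝ) (hL : 0 < L)
    (β : ℝ → ℝ → ℂ)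
    (hβ_cont : Continuous fun q : ℝ × ℝ => β q.1 q.2)
    (v φ : ℝ → ℝ → ℂ)
    -- v and φ are C² on a neighborhood of R
    (hv : ∃ O : Set (ℝ × ℝ), IsOpen O ∧
      Icc (-L / 2) (L / 2) ×ˢ Icc (-L / 2) (L / 2) ⊆ O ∧
      ContDiffOn ℝ 2 (fun q : ℝ × ℝ => v q.1 q.2) O)
    (hφ : ∃ O : Set (ℝ × ℝ), IsOpen O ∧
      Icc (-L / 2) (L / 2) ×ˢ Icc (-L / 2) (L / 2) ⊆ O ∧
      ContDiffOn ℝ 2 (fun q : ℝ × ℝ => φ q.1 q.2) O)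
    -- (i) the forward equation for v on R
    (hi : ∀ x ∈ Icc (-L / 2) (L / 2), ∀ y ∈ Icc (-L / 2) (L / 2),
      dX v x y + 1 / (4 * I * k) * dYY v x y = β x y)
    -- (ii) the homogeneous equation for φ on R
    (hii : ∀ x ∈ Icc (-L / 2) (L / 2), ∀ y ∈ Icc (-L / 2) (L / 2),
      dX φ x y + 1 / (4 * I * k) * dYY φ x y = 0)
    -- (iii) v vanishes on the inflow side x = −L/2
    (hiii : ∀ y ∈ Icc (-L / 2) (L / 2), v (-L / 2) y = 0)
    -- (iv) v and φ vanish on the lateral sides y = ±L/2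
    (hiv : ∀ x ∈ Icc (-L / 2) (L / 2),
      v x (L / 2) = 0 ∧ v x (-L / 2) = 0 ∧ φ x (L / 2) = 0 ∧ φ x (-L / 2) = 0) :
    (∫ y in (-L / 2)..(L / 2), v (L / 2) y * (starRingEnd ℂ) (φ (L / 2) y))
      = ∫ x in (-L / 2)..(L / 2), ∫ y in (-L / 2)..(L / 2),
          β x y * (starRingEnd ℂ) (φ x y) := by
  obtain ⟨O₁, hO₁, hRO₁, hv2⟩ := hv
  obtain ⟨O₂, hO₂, hRO₂, hφ2⟩ := hφ
  set a : ℝ := -L / 2 with ha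
  set b : ℝ := L / 2 with hb
  have hab : a < b := by simp only [ha, hb]; linarith
  have huIcc : uIcc a b = Icc a b := uIcc_of_le hab.le
  set V : ℝ × ℝ → ℂ := fun q => v q.1 q.2 with hVdef
  set Φ : ℝ × ℝ → ℂ := fun q => φ q.1 q.2 with hΦdef
  set O : Set (ℝ × ℝ) := O₁ ∩ O₂ with hOdef
  have hO : IsOpen O := hO₁.inter hO₂
  have hRO : Icc a b ×ˢ Icc a b ⊆ O := subset_inter hRO₁ hRO₂
  have hV2 : ContDiffOn ℝ 2 V O := hv2.mono inter_subset_left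
  have hΦ2 : ContDiffOn ℝ 2 Φ O := hφ2.mono inter_subset_right
  have memO : ∀ {x y : ℝ}, x ∈ Icc a b → y ∈ Icc a b → (x, y) ∈ O := fun hx hy =>
    hRO (mk_mem_prod hx hy)
  have haI : a ∈ Icc a b := left_mem_Icc.2 hab.le
  have hbI : b ∈ Icc a b := right_mem_Icc.2 hab.le
  -- the constant
  set c : ℂ := 1 / (4 * I * k) with hc
  have hcconj : (starRingEnd ℂ) c = -c := by
    have h4 : (4 * I * (k:ℂ)) ≠ 0 := by
      simp [I_ne_zero, hk]
    rw [hc, map_div₀]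
    simp only [map_one, map_mul, conj_I, map_ofNat, conj_ofReal]
    field_simp
  -- partial derivatives
  set pxV : ℝ × ℝ → ℂ := fun q => fderiv ℝ V q (1, 0) with hpxV
  set pyV : ℝ × ℝ → ℂ := fun q => fderiv ℝ V q (0, 1) with hpyV
  set pyyV : ℝ × ℝ → ℂ := fun q => (fderiv ℝ (fderiv ℝ V) q (0, 1)) (0, 1) with hpyyV
  set pxΦ : ℝ × ℝ → ℂ := fun q => fderiv ℝ Φ q (1, 0) with hpxΦ
  set pyΦ : ℝ × ℝ → ℂ := fun q => fderiv ℝ Φ q (0, 1) with hpyΦ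
  set pyyΦ : ℝ × ℝ → ℂ := fun q => (fderiv ℝ (fderiv ℝ Φ) q (0, 1)) (0, 1) with hpyyΦ
  -- continuity facts on O
  have cV : ContinuousOn V O := hV2.continuousOn
  have cΦ : ContinuousOn Φ O := hΦ2.continuousOn
  have cfdV : ContinuousOn (fderiv ℝ V) O := hV2.continuousOn_fderiv_of_isOpen hO (by norm_num)
  have cfdΦ : ContinuousOn (fderiv ℝ Φ) O := hΦ2.continuousOn_fderiv_of_isOpen hO (by norm_num)
  have cfd2V : ContinuousOn (fderiv ℝ (fderiv ℝ V)) O :=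
    (hV2.fderiv_of_isOpen hO (by norm_num)).continuousOn_fderiv_of_isOpen hO le_rfl
  have cfd2Φ : ContinuousOn (fderiv ℝ (fderiv ℝ Φ)) O :=
    (hΦ2.fderiv_of_isOpen hO (by norm_num)).continuousOn_fderiv_of_isOpen hO le_rfl
  have cpxV : ContinuousOn pxV O :=
    ((ContinuousLinearMap.apply ℝ ℂ ((1:ℝ),(0:ℝ))).continuous.comp_continuousOn cfdV)
  have cpyV : ContinuousOn pyV O :=
    ((ContinuousLinearMap.apply ℝ ℂ ((0:ℝ),(1:ℝ))).continuous.comp_continuousOn cfdV)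
  have cpxΦ : ContinuousOn pxΦ O :=
    ((ContinuousLinearMap.apply ℝ ℂ ((1:ℝ),(0:ℝ))).continuous.comp_continuousOn cfdΦ)
  have cpyΦ : ContinuousOn pyΦ O :=
    ((ContinuousLinearMap.apply ℝ ℂ ((0:ℝ),(1:ℝ))).continuous.comp_continuousOn cfdΦ)
  have cpyyV : ContinuousOn pyyV O := by
    have := ((ContinuousLinearMap.apply ℝ (ℝ × ℝ →L[ℝ] ℂ) ((0:ℝ),(1:ℝ))).continuous.comp_continuousOn cfd2V)
    exact ((ContinuousLinearMap.apply ℝ ℂ ((0:ℝ),(1:ℝ))).continuous.comp_continuousOn this)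
  have cpyyΦ : ContinuousOn pyyΦ O := by
    have := ((ContinuousLinearMap.apply ℝ (ℝ × ℝ →L[ℝ] ℂ) ((0:ℝ),(1:ℝ))).continuous.comp_continuousOn cfd2Φ)
    exact ((ContinuousLinearMap.apply ℝ ℂ ((0:ℝ),(1:ℝ))).continuous.comp_continuousOn this)
  have cconj : Continuous (starRingEnd ℂ) := continuous_conj
  -- vertical line continuity helper
  have hline : ∀ x₀ : ℝ, ContinuousOn (fun t : ℝ => (x₀, t)) (Icc a b) :=
    fun x₀ => (continuous_const.prodMk continuous_id).continuousOn
  have hmaps : ∀ x₀ ∈ Icc a b, MapsTo (fun t : ℝ => (x₀, t)) (Icc a b) O :=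
    fun x₀ hx₀ t ht => memO hx₀ ht
  -- thickening
  obtain ⟨δ, hδpos, hKO⟩ :=
    (isCompact_Icc.prod isCompact_Icc).exists_cthickening_subset_open hO hRO
  set K : Set (ℝ × ℝ) := Metric.cthickening δ (Icc a b ×ˢ Icc a b) with hKdef
  have hK : IsCompact K := (isCompact_Icc.prod isCompact_Icc).cthickening
  have hballK : ∀ x₀ ∈ Icc a b, ∀ x ∈ Metric.ball x₀ δ, ∀ t ∈ Icc a b, (x, t) ∈ K := by
    intro x₀ hx₀ x hx t ht
    apply Metric.mem_cthickening_of_dist_le (x, t) (x₀, t) δ _ (mk_mem_prod hx₀ ht)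
    rw [Prod.dist_eq]
    simp only [dist_self]
    rw [max_eq_left dist_nonneg]
    exact (Metric.mem_ball.1 hx).le
  have hballO : ∀ x₀ ∈ Icc a b, ∀ x ∈ Metric.ball x₀ δ, ∀ t ∈ Icc a b, (x, t) ∈ O :=
    fun x₀ hx₀ x hx t ht => hKO (hballK x₀ hx₀ x hx t ht)
  -- clamping
  set cl : ℝ → ℝ := fun s => max a (min b s) with hcl
  have hcl_mem : ∀ s, cl s ∈ Icc a b := fun s =>
    ⟨le_max_left _ _, max_le hab.le (min_le_left _ _)⟩
  have hcl_eq : ∀ s ∈ Icc a b, cl s = s := by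
    intro s hs
    simp only [hcl]
    rw [min_eq_right hs.2, max_eq_right hs.1]
  have hcl_cont : Continuous cl := continuous_const.max (continuous_const.min continuous_id)
  -- the functions
  set F : ℝ → ℂ := fun x => ∫ t in a..b, v x t * (starRingEnd ℂ) (φ x t) with hF
  set F' : ℝ → ℝ → ℂ := fun x t =>
    pxV (x, t) * (starRingEnd ℂ) (φ x t) + v x t * (starRingEnd ℂ) (pxΦ (x, t)) with hF'
  set G : ℝ → ℂ := fun x => ∫ t in a..b,
    β (cl x) (cl t) * (starRingEnd ℂ) (φ (cl x) (cl t)) with hG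
  -- continuity of G
  have hclpair : Continuous (fun p : ℝ × ℝ => ((cl p.1, cl p.2) : ℝ × ℝ)) :=
    (hcl_cont.comp continuous_fst).prodMk (hcl_cont.comp continuous_snd)
  have hGcont : Continuous G := by
    apply intervalIntegral.continuous_parametric_intervalIntegral_of_continuous'
      (f := fun x t => β (cl x) (cl t) * (starRingEnd ℂ) (φ (cl x) (cl t)))
    have h1 : Continuous fun p : ℝ × ℝ => β (cl p.1) (cl p.2) :=
      hβ_cont.comp hclpair
    have h2 : Continuous fun p : ℝ × ℝ => Φ (cl p.1, cl p.2) :=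
      cΦ.comp_continuous hclpair (fun p => memO (hcl_mem _) (hcl_mem _))
    exact h1.mul (continuous_conj.comp h2)
  have hIoc : Set.uIoc a b ⊆ Icc a b := Set.uIoc_subset_uIcc.trans huIcc.subset
  -- continuity along vertical lines
  have hCO : ∀ (f : ℝ × ℝ → ℂ), ContinuousOn f O → ∀ x₀ : ℝ,
      MapsTo (fun t : ℝ => ((x₀, t) : ℝ × ℝ)) (Icc a b) O →
      ContinuousOn (fun t => f (x₀, t)) (Icc a b) :=
    fun f hf x₀ hm => hf.comp (hline x₀) hm
  -- integrability of the integration-by-parts integrand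
  have hPI : ∀ x₀ ∈ Icc a b, IntervalIntegrable
      (fun t => pyyV (x₀, t) * (starRingEnd ℂ) (φ x₀ t)
        - v x₀ t * (starRingEnd ℂ) (pyyΦ (x₀, t))) MeasureTheory.volume a b := by
    intro x₀ hx₀
    apply ContinuousOn.intervalIntegrable
    rw [huIcc]
    exact ((hCO pyyV cpyyV x₀ (hmaps x₀ hx₀)).mul
        (cconj.comp_continuousOn (hCO Φ cΦ x₀ (hmaps x₀ hx₀)))).sub
      ((hCO V cV x₀ (hmaps x₀ hx₀)).mul
        (cconj.comp_continuousOn (hCO pyyΦ cpyyΦ x₀ (hmaps x₀ hx₀))))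
  -- integration by parts in y
  have parts : ∀ x₀ ∈ Icc a b,
      (∫ t in a..b, (pyyV (x₀, t) * (starRingEnd ℂ) (φ x₀ t)
        - v x₀ t * (starRingEnd ℂ) (pyyΦ (x₀, t)))) = 0 := by
    intro x₀ hx₀
    have hg : ∀ t ∈ uIcc a b, HasDerivAt
        (fun t => pyV (x₀, t) * (starRingEnd ℂ) (φ x₀ t)
          - v x₀ t * (starRingEnd ℂ) (pyΦ (x₀, t)))
        (pyyV (x₀, t) * (starRingEnd ℂ) (φ x₀ t)
          - v x₀ t * (starRingEnd ℂ) (pyyΦ (x₀, t))) t := by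
      intro t ht
      rw [huIcc] at ht
      have hqO : (x₀, t) ∈ O := memO hx₀ ht
      have h1 : HasDerivAt (fun t' => v x₀ t') (pyV (x₀, t)) t := hasDerivAt_snd' hO hV2 hqO
      have h2 : HasDerivAt (fun t' => (starRingEnd ℂ) (φ x₀ t'))
          ((starRingEnd ℂ) (pyΦ (x₀, t))) t := (hasDerivAt_snd' hO hΦ2 hqO).conj'
      have h3 : HasDerivAt (fun t' => pyV (x₀, t')) (pyyV (x₀, t)) t :=
        hasDerivAt_snd_snd' hO hV2 hqO
      have h4 : HasDerivAt (fun t' => (starRingEnd ℂ) (pyΦ (x₀, t')))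
          ((starRingEnd ℂ) (pyyΦ (x₀, t))) t := (hasDerivAt_snd_snd' hO hΦ2 hqO).conj'
      have h5 := (h3.mul h2).sub (h1.mul h4)
      convert h5 using 1
      · rfl
      · rfl
      · ring
    have h6 := intervalIntegral.integral_eq_sub_of_hasDerivAt hg (hPI x₀ hx₀)
    rw [h6]
    obtain ⟨hb1, hb2, hb3, hb4⟩ := hiv x₀ hx₀
    simp only [hb1, hb2, hb3, hb4]
    simp
  -- the pde rewrite of F'
  have hpde : ∀ x₀ ∈ Icc a b, ∀ t ∈ Icc a b,
      F' x₀ t = β x₀ t * (starRingEnd ℂ) (φ x₀ t)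
        - c * (pyyV (x₀, t) * (starRingEnd ℂ) (φ x₀ t)
          - v x₀ t * (starRingEnd ℂ) (pyyΦ (x₀, t))) := by
    intro x₀ hx₀ t ht
    have hqO : (x₀, t) ∈ O := memO hx₀ ht
    have e1 : pxV (x₀, t) + c * pyyV (x₀, t) = β x₀ t := by
      have h := hi x₀ hx₀ t ht
      rw [dX_eq' hO hV2 hqO, dYY_eq' hO hV2 hqO] at h
      exact h
    have e2 : pxΦ (x₀, t) + c * pyyΦ (x₀, t) = 0 := by
      have h := hii x₀ hx₀ t ht
      rw [dX_eq' hO hΦ2 hqO, dYY_eq' hO hΦ2 hqO] at h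
      exact h
    have e1' : pxV (x₀, t) = β x₀ t - c * pyyV (x₀, t) := by linear_combination e1
    have e2' : pxΦ (x₀, t) = -(c * pyyΦ (x₀, t)) := by linear_combination e2
    show pxV (x₀, t) * (starRingEnd ℂ) (φ x₀ t)
        + v x₀ t * (starRingEnd ℂ) (pxΦ (x₀, t)) = _
    rw [e1', e2', map_neg, map_mul, hcconj]
    ring
  -- bound for the x-derivative on K
  obtain ⟨C, hC⟩ := hK.exists_bound_of_continuousOn
    (f := fun q : ℝ × ℝ => pxV q * (starRingEnd ℂ) (Φ q) + V q * (starRingEnd ℂ) (pxΦ q))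
    (((cpxV.mul (cconj.comp_continuousOn cΦ)).add
      (cV.mul (cconj.comp_continuousOn cpxΦ))).mono hKO)
  -- the main derivative claim
  have keyderiv : ∀ x₀ ∈ Icc a b, HasDerivAt F (G x₀) x₀ := by
    intro x₀ hx₀
    -- value of the derivative integral
    have hβφint : IntervalIntegrable (fun t => β x₀ t * (starRingEnd ℂ) (φ x₀ t))
        MeasureTheory.volume a b := by
      apply ContinuousOn.intervalIntegrable
      rw [huIcc]
      exact ((hβ_cont.comp (continuous_const.prodMk continuous_id)).continuousOn).mul
        (cconj.comp_continuousOn (hCO Φ cΦ x₀ (hmaps x₀ hx₀)))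
    have hIF' : (∫ t in a..b, F' x₀ t) = G x₀ := by
      rw [intervalIntegral.integral_congr (g := fun t => β x₀ t * (starRingEnd ℂ) (φ x₀ t)
        - c * (pyyV (x₀, t) * (starRingEnd ℂ) (φ x₀ t)
          - v x₀ t * (starRingEnd ℂ) (pyyΦ (x₀, t))))
        (fun t ht => hpde x₀ hx₀ t (huIcc ▸ ht))]
      rw [intervalIntegral.integral_sub hβφint ((hPI x₀ hx₀).const_mul c),
        intervalIntegral.integral_const_mul, parts x₀ hx₀, mul_zero, sub_zero]
      apply intervalIntegral.integral_congr
      intro t ht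
      rw [huIcc] at ht
      simp only [hcl_eq x₀ hx₀, hcl_eq t ht]
    -- dominated differentiation under the integral sign
    have hmain := (intervalIntegral.hasDerivAt_integral_of_dominated_loc_of_deriv_le
      (F := fun x t => v x t * (starRingEnd ℂ) (φ x t)) (F' := F') (x₀ := x₀)
      (bound := fun _ => C) (a := a) (b := b) (μ := MeasureTheory.volume) (Metric.ball_mem_nhds x₀ hδpos)
      ?meas ?int ?meas' ?bdd ?bint ?diff).2
    case meas =>
      filter_upwards [Metric.ball_mem_nhds x₀ hδpos] with x hx
      have hm : MapsTo (fun t : ℝ => ((x, t) : ℝ × ℝ)) (Icc a b) O :=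
        fun t ht => hballO x₀ hx₀ x hx t ht
      exact (((hCO V cV x hm).mul
        (cconj.comp_continuousOn (hCO Φ cΦ x hm))).mono hIoc).aestronglyMeasurable
        measurableSet_uIoc
    case int =>
      apply ContinuousOn.intervalIntegrable
      rw [huIcc]
      exact (hCO V cV x₀ (hmaps x₀ hx₀)).mul
        (cconj.comp_continuousOn (hCO Φ cΦ x₀ (hmaps x₀ hx₀)))
    case meas' =>
      have hm := hmaps x₀ hx₀
      exact ((((hCO pxV cpxV x₀ hm).mul
        (cconj.comp_continuousOn (hCO Φ cΦ x₀ hm))).add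
        ((hCO V cV x₀ hm).mul
          (cconj.comp_continuousOn (hCO pxΦ cpxΦ x₀ hm)))).mono hIoc).aestronglyMeasurable
        measurableSet_uIoc
    case bdd =>
      apply MeasureTheory.ae_of_all
      intro t ht x hx
      exact hC (x, t) (hballK x₀ hx₀ x hx t (hIoc ht))
    case bint => exact intervalIntegrable_const
    case diff =>
      apply MeasureTheory.ae_of_all
      intro t ht x hx
      have hqO : (x, t) ∈ O := hballO x₀ hx₀ x hx t (hIoc ht)
      exact (hasDerivAt_fst' hO hV2 hqO).mul ((hasDerivAt_fst' hO hΦ2 hqO).conj')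
    rw [hIF'] at hmain
    exact hmain
  -- endpoint values and conclusion
  have hFa : F a = 0 := by
    have : (∫ t in a..b, v a t * (starRingEnd ℂ) (φ a t))
        = ∫ t in a..b, (0 : ℂ) := by
      apply intervalIntegral.integral_congr
      intro t ht
      rw [huIcc] at ht
      simp [hiii t ht]
    simp only [hF, this, intervalIntegral.integral_zero]
  have hFTC : (∫ x in a..b, G x) = F b - F a :=
    intervalIntegral.integral_eq_sub_of_hasDerivAt
      (fun x hx => keyderiv x (huIcc ▸ hx)) (hGcont.intervalIntegrable a b)
  calc (∫ y in a..b, v b y * (starRingEnd ℂ) (φ b y)) = F b := rfl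
    _ = F b - F a := by rw [hFa, sub_zero]
    _ = ∫ x in a..b, G x := hFTC.symm
    _ = ∫ x in a..b, ∫ t in a..b, β x t * (starRingEnd ℂ) (φ x t) := by
        apply intervalIntegral.integral_congr
        intro x hx
        rw [huIcc] at hx
        apply intervalIntegral.integral_congr
        intro t ht
        rw [huIcc] at ht
        simp only [hcl_eq x hx, hcl_eq t ht]
end

section
/- Let f : ℝ³ → ℝ be continuous with compact support. If for every point x ∈ ℝ³ and every unit vector v ∈ ℝ³ the line integral ∫_ℝ f(x + t·v) dt equals zero, then f is identically zero. (Injectivity of the X-ray transform on compactly supported continuous functions on ℝ³.) -/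
open MeasureTheory
open scoped RealInnerProductSpace

/-- injectivity of the X-ray transform on continuous compactly supported
functions on ℝ³: if all line integrals of f vanish, then f ≡ 0. -/
theorem stmt_14 (f : EuclideanSpace ℝ (Fin 3) → ℝ)
    (hf : Continuous f) (hsupp : HasCompactSupport f)
    (h : ∀ (x v : EuclideanSpace ℝ (Fin 3)), ‖v‖ = 1 →
      (∫ t : ℝ, f (x + t • v)) = 0) :
    f = 0 := by
  classical
  set g : EuclideanSpace ℝ (Fin 3) → ℂ := fun x => (f x : ℂ) with hgdef
  have hgc : Continuous g := Complex.continuous_ofReal.comp hf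
  have hgsupp : HasCompactSupport g := hsupp.comp_left (g := fun r : ℝ => (r : ℂ)) (by simp)
  have hgi : Integrable g := hgc.integrable_of_hasCompactSupport hgsupp
  have key : FourierTransform.fourier g = 0 := by
    funext ξ
    -- find a unit vector orthogonal to ξ
    obtain ⟨v, hv1, hvξ⟩ : ∃ v : EuclideanSpace ℝ (Fin 3), ‖v‖ = 1 ∧ ⟪v, ξ⟫ = 0 := by
      rcases eq_or_ne ξ 0 with rfl | hξ
      · exact ⟨EuclideanSpace.single 0 1, by simp, by simp⟩
      · have hne : ((ℝ ∙ ξ)ᗮ : Submodule ℝ (EuclideanSpace ℝ (Fin 3))) ≠ ⊥ := by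
          intro hbot
          have htop : (ℝ ∙ ξ) = (⊤ : Submodule ℝ (EuclideanSpace ℝ (Fin 3))) :=
            (Submodule.orthogonal_eq_bot_iff).1 hbot
          have h1 : Module.finrank ℝ (ℝ ∙ ξ) = 1 := finrank_span_singleton hξ
          rw [htop, finrank_top] at h1
          simp [finrank_euclideanSpace_fin] at h1
        obtain ⟨w, hw, hw0⟩ := Submodule.exists_mem_ne_zero_of_ne_bot hne
        refine ⟨‖w‖⁻¹ • w, ?_, ?_⟩
        · simp [norm_smul, norm_ne_zero_iff.2 hw0, inv_mul_cancel₀]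
        · have hwo : ⟪ξ, w⟫ = 0 := hw ξ (Submodule.mem_span_singleton_self ξ)
          rw [real_inner_smul_left, real_inner_comm, hwo, mul_zero]
    -- extend v to an orthonormal basis
    have hort : Orthonormal ℝ (({0} : Set (Fin 3)).restrict
        (fun _ : Fin 3 => v)) := by
      refine ⟨fun i => hv1, fun i j hij => absurd (Subtype.ext ?_) hij⟩
      have hi : (i : Fin 3) = 0 := i.2
      have hj : (j : Fin 3) = 0 := j.2
      rw [hi, hj]
    obtain ⟨b, hb⟩ := hort.exists_orthonormalBasis_extension_of_card_eq
      (by simp [finrank_euclideanSpace_fin])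
    have hb0 : b 0 = v := hb 0 rfl
    -- the change of variables map
    set T : ℝ × (Fin 2 → ℝ) → EuclideanSpace ℝ (Fin 3) := fun p =>
      b.repr.symm ((MeasurableEquiv.toLp 2 (Fin 3 → ℝ))
        ((MeasurableEquiv.piFinSuccAbove (fun _ : Fin 3 => ℝ) 0).symm p)) with hTdef
    have hT : MeasurePreserving T (volume.prod volume) volume :=
      (b.measurePreserving_repr_symm.comp
        (EuclideanSpace.volume_preserving_symm_measurableEquiv_toLp (Fin 3)).symm).comp
        (volume_preserving_piFinSuccAbove (fun _ : Fin 3 => ℝ) 0).symm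
    have hTemb : MeasurableEmbedding T :=
      ((b.repr.symm.toHomeomorph.measurableEmbedding.comp
        (MeasurableEquiv.toLp 2 (Fin 3 → ℝ)).measurableEmbedding).comp
        ((MeasurableEquiv.piFinSuccAbove (fun _ : Fin 3 => ℝ) 0).symm.measurableEmbedding))
    have hTsplit : ∀ (t : ℝ) (z : Fin 2 → ℝ), T (t, z) = t • v + T (0, z) := by
      intro t z
      have h1 : ((MeasurableEquiv.toLp 2 (Fin 3 → ℝ))
          ((MeasurableEquiv.piFinSuccAbove (fun _ : Fin 3 => ℝ) 0).symm (t, z)))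
          = EuclideanSpace.single 0 t + (MeasurableEquiv.toLp 2 (Fin 3 → ℝ))
          ((MeasurableEquiv.piFinSuccAbove (fun _ : Fin 3 => ℝ) 0).symm (0, z)) := by
        ext i
        induction i using Fin.cases with
        | zero => simp [MeasurableEquiv.coe_toLp, MeasurableEquiv.piFinSuccAbove]
        | succ j => simp [MeasurableEquiv.coe_toLp, MeasurableEquiv.piFinSuccAbove,
            EuclideanSpace.single_apply, Fin.succ_ne_zero]
      simp only [hTdef, h1, map_add]
      congr 1
      have : EuclideanSpace.single (0 : Fin 3) t
          = t • EuclideanSpace.single (0 : Fin 3) (1 : ℝ) := by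
        ext i
        simp only [EuclideanSpace.single_apply, PiLp.smul_apply, smul_eq_mul, mul_ite,
          mul_one, mul_zero]
      rw [this, _root_.map_smul, b.repr_symm_single, hb0]
    have hinner : ∀ (t : ℝ) (z : Fin 2 → ℝ), ⟪T (t, z), ξ⟫ = ⟪T (0, z), ξ⟫ := by
      intro t z
      rw [hTsplit, inner_add_left, real_inner_smul_left, hvξ, mul_zero, zero_add]
    rw [Real.fourier_eq]
    set Φ : EuclideanSpace ℝ (Fin 3) → ℂ :=
      fun x => Real.fourierChar (-⟪x, ξ⟫) • g x with hΦdef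
    have hΦc : Continuous Φ := by
      apply Continuous.smul _ hgc
      exact continuous_subtype_val.comp (Real.continuous_fourierChar.comp ((continuous_id.inner continuous_const).neg))
    have hΦsupp : HasCompactSupport Φ := hgsupp.smul_left
    have hΦi : Integrable Φ := hΦc.integrable_of_hasCompactSupport hΦsupp
    have hcomp : Integrable (Φ ∘ T) (volume.prod volume) :=
      (hT.integrable_comp_emb hTemb).2 hΦi
    have e1 : (∫ x, Φ x) = ∫ p, (Φ ∘ T) p ∂(volume.prod volume) :=
      (hT.integral_comp hTemb Φ).symm
    rw [show (∫ x, Real.fourierChar (-⟪x, ξ⟫) • g x) = ∫ x, Φ x from rfl, e1,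
      integral_prod_symm _ hcomp]
    have hz : ∀ z : Fin 2 → ℝ, (∫ t : ℝ, (Φ ∘ T) (t, z)) = 0 := by
      intro z
      have hpt : ∀ t : ℝ, (Φ ∘ T) (t, z)
          = Real.fourierChar (-⟪T (0, z), ξ⟫) • ((f (T (0, z) + t • v) : ℂ)) := by
        intro t
        simp only [Function.comp_apply, hΦdef, hgdef]
        rw [hinner t z, hTsplit t z, add_comm]
      simp only [hpt, Circle.smul_def]
      rw [integral_smul]
      have h2 : (∫ a : ℝ, ((f (T (0, z) + a • v) : ℝ) : ℂ))
          = ((∫ a : ℝ, f (T (0, z) + a • v) : ℝ) : ℂ) := integral_ofReal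
      rw [h2, h (T (0, z)) v hv1]
      simp
    simp only [hz, integral_zero, Pi.zero_apply]
  have hFfi : Integrable (FourierTransform.fourier g) := by
    rw [key]; exact integrable_zero _ _ _
  have hinv := hgc.fourierInv_fourier_eq hgi hFfi
  rw [key] at hinv
  have hg0 : g = 0 := by
    rw [← hinv]
    funext x
    simp [Real.fourierInv_eq]
  funext x
  have := congrFun hg0 x
  simpa [hgdef] using this
end
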